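/- (Claim 1.) Consider the maximal-information structure. For any team strategy pair (f,g) there exists a team strategy pair (f̄,ḡ) such that, for each t and i, f̄ⁱ_t is a (randomized) function only of (Xⁱ_t, Iᵃ_t) and ḡⁱ_t is a (randomized) function only of (Xⁱ_t, Iᵃ_{t⁺}), and J((f̄,ḡ),gᵃ) = J((f,g),gᵃ) for every adversary strategy gᵃ. -/

import Mathlib

open Finset
open scoped Classical BigOperators

namespace TA

/-- The primitive model of the team-vs-adversary control system (Section II of the paper):
finite horizon `T`, finite global/local state spaces, finite action spaces, independent
initial states, controlled Markovian dynamics given by transition kernels, an erasure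
parameter `pe`, an observation kernel `obs` for the adversary's observation `Y_t`,
a stage cost `cost` and a communication cost `commCost`. -/
structure Model where
  T : ℕ
  hT : 0 < T
  X0 : Type
  X1 : Type
  X2 : Type
  U1 : Type
  U2 : Type
  Ua : Type
  Y : Type
  [fX0 : Fintype X0]
  [fX1 : Fintype X1]
  [fX2 : Fintype X2]
  [fU1 : Fintype U1]
  [fU2 : Fintype U2]
  [fUa : Fintype Ua]
  [fY : Fintype Y]
  [nX0 : Nonempty X0]
  [nX1 : Nonempty X1]
  [nX2 : Nonempty X2]
  [nU1 : Nonempty U1]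
  [nU2 : Nonempty U2]
  [nUa : Nonempty Ua]
  [nY : Nonempty Y]
  init0 : X0 → ℝ
  init1 : X1 → ℝ
  init2 : X2 → ℝ
  trans0 : X0 → Ua → X0 → ℝ
  trans1 : X0 → X1 → U1 → X1 → ℝ
  trans2 : X0 → X2 → U2 → X2 → ℝ
  pe : X0 → ℝ
  obs : Option (X1 × X2) → Bool × Bool → X0 → Y → ℝ
  cost : ℕ → X0 → X1 × X2 → U1 × U2 → Ua → ℝ
  commCost : X0 → X1 × X2 → ℝ
  init0_nonneg : ∀ x, 0 ≤ init0 x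
  init1_nonneg : ∀ x, 0 ≤ init1 x
  init2_nonneg : ∀ x, 0 ≤ init2 x
  init0_sum : ∑ x, init0 x = 1
  init1_sum : ∑ x, init1 x = 1
  init2_sum : ∑ x, init2 x = 1
  trans0_nonneg : ∀ x u x', 0 ≤ trans0 x u x'
  trans1_nonneg : ∀ x0 x u x', 0 ≤ trans1 x0 x u x'
  trans2_nonneg : ∀ x0 x u x', 0 ≤ trans2 x0 x u x'
  trans0_sum : ∀ x u, ∑ x', trans0 x u x' = 1
  trans1_sum : ∀ x0 x u, ∑ x', trans1 x0 x u x' = 1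
  trans2_sum : ∀ x0 x u, ∑ x', trans2 x0 x u x' = 1
  pe_nonneg : ∀ x, 0 ≤ pe x
  pe_le_one : ∀ x, pe x ≤ 1
  obs_nonneg : ∀ z m x y, 0 ≤ obs z m x y
  obs_sum : ∀ z m x, ∑ y, obs z m x y = 1

attribute [instance] Model.fX0 Model.fX1 Model.fX2 Model.fU1 Model.fU2 Model.fUa Model.fY
attribute [instance] Model.nX0 Model.nX1 Model.nX2 Model.nU1 Model.nU2 Model.nUa Model.nY

/-- A full system trajectory over the horizon: global states, local states, communication
decisions, messages over the erasure channel, adversary observations, and all actions. -/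
abbrev Traj (M : Model) :=
  (Fin M.T → M.X0) × (Fin M.T → M.X1) × (Fin M.T → M.X2) ×
  (Fin M.T → Bool) × (Fin M.T → Bool) × (Fin M.T → Option (M.X1 × M.X2)) ×
  (Fin M.T → M.Y) × (Fin M.T → M.U1) × (Fin M.T → M.U2) × (Fin M.T → M.Ua)

def idx (M : Model) (t : ℕ) : Fin M.T := if h : t < M.T then ⟨t, h⟩ else ⟨0, M.hT⟩

variable {M : Model}

def X0v (ω : Traj M) (t : ℕ) : M.X0 := ω.1 (idx M t)
def X1v (ω : Traj M) (t : ℕ) : M.X1 := ω.2.1 (idx M t)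
def X2v (ω : Traj M) (t : ℕ) : M.X2 := ω.2.2.1 (idx M t)
def M1v (ω : Traj M) (t : ℕ) : Bool := ω.2.2.2.1 (idx M t)
def M2v (ω : Traj M) (t : ℕ) : Bool := ω.2.2.2.2.1 (idx M t)
def Zv (ω : Traj M) (t : ℕ) : Option (M.X1 × M.X2) := ω.2.2.2.2.2.1 (idx M t)
def Yv (ω : Traj M) (t : ℕ) : M.Y := ω.2.2.2.2.2.2.1 (idx M t)
def U1v (ω : Traj M) (t : ℕ) : M.U1 := ω.2.2.2.2.2.2.2.1 (idx M t)
def U2v (ω : Traj M) (t : ℕ) : M.U2 := ω.2.2.2.2.2.2.2.2.1 (idx M t)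
def UAv (ω : Traj M) (t : ℕ) : M.Ua := ω.2.2.2.2.2.2.2.2.2 (idx M t)
def Mv (ω : Traj M) (t : ℕ) : Bool × Bool := (M1v ω t, M2v ω t)

/-- The list of values `f 0, f 1, …, f (t-1)` (a "prefix" of a stochastic process). -/
def pre {α : Type _} (t : ℕ) (f : ℕ → α) : List α := (List.range t).map f

/-- Realizations of agent 1's information `I¹_t` (resp. `I¹_{t⁺}`):
`(X⁰_{1:t}, X¹_{1:t}, U¹_{1:t-1}, M_{1:t-1}, Z^er_{1:t-1}, Uᵃ_{1:t-1}, Y_{1:t-1})`. -/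
abbrev Hist1 (M : Model) :=
  List M.X0 × List M.X1 × List M.U1 × List (Bool × Bool) ×
  List (Option (M.X1 × M.X2)) × List M.Ua × List M.Y

/-- Realizations of agent 2's information `I²_t` (resp. `I²_{t⁺}`). -/
abbrev Hist2 (M : Model) :=
  List M.X0 × List M.X2 × List M.U2 × List (Bool × Bool) ×
  List (Option (M.X1 × M.X2)) × List M.Ua × List M.Y

/-- Realizations of the team's common information `C^team_t = I¹_t ∩ I²_t`. -/
abbrev HistC (M : Model) :=
  List M.X0 × List (Bool × Bool) × List (Option (M.X1 × M.X2)) × List M.Ua × List M.Y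

def info1 (t : ℕ) (ω : Traj M) : Hist1 M :=
  (pre (t+1) (X0v ω), pre (t+1) (X1v ω), pre t (U1v ω), pre t (Mv ω),
   pre t (Zv ω), pre t (UAv ω), pre t (Yv ω))

def info1p (t : ℕ) (ω : Traj M) : Hist1 M :=
  (pre (t+1) (X0v ω), pre (t+1) (X1v ω), pre t (U1v ω), pre (t+1) (Mv ω),
   pre (t+1) (Zv ω), pre t (UAv ω), pre (t+1) (Yv ω))

def info2 (t : ℕ) (ω : Traj M) : Hist2 M :=
  (pre (t+1) (X0v ω), pre (t+1) (X2v ω), pre t (U2v ω), pre t (Mv ω),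
   pre t (Zv ω), pre t (UAv ω), pre t (Yv ω))

def info2p (t : ℕ) (ω : Traj M) : Hist2 M :=
  (pre (t+1) (X0v ω), pre (t+1) (X2v ω), pre t (U2v ω), pre (t+1) (Mv ω),
   pre (t+1) (Zv ω), pre t (UAv ω), pre (t+1) (Yv ω))

/-- The team's common information `C^team_t` before communication at time `t`. -/
def teamCom (t : ℕ) (ω : Traj M) : HistC M :=
  (pre (t+1) (X0v ω), pre t (Mv ω), pre t (Zv ω), pre t (UAv ω), pre t (Yv ω))

/-- The team's common information `C^team_{t⁺}` after communication at time `t`. -/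
def teamComP (t : ℕ) (ω : Traj M) : HistC M :=
  (pre (t+1) (X0v ω), pre (t+1) (Mv ω), pre (t+1) (Zv ω), pre t (UAv ω), pre (t+1) (Yv ω))

/-- A behavioral communication/control strategy pair `(f,g) = (f¹,f²,g¹,g²)` for the team:
`fⁱ_t` selects a distribution on `{0,1}` for `Mⁱ_t` given `Iⁱ_t`; `gⁱ_t` selects a
distribution on `𝒰ⁱ` for `Uⁱ_t` given `Iⁱ_{t⁺}`. -/
structure TeamStrategy (M : Model) where
  f1 : ℕ → Hist1 M → Bool → ℝ
  f2 : ℕ → Hist2 M → Bool → ℝ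
  g1 : ℕ → Hist1 M → M.U1 → ℝ
  g2 : ℕ → Hist2 M → M.U2 → ℝ
  f1_nonneg : ∀ t h m, 0 ≤ f1 t h m
  f2_nonneg : ∀ t h m, 0 ≤ f2 t h m
  g1_nonneg : ∀ t h u, 0 ≤ g1 t h u
  g2_nonneg : ∀ t h u, 0 ≤ g2 t h u
  f1_sum : ∀ t h, ∑ m, f1 t h m = 1
  f2_sum : ∀ t h, ∑ m, f2 t h m = 1
  g1_sum : ∀ t h, ∑ u, g1 t h u = 1
  g2_sum : ∀ t h, ∑ u, g2 t h u = 1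

/-- A behavioral strategy for the adversary: `gᵃ_t` selects a distribution on `𝒰ᵃ`
given the adversary's information `Iᵃ_{t⁺}`, whose realizations live in `A`. -/
structure AdvStrategy (M : Model) (A : Type _) where
  ga : ℕ → A → M.Ua → ℝ
  ga_nonneg : ∀ t a u, 0 ≤ ga t a u
  ga_sum : ∀ t a, ∑ u, ga t a u = 1

/-- The kernel of the erasure channel: if `M^or_t = 0`, no message; if `M^or_t = 1`, the
joint local state is delivered w.p. `1 - pe(x⁰)` and erased w.p. `pe(x⁰)`. -/
noncomputable def zKer (M : Model) (x0 : M.X0) (m : Bool × Bool) (x : M.X1 × M.X2)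
    (z : Option (M.X1 × M.X2)) : ℝ :=
  if m = (false, false) then (if z = none then 1 else 0)
  else
    match z with
    | none => M.pe x0
    | some x' => if x' = x then 1 - M.pe x0 else 0

/-- The probability of a full trajectory under the team strategy `σ`, the adversary
strategy `γ`, where `iap t ω` is the realization of the adversary's information
`Iᵃ_{t⁺}` along `ω` (this parametrizes the adversary's information structure). -/
noncomputable def prob (σ : TeamStrategy M) {A : Type _} (γ : AdvStrategy M A)
    (iap : ℕ → Traj M → A) (ω : Traj M) : ℝ :=
  M.init0 (X0v ω 0) * M.init1 (X1v ω 0) * M.init2 (X2v ω 0) *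
  (∏ t ∈ Finset.range M.T,
    (σ.f1 t (info1 t ω) (M1v ω t) * σ.f2 t (info2 t ω) (M2v ω t) *
     zKer M (X0v ω t) (Mv ω t) (X1v ω t, X2v ω t) (Zv ω t) *
     M.obs (Zv ω t) (Mv ω t) (X0v ω t) (Yv ω t) *
     σ.g1 t (info1p t ω) (U1v ω t) * σ.g2 t (info2p t ω) (U2v ω t) *
     γ.ga t (iap t ω) (UAv ω t))) *
  (∏ t ∈ Finset.range (M.T - 1),
    (M.trans0 (X0v ω t) (UAv ω t) (X0v ω (t+1)) *
     M.trans1 (X0v ω t) (X1v ω t) (U1v ω t) (X1v ω (t+1)) *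
     M.trans2 (X0v ω t) (X2v ω t) (U2v ω t) (X2v ω (t+1))))

/-- Probability of an event (a set of trajectories). -/
noncomputable def pr (σ : TeamStrategy M) {A : Type _} (γ : AdvStrategy M A)
    (iap : ℕ → Traj M → A) (E : Traj M → Prop) : ℝ :=
  ∑ ω : Traj M, if E ω then prob σ γ iap ω else 0

/-- Conditional probability `P(F | E)`. -/
noncomputable def cpr (σ : TeamStrategy M) {A : Type _} (γ : AdvStrategy M A)
    (iap : ℕ → Traj M → A) (E F : Traj M → Prop) : ℝ :=
  pr σ γ iap (fun ω => F ω ∧ E ω) / pr σ γ iap E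

/-- Total cost `Σ_t c_t(X⁰_t,X_t,U_t,Uᵃ_t) + ρ(X⁰_t,X_t) 1{M^or_t = 1}` along a trajectory. -/
noncomputable def totalCost (ω : Traj M) : ℝ :=
  ∑ t ∈ Finset.range M.T,
    (M.cost t (X0v ω t) (X1v ω t, X2v ω t) (U1v ω t, U2v ω t) (UAv ω t) +
     (if (M1v ω t || M2v ω t) then M.commCost (X0v ω t) (X1v ω t, X2v ω t) else 0))

/-- Expected total cost `J((f,g),gᵃ)`. -/
noncomputable def J (σ : TeamStrategy M) {A : Type _} (γ : AdvStrategy M A)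
    (iap : ℕ → Traj M → A) : ℝ :=
  ∑ ω : Traj M, prob σ γ iap ω * totalCost ω

end TA

namespace TA

/-- The open-loop adversary strategy that deterministically plays the given sequence of
actions (used to define strategy-independent conditional distributions). -/
noncomputable def openLoop (M : Model) (A : Type _) (us : List M.Ua) : AdvStrategy M A where
  ga := fun t _ u => if u = us.getD t (Classical.arbitrary M.Ua) then 1 else 0
  ga_nonneg := by
    intro t a u
    try dsimp only
    split <;> norm_num
  ga_sum := by
    intro t a
    simp

/-- The uniform density on the space of realizations `(x_{1:t}, u_{1:t-1}, m_t)`. -/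
noncomputable def unifComm (M : Model) (t : ℕ) : ℝ :=
  ((Fintype.card M.X1 * Fintype.card M.X2 : ℝ))⁻¹ ^ (t+1) *
  ((Fintype.card M.U1 * Fintype.card M.U2 : ℝ))⁻¹ ^ t * (4 : ℝ)⁻¹

/-- The uniform density on the space of realizations `(x_{1:t}, u_{1:t})`. -/
noncomputable def unifCtrl (M : Model) (t : ℕ) : ℝ :=
  ((Fintype.card M.X1 * Fintype.card M.X2 : ℝ))⁻¹ ^ (t+1) *
  ((Fintype.card M.U1 * Fintype.card M.U2 : ℝ))⁻¹ ^ (t+1)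

/-- In the maximal-information structure, `Iᵃ_t = I¹_t ∩ I²_t = C^team_t`; a realization
`ι` of `Iᵃ_t` contains the list `uᵃ_{1:t-1}` of past adversary actions, from which the
open-loop strategy `hᵃ` is built. -/
noncomputable def advOpen (M : Model) (ι : HistC M) : AdvStrategy M (HistC M) :=
  openLoop M (HistC M) ι.2.2.2.1

/-- `Ψ_t(ι; x_{1:t}, u_{1:t-1}, m_t)`: the conditional distribution of states, past team
actions and current communication decisions given `Iᵃ_t = ι`, computed under the team
strategy `σ` and the open-loop adversary strategy induced by `ι` (and set to the
uniform distribution when `ι` is infeasible). -/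
noncomputable def Psi {M : Model} (σ : TeamStrategy M) (t : ℕ) (ι : HistC M)
    (ξ1 : List M.X1) (ξ2 : List M.X2) (υ1 : List M.U1) (υ2 : List M.U2)
    (mt : Bool × Bool) : ℝ :=
  if 0 < pr σ (advOpen M ι) teamComP (fun ω => teamCom t ω = ι) then
    cpr σ (advOpen M ι) teamComP (fun ω => teamCom t ω = ι)
      (fun ω => pre (t+1) (X1v ω) = ξ1 ∧ pre (t+1) (X2v ω) = ξ2 ∧
                pre t (U1v ω) = υ1 ∧ pre t (U2v ω) = υ2 ∧ Mv ω t = mt)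
  else unifComm M t

/-- `Ψ_{t⁺}(ι; x_{1:t}, u_{1:t})`: the analogous conditional distribution given
`Iᵃ_{t⁺} = ι`. -/
noncomputable def PsiP {M : Model} (σ : TeamStrategy M) (t : ℕ) (ι : HistC M)
    (ξ1 : List M.X1) (ξ2 : List M.X2) (υ1 : List M.U1) (υ2 : List M.U2) : ℝ :=
  if 0 < pr σ (advOpen M ι) teamComP (fun ω => teamComP t ω = ι) then
    cpr σ (advOpen M ι) teamComP (fun ω => teamComP t ω = ι)
      (fun ω => pre (t+1) (X1v ω) = ξ1 ∧ pre (t+1) (X2v ω) = ξ2 ∧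
                pre (t+1) (U1v ω) = υ1 ∧ pre (t+1) (U2v ω) = υ2)
  else unifCtrl M t

end TA

namespace TA

/-! ### Generic counting machinery -/

section Counting
variable {Γ : Type _} {β : Type _} [Fintype Γ] [Fintype β]

lemma sum_upd_count (upd : Γ → β → Γ) (val : Γ → β)
    (h1 : ∀ ω b c, upd (upd ω b) c = upd ω c)
    (h2 : ∀ ω, upd ω (val ω) = ω)
    (h3 : ∀ ω b, val (upd ω b) = b)
    (g : Γ → ℝ) :
    ∑ ω, ∑ b, g (upd ω b) = (Fintype.card β : ℝ) * ∑ ω, g ω := by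
  have einv : Function.Involutive (fun p : Γ × β => (upd p.1 p.2, val p.1)) := by
    intro p
    simp [h1, h2, h3, Prod.mk.injEq]

  have key : ∑ p : Γ × β, g (upd p.1 p.2) = ∑ p : Γ × β, g p.1 := by
    have := Equiv.sum_comp einv.toPerm (fun p : Γ × β => g p.1)
    simpa [Function.Involutive.toPerm] using this
  calc ∑ ω, ∑ b, g (upd ω b) = ∑ p : Γ × β, g (upd p.1 p.2) := by
        rw [Fintype.sum_prod_type]
    _ = ∑ p : Γ × β, g p.1 := key
    _ = (Fintype.card β : ℝ) * ∑ ω, g ω := by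
        rw [Fintype.sum_prod_type]
        simp only [Finset.sum_const, Finset.card_univ, nsmul_eq_mul]
        rw [Finset.mul_sum]

lemma sum_split (upd : Γ → β → Γ) (val : Γ → β)
    (h1 : ∀ ω b c, upd (upd ω b) c = upd ω c)
    (h2 : ∀ ω, upd ω (val ω) = ω)
    (h3 : ∀ ω b, val (upd ω b) = b)
    [Nonempty β] (g : Γ → ℝ) :
    ∑ ω, g ω = (Fintype.card β : ℝ)⁻¹ * ∑ ω, ∑ b, g (upd ω b) := by
  rw [sum_upd_count upd val h1 h2 h3 g]
  have : (Fintype.card β : ℝ) ≠ 0 := by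
    simp [Fintype.card_ne_zero]
  field_simp

lemma sum_kernel_elim (upd : Γ → β → Γ) (val : Γ → β)
    (h1 : ∀ ω b c, upd (upd ω b) c = upd ω c)
    (h2 : ∀ ω, upd ω (val ω) = ω)
    (h3 : ∀ ω b, val (upd ω b) = b)
    [Nonempty β] (P k : Γ → ℝ)
    (hP : ∀ ω b, P (upd ω b) = P ω)
    (hk : ∀ ω, ∑ b, k (upd ω b) = 1) :
    ∑ ω, P ω * k ω = (Fintype.card β : ℝ)⁻¹ * ∑ ω, P ω := by
  rw [sum_split upd val h1 h2 h3 (fun ω => P ω * k ω)]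
  congr 1
  apply Finset.sum_congr rfl
  intro ω _
  simp only [hP]
  rw [← Finset.mul_sum, hk, mul_one]

lemma sum_pin (upd : Γ → β → Γ) (val : Γ → β)
    (h1 : ∀ ω b c, upd (upd ω b) c = upd ω c)
    (h2 : ∀ ω, upd ω (val ω) = ω)
    (h3 : ∀ ω b, val (upd ω b) = b)
    [Nonempty β] (g : Γ → ℝ)
    (hg : ∀ ω b, g (upd ω b) = g ω) (v : β) :
    ∑ ω, g ω * (if val ω = v then 1 else 0) = (Fintype.card β : ℝ)⁻¹ * ∑ ω, g ω := by
  rw [sum_split upd val h1 h2 h3 (fun ω => g ω * (if val ω = v then 1 else 0))]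
  congr 1
  apply Finset.sum_congr rfl
  intro ω _
  simp only [hg, h3]
  rw [← Finset.mul_sum]
  simp

lemma sum_insert_pin (val : Γ → β) (g : Γ → ℝ) :
    ∑ ω, g ω = ∑ v : β, ∑ ω, g ω * (if val ω = v then 1 else 0) := by
  rw [Finset.sum_comm]
  apply Finset.sum_congr rfl
  intro ω _
  rw [← Finset.mul_sum]
  simp

end Counting

end TA
namespace TA

/-! ### idx / pre lemmas -/

variable {M : Model}

lemma idx_of_lt {t : ℕ} (h : t < M.T) : idx M t = ⟨t, h⟩ := dif_pos h

lemma idx_inj {s n : ℕ} (hs : s < M.T) (hn : n < M.T) (h : s ≠ n) :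
    idx M s ≠ idx M n := by
  rw [idx_of_lt hs, idx_of_lt hn]
  simp [Fin.ext_iff, h]

lemma pre_congr {α : Type _} {t : ℕ} {f g : ℕ → α} (h : ∀ s, s < t → f s = g s) :
    pre t f = pre t g := by
  unfold pre
  apply List.map_congr_left
  intro s hs
  exact h s (List.mem_range.mp hs)

lemma pre_succ {α : Type _} (f : ℕ → α) (t : ℕ) :
    pre (t+1) f = pre t f ++ [f t] := by
  simp [pre, List.range_succ]

lemma pre_getD {α : Type _} {t s : ℕ} (hs : s < t) (f : ℕ → α) (d : α) :
    (pre t f).getD s d = f s := by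
  rw [List.getD_eq_getElem?_getD]
  simp [pre, List.getElem?_range, hs]

lemma pre_eq_read {α : Type _} {t : ℕ} {f g : ℕ → α} (h : pre t f = pre t g)
    (s : ℕ) (hs : s < t) : f s = g s := by
  have h' := congrArg (fun l => l.getD s (f s)) h
  rw [pre_getD hs, pre_getD hs] at h'
  exact h'

/-! ### coordinate update functions on trajectories -/

abbrev B7 (M : Model) :=
  Bool × Bool × Option (M.X1 × M.X2) × M.Y × M.U1 × M.U2 × M.Ua
abbrev BX (M : Model) := M.X0 × M.X1 × M.X2
abbrev P1S (M : Model) := (Fin M.T → M.X1) × (Fin M.T → M.U1)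
abbrev P2S (M : Model) := (Fin M.T → M.X2) × (Fin M.T → M.U2)

def upd7 (n : ℕ) (ω : Traj M) (b : B7 M) : Traj M :=
  (ω.1, ω.2.1, ω.2.2.1,
   Function.update ω.2.2.2.1 (idx M n) b.1,
   Function.update ω.2.2.2.2.1 (idx M n) b.2.1,
   Function.update ω.2.2.2.2.2.1 (idx M n) b.2.2.1,
   Function.update ω.2.2.2.2.2.2.1 (idx M n) b.2.2.2.1,
   Function.update ω.2.2.2.2.2.2.2.1 (idx M n) b.2.2.2.2.1,
   Function.update ω.2.2.2.2.2.2.2.2.1 (idx M n) b.2.2.2.2.2.1,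
   Function.update ω.2.2.2.2.2.2.2.2.2 (idx M n) b.2.2.2.2.2.2)

def val7 (n : ℕ) (ω : Traj M) : B7 M :=
  (M1v ω n, M2v ω n, Zv ω n, Yv ω n, U1v ω n, U2v ω n, UAv ω n)

lemma upd7_idem (n : ℕ) (ω : Traj M) (b c : B7 M) :
    upd7 n (upd7 n ω b) c = upd7 n ω c := by
  simp [upd7, Function.update_idem]

lemma upd7_self (n : ℕ) (ω : Traj M) : upd7 n ω (val7 n ω) = ω := by
  simp [upd7, val7, M1v, M2v, Zv, Yv, U1v, U2v, UAv, Function.update_eq_self]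

lemma val7_upd7 (n : ℕ) (ω : Traj M) (b : B7 M) : val7 n (upd7 n ω b) = b := by
  simp [upd7, val7, M1v, M2v, Zv, Yv, U1v, U2v, UAv]

def updX (n : ℕ) (ω : Traj M) (b : BX M) : Traj M :=
  (Function.update ω.1 (idx M n) b.1,
   Function.update ω.2.1 (idx M n) b.2.1,
   Function.update ω.2.2.1 (idx M n) b.2.2, ω.2.2.2)

def valX (n : ℕ) (ω : Traj M) : BX M := (X0v ω n, X1v ω n, X2v ω n)

lemma updX_idem (n : ℕ) (ω : Traj M) (b c : BX M) :
    updX n (updX n ω b) c = updX n ω c := by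
  simp [updX, Function.update_idem]

lemma updX_self (n : ℕ) (ω : Traj M) : updX n ω (valX n ω) = ω := by
  simp [updX, valX, X0v, X1v, X2v, Function.update_eq_self]

lemma valX_updX (n : ℕ) (ω : Traj M) (b : BX M) : valX n (updX n ω b) = b := by
  simp [updX, valX, X0v, X1v, X2v]

def updUA (n : ℕ) (ω : Traj M) (b : M.Ua) : Traj M :=
  (ω.1, ω.2.1, ω.2.2.1, ω.2.2.2.1, ω.2.2.2.2.1, ω.2.2.2.2.2.1,
   ω.2.2.2.2.2.2.1, ω.2.2.2.2.2.2.2.1, ω.2.2.2.2.2.2.2.2.1,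
   Function.update ω.2.2.2.2.2.2.2.2.2 (idx M n) b)

lemma updUA_idem (n : ℕ) (ω : Traj M) (b c : M.Ua) :
    updUA n (updUA n ω b) c = updUA n ω c := by
  simp [updUA, Function.update_idem]

lemma updUA_self (n : ℕ) (ω : Traj M) : updUA n ω (UAv ω n) = ω := by
  simp [updUA, UAv, Function.update_eq_self]

lemma UAv_updUA (n : ℕ) (ω : Traj M) (b : M.Ua) : UAv (updUA n ω b) n = b := by
  simp [updUA, UAv]

def packP1 (ω : Traj M) (p : P1S M) : Traj M :=
  (ω.1, p.1, ω.2.2.1, ω.2.2.2.1, ω.2.2.2.2.1, ω.2.2.2.2.2.1,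
   ω.2.2.2.2.2.2.1, p.2, ω.2.2.2.2.2.2.2.2.1, ω.2.2.2.2.2.2.2.2.2)

def valP1 (ω : Traj M) : P1S M := (ω.2.1, ω.2.2.2.2.2.2.2.1)

lemma packP1_idem (ω : Traj M) (b c : P1S M) :
    packP1 (packP1 ω b) c = packP1 ω c := rfl

lemma packP1_self (ω : Traj M) : packP1 ω (valP1 ω) = ω := rfl

lemma valP1_packP1 (ω : Traj M) (b : P1S M) : valP1 (packP1 ω b) = b := rfl

def packP2 (ω : Traj M) (p : P2S M) : Traj M :=
  (ω.1, ω.2.1, p.1, ω.2.2.2.1, ω.2.2.2.2.1, ω.2.2.2.2.2.1,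
   ω.2.2.2.2.2.2.1, ω.2.2.2.2.2.2.2.1, p.2, ω.2.2.2.2.2.2.2.2.2)

def valP2 (ω : Traj M) : P2S M := (ω.2.2.1, ω.2.2.2.2.2.2.2.2.1)

lemma packP2_idem (ω : Traj M) (b c : P2S M) :
    packP2 (packP2 ω b) c = packP2 ω c := rfl

lemma packP2_self (ω : Traj M) : packP2 ω (valP2 ω) = ω := rfl

lemma valP2_packP2 (ω : Traj M) (b : P2S M) : valP2 (packP2 ω b) = b := rfl

/-! ### updates on the private-coordinate spaces -/

def updP1x (n : ℕ) (p : P1S M) (a : M.X1) : P1S M :=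
  (Function.update p.1 (idx M n) a, p.2)
def valP1x (n : ℕ) (p : P1S M) : M.X1 := p.1 (idx M n)
def updP1u (n : ℕ) (p : P1S M) (a : M.U1) : P1S M :=
  (p.1, Function.update p.2 (idx M n) a)
def valP1u (n : ℕ) (p : P1S M) : M.U1 := p.2 (idx M n)

lemma updP1x_idem (n : ℕ) (p : P1S M) (b c : M.X1) :
    updP1x n (updP1x n p b) c = updP1x n p c := by
  simp [updP1x, Function.update_idem]
lemma updP1x_self (n : ℕ) (p : P1S M) : updP1x n p (valP1x n p) = p := by
  simp [updP1x, valP1x, Function.update_eq_self]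
lemma valP1x_updP1x (n : ℕ) (p : P1S M) (b : M.X1) :
    valP1x n (updP1x n p b) = b := by simp [updP1x, valP1x]
lemma updP1u_idem (n : ℕ) (p : P1S M) (b c : M.U1) :
    updP1u n (updP1u n p b) c = updP1u n p c := by
  simp [updP1u, Function.update_idem]
lemma updP1u_self (n : ℕ) (p : P1S M) : updP1u n p (valP1u n p) = p := by
  simp [updP1u, valP1u, Function.update_eq_self]
lemma valP1u_updP1u (n : ℕ) (p : P1S M) (b : M.U1) :
    valP1u n (updP1u n p b) = b := by simp [updP1u, valP1u]

def updP2x (n : ℕ) (p : P2S M) (a : M.X2) : P2S M :=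
  (Function.update p.1 (idx M n) a, p.2)
def valP2x (n : ℕ) (p : P2S M) : M.X2 := p.1 (idx M n)
def updP2u (n : ℕ) (p : P2S M) (a : M.U2) : P2S M :=
  (p.1, Function.update p.2 (idx M n) a)
def valP2u (n : ℕ) (p : P2S M) : M.U2 := p.2 (idx M n)

lemma updP2x_idem (n : ℕ) (p : P2S M) (b c : M.X2) :
    updP2x n (updP2x n p b) c = updP2x n p c := by
  simp [updP2x, Function.update_idem]
lemma updP2x_self (n : ℕ) (p : P2S M) : updP2x n p (valP2x n p) = p := by
  simp [updP2x, valP2x, Function.update_eq_self]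
lemma valP2x_updP2x (n : ℕ) (p : P2S M) (b : M.X2) :
    valP2x n (updP2x n p b) = b := by simp [updP2x, valP2x]
lemma updP2u_idem (n : ℕ) (p : P2S M) (b c : M.U2) :
    updP2u n (updP2u n p b) c = updP2u n p c := by
  simp [updP2u, Function.update_idem]
lemma updP2u_self (n : ℕ) (p : P2S M) : updP2u n p (valP2u n p) = p := by
  simp [updP2u, valP2u, Function.update_eq_self]
lemma valP2u_updP2u (n : ℕ) (p : P2S M) (b : M.U2) :
    valP2u n (updP2u n p b) = b := by simp [updP2u, valP2u]

end TA
namespace TA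

variable {M : Model}

/-! ### read lemmas -/

@[simp] lemma X0v_upd7 (n : ℕ) (ω : Traj M) (b : B7 M) (s : ℕ) :
    X0v (upd7 n ω b) s = X0v ω s := rfl
@[simp] lemma X1v_upd7 (n : ℕ) (ω : Traj M) (b : B7 M) (s : ℕ) :
    X1v (upd7 n ω b) s = X1v ω s := rfl
@[simp] lemma X2v_upd7 (n : ℕ) (ω : Traj M) (b : B7 M) (s : ℕ) :
    X2v (upd7 n ω b) s = X2v ω s := rfl
@[simp] lemma M1v_upd7_self (n : ℕ) (ω : Traj M) (b : B7 M) :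
    M1v (upd7 n ω b) n = b.1 := by simp [M1v, upd7]
@[simp] lemma M2v_upd7_self (n : ℕ) (ω : Traj M) (b : B7 M) :
    M2v (upd7 n ω b) n = b.2.1 := by simp [M2v, upd7]
@[simp] lemma Zv_upd7_self (n : ℕ) (ω : Traj M) (b : B7 M) :
    Zv (upd7 n ω b) n = b.2.2.1 := by simp [Zv, upd7]
@[simp] lemma Yv_upd7_self (n : ℕ) (ω : Traj M) (b : B7 M) :
    Yv (upd7 n ω b) n = b.2.2.2.1 := by simp [Yv, upd7]
@[simp] lemma U1v_upd7_self (n : ℕ) (ω : Traj M) (b : B7 M) :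
    U1v (upd7 n ω b) n = b.2.2.2.2.1 := by simp [U1v, upd7]
@[simp] lemma U2v_upd7_self (n : ℕ) (ω : Traj M) (b : B7 M) :
    U2v (upd7 n ω b) n = b.2.2.2.2.2.1 := by simp [U2v, upd7]
@[simp] lemma UAv_upd7_self (n : ℕ) (ω : Traj M) (b : B7 M) :
    UAv (upd7 n ω b) n = b.2.2.2.2.2.2 := by simp [UAv, upd7]

lemma M1v_upd7_ne {s n : ℕ} (hs : s < M.T) (hn : n < M.T) (h : s ≠ n)
    (ω : Traj M) (b : B7 M) : M1v (upd7 n ω b) s = M1v ω s := by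
  simp [M1v, upd7, Function.update_of_ne (idx_inj hs hn h)]
lemma M2v_upd7_ne {s n : ℕ} (hs : s < M.T) (hn : n < M.T) (h : s ≠ n)
    (ω : Traj M) (b : B7 M) : M2v (upd7 n ω b) s = M2v ω s := by
  simp [M2v, upd7, Function.update_of_ne (idx_inj hs hn h)]
lemma Zv_upd7_ne {s n : ℕ} (hs : s < M.T) (hn : n < M.T) (h : s ≠ n)
    (ω : Traj M) (b : B7 M) : Zv (upd7 n ω b) s = Zv ω s := by
  simp [Zv, upd7, Function.update_of_ne (idx_inj hs hn h)]
lemma Yv_upd7_ne {s n : ℕ} (hs : s < M.T) (hn : n < M.T) (h : s ≠ n)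
    (ω : Traj M) (b : B7 M) : Yv (upd7 n ω b) s = Yv ω s := by
  simp [Yv, upd7, Function.update_of_ne (idx_inj hs hn h)]
lemma U1v_upd7_ne {s n : ℕ} (hs : s < M.T) (hn : n < M.T) (h : s ≠ n)
    (ω : Traj M) (b : B7 M) : U1v (upd7 n ω b) s = U1v ω s := by
  simp [U1v, upd7, Function.update_of_ne (idx_inj hs hn h)]
lemma U2v_upd7_ne {s n : ℕ} (hs : s < M.T) (hn : n < M.T) (h : s ≠ n)
    (ω : Traj M) (b : B7 M) : U2v (upd7 n ω b) s = U2v ω s := by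
  simp [U2v, upd7, Function.update_of_ne (idx_inj hs hn h)]
lemma UAv_upd7_ne {s n : ℕ} (hs : s < M.T) (hn : n < M.T) (h : s ≠ n)
    (ω : Traj M) (b : B7 M) : UAv (upd7 n ω b) s = UAv ω s := by
  simp [UAv, upd7, Function.update_of_ne (idx_inj hs hn h)]

@[simp] lemma M1v_updX (n : ℕ) (ω : Traj M) (b : BX M) (s : ℕ) :
    M1v (updX n ω b) s = M1v ω s := rfl
@[simp] lemma M2v_updX (n : ℕ) (ω : Traj M) (b : BX M) (s : ℕ) :
    M2v (updX n ω b) s = M2v ω s := rfl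
@[simp] lemma Zv_updX (n : ℕ) (ω : Traj M) (b : BX M) (s : ℕ) :
    Zv (updX n ω b) s = Zv ω s := rfl
@[simp] lemma Yv_updX (n : ℕ) (ω : Traj M) (b : BX M) (s : ℕ) :
    Yv (updX n ω b) s = Yv ω s := rfl
@[simp] lemma U1v_updX (n : ℕ) (ω : Traj M) (b : BX M) (s : ℕ) :
    U1v (updX n ω b) s = U1v ω s := rfl
@[simp] lemma U2v_updX (n : ℕ) (ω : Traj M) (b : BX M) (s : ℕ) :
    U2v (updX n ω b) s = U2v ω s := rfl
@[simp] lemma UAv_updX (n : ℕ) (ω : Traj M) (b : BX M) (s : ℕ) :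
    UAv (updX n ω b) s = UAv ω s := rfl
@[simp] lemma X0v_updX_self (n : ℕ) (ω : Traj M) (b : BX M) :
    X0v (updX n ω b) n = b.1 := by simp [X0v, updX]
@[simp] lemma X1v_updX_self (n : ℕ) (ω : Traj M) (b : BX M) :
    X1v (updX n ω b) n = b.2.1 := by simp [X1v, updX]
@[simp] lemma X2v_updX_self (n : ℕ) (ω : Traj M) (b : BX M) :
    X2v (updX n ω b) n = b.2.2 := by simp [X2v, updX]
lemma X0v_updX_ne {s n : ℕ} (hs : s < M.T) (hn : n < M.T) (h : s ≠ n)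
    (ω : Traj M) (b : BX M) : X0v (updX n ω b) s = X0v ω s := by
  simp [X0v, updX, Function.update_of_ne (idx_inj hs hn h)]
lemma X1v_updX_ne {s n : ℕ} (hs : s < M.T) (hn : n < M.T) (h : s ≠ n)
    (ω : Traj M) (b : BX M) : X1v (updX n ω b) s = X1v ω s := by
  simp [X1v, updX, Function.update_of_ne (idx_inj hs hn h)]
lemma X2v_updX_ne {s n : ℕ} (hs : s < M.T) (hn : n < M.T) (h : s ≠ n)
    (ω : Traj M) (b : BX M) : X2v (updX n ω b) s = X2v ω s := by
  simp [X2v, updX, Function.update_of_ne (idx_inj hs hn h)]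

@[simp] lemma X0v_updUA (n : ℕ) (ω : Traj M) (b : M.Ua) (s : ℕ) :
    X0v (updUA n ω b) s = X0v ω s := rfl
@[simp] lemma X1v_updUA (n : ℕ) (ω : Traj M) (b : M.Ua) (s : ℕ) :
    X1v (updUA n ω b) s = X1v ω s := rfl
@[simp] lemma X2v_updUA (n : ℕ) (ω : Traj M) (b : M.Ua) (s : ℕ) :
    X2v (updUA n ω b) s = X2v ω s := rfl
@[simp] lemma M1v_updUA (n : ℕ) (ω : Traj M) (b : M.Ua) (s : ℕ) :
    M1v (updUA n ω b) s = M1v ω s := rfl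
@[simp] lemma M2v_updUA (n : ℕ) (ω : Traj M) (b : M.Ua) (s : ℕ) :
    M2v (updUA n ω b) s = M2v ω s := rfl
@[simp] lemma Zv_updUA (n : ℕ) (ω : Traj M) (b : M.Ua) (s : ℕ) :
    Zv (updUA n ω b) s = Zv ω s := rfl
@[simp] lemma Yv_updUA (n : ℕ) (ω : Traj M) (b : M.Ua) (s : ℕ) :
    Yv (updUA n ω b) s = Yv ω s := rfl
@[simp] lemma U1v_updUA (n : ℕ) (ω : Traj M) (b : M.Ua) (s : ℕ) :
    U1v (updUA n ω b) s = U1v ω s := rfl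
@[simp] lemma U2v_updUA (n : ℕ) (ω : Traj M) (b : M.Ua) (s : ℕ) :
    U2v (updUA n ω b) s = U2v ω s := rfl
lemma UAv_updUA_ne {s n : ℕ} (hs : s < M.T) (hn : n < M.T) (h : s ≠ n)
    (ω : Traj M) (b : M.Ua) : UAv (updUA n ω b) s = UAv ω s := by
  simp [UAv, updUA, Function.update_of_ne (idx_inj hs hn h)]

@[simp] lemma X0v_packP1 (ω : Traj M) (p : P1S M) (s : ℕ) :
    X0v (packP1 ω p) s = X0v ω s := rfl
@[simp] lemma X2v_packP1 (ω : Traj M) (p : P1S M) (s : ℕ) :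
    X2v (packP1 ω p) s = X2v ω s := rfl
@[simp] lemma M1v_packP1 (ω : Traj M) (p : P1S M) (s : ℕ) :
    M1v (packP1 ω p) s = M1v ω s := rfl
@[simp] lemma M2v_packP1 (ω : Traj M) (p : P1S M) (s : ℕ) :
    M2v (packP1 ω p) s = M2v ω s := rfl
@[simp] lemma Zv_packP1 (ω : Traj M) (p : P1S M) (s : ℕ) :
    Zv (packP1 ω p) s = Zv ω s := rfl
@[simp] lemma Yv_packP1 (ω : Traj M) (p : P1S M) (s : ℕ) :
    Yv (packP1 ω p) s = Yv ω s := rfl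
@[simp] lemma U2v_packP1 (ω : Traj M) (p : P1S M) (s : ℕ) :
    U2v (packP1 ω p) s = U2v ω s := rfl
@[simp] lemma UAv_packP1 (ω : Traj M) (p : P1S M) (s : ℕ) :
    UAv (packP1 ω p) s = UAv ω s := rfl
lemma X1v_packP1 (ω : Traj M) (p : P1S M) (s : ℕ) :
    X1v (packP1 ω p) s = p.1 (idx M s) := rfl
lemma U1v_packP1 (ω : Traj M) (p : P1S M) (s : ℕ) :
    U1v (packP1 ω p) s = p.2 (idx M s) := rfl

@[simp] lemma X0v_packP2 (ω : Traj M) (p : P2S M) (s : ℕ) :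
    X0v (packP2 ω p) s = X0v ω s := rfl
@[simp] lemma X1v_packP2 (ω : Traj M) (p : P2S M) (s : ℕ) :
    X1v (packP2 ω p) s = X1v ω s := rfl
@[simp] lemma M1v_packP2 (ω : Traj M) (p : P2S M) (s : ℕ) :
    M1v (packP2 ω p) s = M1v ω s := rfl
@[simp] lemma M2v_packP2 (ω : Traj M) (p : P2S M) (s : ℕ) :
    M2v (packP2 ω p) s = M2v ω s := rfl
@[simp] lemma Zv_packP2 (ω : Traj M) (p : P2S M) (s : ℕ) :
    Zv (packP2 ω p) s = Zv ω s := rfl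
@[simp] lemma Yv_packP2 (ω : Traj M) (p : P2S M) (s : ℕ) :
    Yv (packP2 ω p) s = Yv ω s := rfl
@[simp] lemma U1v_packP2 (ω : Traj M) (p : P2S M) (s : ℕ) :
    U1v (packP2 ω p) s = U1v ω s := rfl
@[simp] lemma UAv_packP2 (ω : Traj M) (p : P2S M) (s : ℕ) :
    UAv (packP2 ω p) s = UAv ω s := rfl
lemma X2v_packP2 (ω : Traj M) (p : P2S M) (s : ℕ) :
    X2v (packP2 ω p) s = p.1 (idx M s) := rfl
lemma U2v_packP2 (ω : Traj M) (p : P2S M) (s : ℕ) :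
    U2v (packP2 ω p) s = p.2 (idx M s) := rfl

end TA
namespace TA

variable {M : Model}

/-! ### stage factors -/

noncomputable def zeta0 (ω : Traj M) (s : ℕ) : ℝ :=
  if Mv ω s = (false, false) then (if Zv ω s = none then 1 else 0)
  else
    match Zv ω s with
    | none => M.pe (X0v ω s)
    | some _ => 1 - M.pe (X0v ω s)

noncomputable def zeta1 (ω : Traj M) (s : ℕ) : ℝ :=
  match Zv ω s with
  | none => 1
  | some q => if q.1 = X1v ω s then 1 else 0

noncomputable def zeta2 (ω : Traj M) (s : ℕ) : ℝ :=
  match Zv ω s with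
  | none => 1
  | some q => if q.2 = X2v ω s then 1 else 0

lemma zKer_split (ω : Traj M) (s : ℕ) :
    zKer M (X0v ω s) (Mv ω s) (X1v ω s, X2v ω s) (Zv ω s) =
      zeta0 ω s * zeta1 ω s * zeta2 ω s := by
  unfold zKer zeta0 zeta1 zeta2
  by_cases hm : Mv ω s = (false, false) <;> cases hz : Zv ω s <;>
    simp [hm, hz, Prod.ext_iff] <;> split_ifs <;> simp_all <;> ring

lemma zKer_sum (x0 : M.X0) (m : Bool × Bool) (x : M.X1 × M.X2) :
    ∑ z : Option (M.X1 × M.X2), zKer M x0 m x z = 1 := by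
  unfold zKer
  by_cases hm : m = (false, false)
  · simp [hm]
  · simp only [hm, if_false]
    rw [Fintype.sum_option]
    simp [Finset.sum_ite_eq']

noncomputable def Fst (σ : TeamStrategy M) (γ : AdvStrategy M (HistC M))
    (s : ℕ) (ω : Traj M) : ℝ :=
  σ.f1 s (info1 s ω) (M1v ω s) * σ.f2 s (info2 s ω) (M2v ω s) *
  zKer M (X0v ω s) (Mv ω s) (X1v ω s, X2v ω s) (Zv ω s) *
  M.obs (Zv ω s) (Mv ω s) (X0v ω s) (Yv ω s) *
  σ.g1 s (info1p s ω) (U1v ω s) * σ.g2 s (info2p s ω) (U2v ω s) *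
  γ.ga s (teamComP s ω) (UAv ω s)

noncomputable def Gst (s : ℕ) (ω : Traj M) : ℝ :=
  M.trans0 (X0v ω s) (UAv ω s) (X0v ω (s+1)) *
  M.trans1 (X0v ω s) (X1v ω s) (U1v ω s) (X1v ω (s+1)) *
  M.trans2 (X0v ω s) (X2v ω s) (U2v ω s) (X2v ω (s+1))

noncomputable def Gif (s : ℕ) (ω : Traj M) : ℝ :=
  if s + 1 < M.T then Gst s ω else 1

noncomputable def SS (σ : TeamStrategy M) (γ : AdvStrategy M (HistC M))
    (s : ℕ) (ω : Traj M) : ℝ := Fst σ γ s ω * Gif s ω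

noncomputable def Ini (ω : Traj M) : ℝ :=
  M.init0 (X0v ω 0) * M.init1 (X1v ω 0) * M.init2 (X2v ω 0)

noncomputable def headP (σ : TeamStrategy M) (γ : AdvStrategy M (HistC M))
    (n : ℕ) (ω : Traj M) : ℝ :=
  Ini ω * ∏ s ∈ Finset.range n, SS σ γ s ω

lemma prob_eq_head (σ : TeamStrategy M) (γ : AdvStrategy M (HistC M)) (ω : Traj M) :
    prob σ γ teamComP ω = headP σ γ M.T ω := by
  have h1 : (∏ s ∈ Finset.range M.T, SS σ γ s ω) =
      (∏ s ∈ Finset.range M.T, Fst σ γ s ω) * (∏ s ∈ Finset.range M.T, Gif s ω) :=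
    Finset.prod_mul_distrib
  have h2 : (∏ s ∈ Finset.range M.T, Gif s ω) =
      ∏ s ∈ Finset.range (M.T - 1), Gst s ω := by
    have hT : M.T - 1 + 1 = M.T := Nat.succ_pred_eq_of_pos M.hT
    rw [← hT, Finset.prod_range_succ]
    have hlast : ¬ (M.T - 1 + 1 < M.T) := by omega
    rw [show Gif (M.T - 1) ω = 1 from by simp [Gif, hlast], mul_one]
    apply Finset.prod_congr rfl
    intro s hs
    have : s + 1 < M.T := by
      have := Finset.mem_range.mp hs
      omega
    simp [Gif, this]
  unfold prob headP
  rw [h1, h2]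
  unfold Ini Fst Gst
  ring

noncomputable def hcost (t : ℕ) (ω : Traj M) : ℝ :=
  M.cost t (X0v ω t) (X1v ω t, X2v ω t) (U1v ω t, U2v ω t) (UAv ω t) +
    (if (M1v ω t || M2v ω t) then M.commCost (X0v ω t) (X1v ω t, X2v ω t) else 0)

lemma J_decomp (σ : TeamStrategy M) (γ : AdvStrategy M (HistC M)) :
    J σ γ teamComP =
      ∑ t ∈ Finset.range M.T, ∑ ω : Traj M, headP σ γ M.T ω * hcost t ω := by
  unfold J totalCost
  have step : ∀ ω : Traj M,
      prob σ γ teamComP ω * (∑ t ∈ Finset.range M.T,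
        (M.cost t (X0v ω t) (X1v ω t, X2v ω t) (U1v ω t, U2v ω t) (UAv ω t) +
          (if (M1v ω t || M2v ω t) then M.commCost (X0v ω t) (X1v ω t, X2v ω t) else 0))) =
      ∑ t ∈ Finset.range M.T, headP σ γ M.T ω * hcost t ω := by
    intro ω
    rw [prob_eq_head σ γ ω, Finset.mul_sum]
    rfl
  rw [Finset.sum_congr rfl (fun ω _ => step ω), Finset.sum_comm]

end TA
namespace TA

variable {M : Model}

/-! ### congruence lemmas -/

lemma Mv_congr {t : ℕ} {ω ω' : Traj M} (h1 : M1v ω t = M1v ω' t)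
    (h2 : M2v ω t = M2v ω' t) : Mv ω t = Mv ω' t := by
  unfold Mv; rw [h1, h2]

lemma info1_congr {t : ℕ} {ω ω' : Traj M}
    (h0 : ∀ s, s ≤ t → X0v ω s = X0v ω' s)
    (h1 : ∀ s, s ≤ t → X1v ω s = X1v ω' s)
    (hu : ∀ s, s < t → U1v ω s = U1v ω' s)
    (hm1 : ∀ s, s < t → M1v ω s = M1v ω' s)
    (hm2 : ∀ s, s < t → M2v ω s = M2v ω' s)
    (hz : ∀ s, s < t → Zv ω s = Zv ω' s)
    (hua : ∀ s, s < t → UAv ω s = UAv ω' s)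
    (hy : ∀ s, s < t → Yv ω s = Yv ω' s) :
    info1 t ω = info1 t ω' := by
  unfold info1
  simp only [Prod.mk.injEq]
  exact ⟨pre_congr (fun s hs => h0 s (Nat.lt_succ_iff.mp hs)),
    pre_congr (fun s hs => h1 s (Nat.lt_succ_iff.mp hs)),
    pre_congr hu,
    pre_congr (fun s hs => Mv_congr (hm1 s hs) (hm2 s hs)),
    pre_congr hz, pre_congr hua, pre_congr hy⟩

lemma info2_congr {t : ℕ} {ω ω' : Traj M}
    (h0 : ∀ s, s ≤ t → X0v ω s = X0v ω' s)
    (h2 : ∀ s, s ≤ t → X2v ω s = X2v ω' s)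
    (hu : ∀ s, s < t → U2v ω s = U2v ω' s)
    (hm1 : ∀ s, s < t → M1v ω s = M1v ω' s)
    (hm2 : ∀ s, s < t → M2v ω s = M2v ω' s)
    (hz : ∀ s, s < t → Zv ω s = Zv ω' s)
    (hua : ∀ s, s < t → UAv ω s = UAv ω' s)
    (hy : ∀ s, s < t → Yv ω s = Yv ω' s) :
    info2 t ω = info2 t ω' := by
  unfold info2
  simp only [Prod.mk.injEq]
  exact ⟨pre_congr (fun s hs => h0 s (Nat.lt_succ_iff.mp hs)),
    pre_congr (fun s hs => h2 s (Nat.lt_succ_iff.mp hs)),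
    pre_congr hu,
    pre_congr (fun s hs => Mv_congr (hm1 s hs) (hm2 s hs)),
    pre_congr hz, pre_congr hua, pre_congr hy⟩

lemma info1p_congr {t : ℕ} {ω ω' : Traj M}
    (h0 : ∀ s, s ≤ t → X0v ω s = X0v ω' s)
    (h1 : ∀ s, s ≤ t → X1v ω s = X1v ω' s)
    (hu : ∀ s, s < t → U1v ω s = U1v ω' s)
    (hm1 : ∀ s, s ≤ t → M1v ω s = M1v ω' s)
    (hm2 : ∀ s, s ≤ t → M2v ω s = M2v ω' s)
    (hz : ∀ s, s ≤ t → Zv ω s = Zv ω' s)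
    (hua : ∀ s, s < t → UAv ω s = UAv ω' s)
    (hy : ∀ s, s ≤ t → Yv ω s = Yv ω' s) :
    info1p t ω = info1p t ω' := by
  unfold info1p
  simp only [Prod.mk.injEq]
  exact ⟨pre_congr (fun s hs => h0 s (Nat.lt_succ_iff.mp hs)),
    pre_congr (fun s hs => h1 s (Nat.lt_succ_iff.mp hs)),
    pre_congr hu,
    pre_congr (fun s hs => Mv_congr (hm1 s (Nat.lt_succ_iff.mp hs)) (hm2 s (Nat.lt_succ_iff.mp hs))),
    pre_congr (fun s hs => hz s (Nat.lt_succ_iff.mp hs)),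
    pre_congr hua,
    pre_congr (fun s hs => hy s (Nat.lt_succ_iff.mp hs))⟩

lemma info2p_congr {t : ℕ} {ω ω' : Traj M}
    (h0 : ∀ s, s ≤ t → X0v ω s = X0v ω' s)
    (h2 : ∀ s, s ≤ t → X2v ω s = X2v ω' s)
    (hu : ∀ s, s < t → U2v ω s = U2v ω' s)
    (hm1 : ∀ s, s ≤ t → M1v ω s = M1v ω' s)
    (hm2 : ∀ s, s ≤ t → M2v ω s = M2v ω' s)
    (hz : ∀ s, s ≤ t → Zv ω s = Zv ω' s)
    (hua : ∀ s, s < t → UAv ω s = UAv ω' s)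
    (hy : ∀ s, s ≤ t → Yv ω s = Yv ω' s) :
    info2p t ω = info2p t ω' := by
  unfold info2p
  simp only [Prod.mk.injEq]
  exact ⟨pre_congr (fun s hs => h0 s (Nat.lt_succ_iff.mp hs)),
    pre_congr (fun s hs => h2 s (Nat.lt_succ_iff.mp hs)),
    pre_congr hu,
    pre_congr (fun s hs => Mv_congr (hm1 s (Nat.lt_succ_iff.mp hs)) (hm2 s (Nat.lt_succ_iff.mp hs))),
    pre_congr (fun s hs => hz s (Nat.lt_succ_iff.mp hs)),
    pre_congr hua,
    pre_congr (fun s hs => hy s (Nat.lt_succ_iff.mp hs))⟩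

lemma teamCom_congr {t : ℕ} {ω ω' : Traj M}
    (h0 : ∀ s, s ≤ t → X0v ω s = X0v ω' s)
    (hm1 : ∀ s, s < t → M1v ω s = M1v ω' s)
    (hm2 : ∀ s, s < t → M2v ω s = M2v ω' s)
    (hz : ∀ s, s < t → Zv ω s = Zv ω' s)
    (hua : ∀ s, s < t → UAv ω s = UAv ω' s)
    (hy : ∀ s, s < t → Yv ω s = Yv ω' s) :
    teamCom t ω = teamCom t ω' := by
  unfold teamCom
  simp only [Prod.mk.injEq]
  exact ⟨pre_congr (fun s hs => h0 s (Nat.lt_succ_iff.mp hs)),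
    pre_congr (fun s hs => Mv_congr (hm1 s hs) (hm2 s hs)),
    pre_congr hz, pre_congr hua, pre_congr hy⟩

lemma teamComP_congr {t : ℕ} {ω ω' : Traj M}
    (h0 : ∀ s, s ≤ t → X0v ω s = X0v ω' s)
    (hm1 : ∀ s, s ≤ t → M1v ω s = M1v ω' s)
    (hm2 : ∀ s, s ≤ t → M2v ω s = M2v ω' s)
    (hz : ∀ s, s ≤ t → Zv ω s = Zv ω' s)
    (hua : ∀ s, s < t → UAv ω s = UAv ω' s)
    (hy : ∀ s, s ≤ t → Yv ω s = Yv ω' s) :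
    teamComP t ω = teamComP t ω' := by
  unfold teamComP
  simp only [Prod.mk.injEq]
  exact ⟨pre_congr (fun s hs => h0 s (Nat.lt_succ_iff.mp hs)),
    pre_congr (fun s hs => Mv_congr (hm1 s (Nat.lt_succ_iff.mp hs)) (hm2 s (Nat.lt_succ_iff.mp hs))),
    pre_congr (fun s hs => hz s (Nat.lt_succ_iff.mp hs)),
    pre_congr hua,
    pre_congr (fun s hs => hy s (Nat.lt_succ_iff.mp hs))⟩

/-! ### adaptedness of functions of trajectories -/

def Meas (n : ℕ) (H : Traj M → ℝ) : Prop :=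
  ∀ ω ω' : Traj M,
    (∀ s, s ≤ n → X0v ω s = X0v ω' s) →
    (∀ s, s ≤ n → X1v ω s = X1v ω' s) →
    (∀ s, s ≤ n → X2v ω s = X2v ω' s) →
    (∀ s, s < n → M1v ω s = M1v ω' s) →
    (∀ s, s < n → M2v ω s = M2v ω' s) →
    (∀ s, s < n → Zv ω s = Zv ω' s) →
    (∀ s, s < n → Yv ω s = Yv ω' s) →
    (∀ s, s < n → U1v ω s = U1v ω' s) →
    (∀ s, s < n → U2v ω s = U2v ω' s) →
    (∀ s, s < n → UAv ω s = UAv ω' s) →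
    H ω = H ω'

lemma Meas_mono {m n : ℕ} (h : m ≤ n) {H : Traj M → ℝ} (hH : Meas m H) :
    Meas n H := by
  intro ω ω' h0 h1 h2 hm1 hm2 hz hy hu1 hu2 hua
  exact hH ω ω' (fun s hs => h0 s (hs.trans h)) (fun s hs => h1 s (hs.trans h))
    (fun s hs => h2 s (hs.trans h)) (fun s hs => hm1 s (hs.trans_le h))
    (fun s hs => hm2 s (hs.trans_le h)) (fun s hs => hz s (hs.trans_le h))
    (fun s hs => hy s (hs.trans_le h)) (fun s hs => hu1 s (hs.trans_le h))
    (fun s hs => hu2 s (hs.trans_le h)) (fun s hs => hua s (hs.trans_le h))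

lemma Meas_upd7 {n : ℕ} {H : Traj M → ℝ} (hH : Meas n H) (hn : n < M.T)
    (ω : Traj M) (b : B7 M) : H (upd7 n ω b) = H ω := by
  apply hH <;> intro s hs
  · rfl
  · rfl
  · rfl
  · exact M1v_upd7_ne (hs.trans hn) hn hs.ne ω b
  · exact M2v_upd7_ne (hs.trans hn) hn hs.ne ω b
  · exact Zv_upd7_ne (hs.trans hn) hn hs.ne ω b
  · exact Yv_upd7_ne (hs.trans hn) hn hs.ne ω b
  · exact U1v_upd7_ne (hs.trans hn) hn hs.ne ω b
  · exact U2v_upd7_ne (hs.trans hn) hn hs.ne ω b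
  · exact UAv_upd7_ne (hs.trans hn) hn hs.ne ω b

lemma Meas_updX {n : ℕ} {H : Traj M → ℝ} (hH : Meas n H) (hn : n + 1 < M.T)
    (ω : Traj M) (b : BX M) : H (updX (n+1) ω b) = H ω := by
  apply hH <;> intro s hs
  · exact X0v_updX_ne (by omega) hn (by omega) ω b
  · exact X1v_updX_ne (by omega) hn (by omega) ω b
  · exact X2v_updX_ne (by omega) hn (by omega) ω b
  all_goals rfl

end TA
namespace TA

variable {M : Model}

/-! ### stability of information under stage-`n` updates -/

lemma info1_upd7 {n : ℕ} (hn : n < M.T) (ω : Traj M) (b : B7 M) :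
    info1 n (upd7 n ω b) = info1 n ω :=
  info1_congr (fun _ _ => rfl) (fun _ _ => rfl)
    (fun s hs => U1v_upd7_ne (hs.trans hn) hn hs.ne ω b)
    (fun s hs => M1v_upd7_ne (hs.trans hn) hn hs.ne ω b)
    (fun s hs => M2v_upd7_ne (hs.trans hn) hn hs.ne ω b)
    (fun s hs => Zv_upd7_ne (hs.trans hn) hn hs.ne ω b)
    (fun s hs => UAv_upd7_ne (hs.trans hn) hn hs.ne ω b)
    (fun s hs => Yv_upd7_ne (hs.trans hn) hn hs.ne ω b)

lemma info2_upd7 {n : ℕ} (hn : n < M.T) (ω : Traj M) (b : B7 M) :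
    info2 n (upd7 n ω b) = info2 n ω :=
  info2_congr (fun _ _ => rfl) (fun _ _ => rfl)
    (fun s hs => U2v_upd7_ne (hs.trans hn) hn hs.ne ω b)
    (fun s hs => M1v_upd7_ne (hs.trans hn) hn hs.ne ω b)
    (fun s hs => M2v_upd7_ne (hs.trans hn) hn hs.ne ω b)
    (fun s hs => Zv_upd7_ne (hs.trans hn) hn hs.ne ω b)
    (fun s hs => UAv_upd7_ne (hs.trans hn) hn hs.ne ω b)
    (fun s hs => Yv_upd7_ne (hs.trans hn) hn hs.ne ω b)

lemma pre_M_upd7 {n : ℕ} (hn : n < M.T) (ω : Traj M) (b : B7 M) :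
    pre n (Mv (upd7 n ω b)) = pre n (Mv ω) :=
  pre_congr fun s hs => Mv_congr (M1v_upd7_ne (hs.trans hn) hn hs.ne ω b)
    (M2v_upd7_ne (hs.trans hn) hn hs.ne ω b)

lemma pre_Z_upd7 {n : ℕ} (hn : n < M.T) (ω : Traj M) (b : B7 M) :
    pre n (Zv (upd7 n ω b)) = pre n (Zv ω) :=
  pre_congr fun s hs => Zv_upd7_ne (hs.trans hn) hn hs.ne ω b

lemma pre_Y_upd7 {n : ℕ} (hn : n < M.T) (ω : Traj M) (b : B7 M) :
    pre n (Yv (upd7 n ω b)) = pre n (Yv ω) :=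
  pre_congr fun s hs => Yv_upd7_ne (hs.trans hn) hn hs.ne ω b

lemma pre_UA_upd7 {n : ℕ} (hn : n < M.T) (ω : Traj M) (b : B7 M) :
    pre n (UAv (upd7 n ω b)) = pre n (UAv ω) :=
  pre_congr fun s hs => UAv_upd7_ne (hs.trans hn) hn hs.ne ω b

lemma Mv_upd7_self (n : ℕ) (ω : Traj M) (b : B7 M) :
    Mv (upd7 n ω b) n = (b.1, b.2.1) := by simp [Mv]

lemma info1p_upd7 {n : ℕ} (hn : n < M.T) (ω : Traj M) (b : B7 M) :
    info1p n (upd7 n ω b) =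
      (pre (n+1) (X0v ω), pre (n+1) (X1v ω), pre n (U1v ω),
       pre n (Mv ω) ++ [(b.1, b.2.1)], pre n (Zv ω) ++ [b.2.2.1],
       pre n (UAv ω), pre n (Yv ω) ++ [b.2.2.2.1]) := by
  unfold info1p
  rw [pre_succ (Mv (upd7 n ω b)) n, pre_succ (Zv (upd7 n ω b)) n,
    pre_succ (Yv (upd7 n ω b)) n, pre_M_upd7 hn, pre_Z_upd7 hn, pre_Y_upd7 hn,
    pre_UA_upd7 hn, Mv_upd7_self, Zv_upd7_self, Yv_upd7_self,
    pre_congr (fun s _ => X0v_upd7 n ω b s), pre_congr (fun s _ => X1v_upd7 n ω b s),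
    pre_congr (fun s hs => U1v_upd7_ne (hs.trans hn) hn hs.ne ω b)]

lemma info2p_upd7 {n : ℕ} (hn : n < M.T) (ω : Traj M) (b : B7 M) :
    info2p n (upd7 n ω b) =
      (pre (n+1) (X0v ω), pre (n+1) (X2v ω), pre n (U2v ω),
       pre n (Mv ω) ++ [(b.1, b.2.1)], pre n (Zv ω) ++ [b.2.2.1],
       pre n (UAv ω), pre n (Yv ω) ++ [b.2.2.2.1]) := by
  unfold info2p
  rw [pre_succ (Mv (upd7 n ω b)) n, pre_succ (Zv (upd7 n ω b)) n,
    pre_succ (Yv (upd7 n ω b)) n, pre_M_upd7 hn, pre_Z_upd7 hn, pre_Y_upd7 hn,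
    pre_UA_upd7 hn, Mv_upd7_self, Zv_upd7_self, Yv_upd7_self,
    pre_congr (fun s _ => X0v_upd7 n ω b s), pre_congr (fun s _ => X2v_upd7 n ω b s),
    pre_congr (fun s hs => U2v_upd7_ne (hs.trans hn) hn hs.ne ω b)]

lemma teamComP_upd7 {n : ℕ} (hn : n < M.T) (ω : Traj M) (b : B7 M) :
    teamComP n (upd7 n ω b) =
      (pre (n+1) (X0v ω), pre n (Mv ω) ++ [(b.1, b.2.1)], pre n (Zv ω) ++ [b.2.2.1],
       pre n (UAv ω), pre n (Yv ω) ++ [b.2.2.2.1]) := by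
  unfold teamComP
  rw [pre_succ (Mv (upd7 n ω b)) n, pre_succ (Zv (upd7 n ω b)) n,
    pre_succ (Yv (upd7 n ω b)) n, pre_M_upd7 hn, pre_Z_upd7 hn, pre_Y_upd7 hn,
    pre_UA_upd7 hn, Mv_upd7_self, Zv_upd7_self, Yv_upd7_self,
    pre_congr (fun s _ => X0v_upd7 n ω b s)]

/-! ### adaptedness of the prefix density -/

lemma Meas_headP (σ : TeamStrategy M) (γ : AdvStrategy M (HistC M)) (n : ℕ) :
    Meas n (headP σ γ n) := by
  intro ω ω' h0 h1 h2 hm1 hm2 hz hy hu1 hu2 hua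
  unfold headP Ini
  rw [h0 0 (Nat.zero_le n), h1 0 (Nat.zero_le n), h2 0 (Nat.zero_le n)]
  congr 1
  apply Finset.prod_congr rfl
  intro s hs
  have hsn := Finset.mem_range.mp hs
  have b0 : ∀ r, r ≤ s → X0v ω r = X0v ω' r := fun r hr => h0 r (hr.trans hsn.le)
  have b1 : ∀ r, r ≤ s → X1v ω r = X1v ω' r := fun r hr => h1 r (hr.trans hsn.le)
  have b2 : ∀ r, r ≤ s → X2v ω r = X2v ω' r := fun r hr => h2 r (hr.trans hsn.le)
  have bm1 : ∀ r, r ≤ s → M1v ω r = M1v ω' r := fun r hr => hm1 r (hr.trans_lt hsn)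
  have bm2 : ∀ r, r ≤ s → M2v ω r = M2v ω' r := fun r hr => hm2 r (hr.trans_lt hsn)
  have bz : ∀ r, r ≤ s → Zv ω r = Zv ω' r := fun r hr => hz r (hr.trans_lt hsn)
  have by0 : ∀ r, r ≤ s → Yv ω r = Yv ω' r := fun r hr => hy r (hr.trans_lt hsn)
  have bu1 : ∀ r, r ≤ s → U1v ω r = U1v ω' r := fun r hr => hu1 r (hr.trans_lt hsn)
  have bu2 : ∀ r, r ≤ s → U2v ω r = U2v ω' r := fun r hr => hu2 r (hr.trans_lt hsn)
  have bua : ∀ r, r ≤ s → UAv ω r = UAv ω' r := fun r hr => hua r (hr.trans_lt hsn)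
  unfold SS
  have eF : Fst σ γ s ω = Fst σ γ s ω' := by
    unfold Fst
    rw [info1_congr b0 b1 (fun r hr => bu1 r hr.le) (fun r hr => bm1 r hr.le)
        (fun r hr => bm2 r hr.le) (fun r hr => bz r hr.le)
        (fun r hr => bua r hr.le) (fun r hr => by0 r hr.le),
      info2_congr b0 b2 (fun r hr => bu2 r hr.le) (fun r hr => bm1 r hr.le)
        (fun r hr => bm2 r hr.le) (fun r hr => bz r hr.le)
        (fun r hr => bua r hr.le) (fun r hr => by0 r hr.le),
      info1p_congr b0 b1 (fun r hr => bu1 r hr.le) bm1 bm2 bz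
        (fun r hr => bua r hr.le) by0,
      info2p_congr b0 b2 (fun r hr => bu2 r hr.le) bm1 bm2 bz
        (fun r hr => bua r hr.le) by0,
      teamComP_congr b0 bm1 bm2 bz (fun r hr => bua r hr.le) by0,
      Mv_congr (bm1 s le_rfl) (bm2 s le_rfl),
      bm1 s le_rfl, bm2 s le_rfl, bz s le_rfl, by0 s le_rfl, bu1 s le_rfl,
      bu2 s le_rfl, bua s le_rfl, b0 s le_rfl, b1 s le_rfl, b2 s le_rfl]
  have eG : Gif s ω = Gif s ω' := by
    unfold Gif
    split_ifs with hT'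
    · unfold Gst
      rw [b0 s le_rfl, h0 (s+1) (by omega), b1 s le_rfl, h1 (s+1) (by omega),
        b2 s le_rfl, h2 (s+1) (by omega), bu1 s le_rfl, bu2 s le_rfl, bua s le_rfl]
    · rfl
  rw [eF, eG]

end TA
namespace TA

variable {M : Model}

/-! ### stage elimination -/

lemma stage7 (σ : TeamStrategy M) (γ : AdvStrategy M (HistC M)) {n : ℕ}
    (hn : n < M.T) (P : Traj M → ℝ)
    (hP : ∀ ω b, P (upd7 n ω b) = P ω) :
    ∑ ω : Traj M, P ω * Fst σ γ n ω =
      (Fintype.card (B7 M) : ℝ)⁻¹ * ∑ ω : Traj M, P ω := by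
  apply sum_kernel_elim (upd7 n) (val7 n) (upd7_idem n) (upd7_self n)
    (val7_upd7 n) P (Fst σ γ n) hP
  intro ω
  unfold Fst
  simp only [info1_upd7 hn, info2_upd7 hn, info1p_upd7 hn, info2p_upd7 hn,
    teamComP_upd7 hn, Mv_upd7_self, M1v_upd7_self, M2v_upd7_self, Zv_upd7_self,
    Yv_upd7_self, U1v_upd7_self, U2v_upd7_self, UAv_upd7_self, X0v_upd7,
    X1v_upd7, X2v_upd7]
  rw [Fintype.sum_prod_type]
  simp only [Fintype.sum_prod_type]
  simp only [← Finset.mul_sum, γ.ga_sum, mul_one, σ.g2_sum, σ.g1_sum,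
    M.obs_sum, zKer_sum, σ.f2_sum, σ.f1_sum]

lemma stageX {n : ℕ} (hn : n + 1 < M.T) (P : Traj M → ℝ)
    (hP : ∀ ω b, P (updX (n+1) ω b) = P ω) :
    ∑ ω : Traj M, P ω * Gst n ω =
      (Fintype.card (BX M) : ℝ)⁻¹ * ∑ ω : Traj M, P ω := by
  apply sum_kernel_elim (updX (n+1)) (valX (n+1)) (updX_idem (n+1))
    (updX_self (n+1)) (valX_updX (n+1)) P (Gst n) hP
  intro ω
  unfold Gst
  have hne : ∀ (b : BX M), X0v (updX (n+1) ω b) n = X0v ω n :=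
    fun b => X0v_updX_ne (by omega) hn (by omega) ω b
  have hne1 : ∀ (b : BX M), X1v (updX (n+1) ω b) n = X1v ω n :=
    fun b => X1v_updX_ne (by omega) hn (by omega) ω b
  have hne2 : ∀ (b : BX M), X2v (updX (n+1) ω b) n = X2v ω n :=
    fun b => X2v_updX_ne (by omega) hn (by omega) ω b
  simp only [hne, hne1, hne2, X0v_updX_self, X1v_updX_self, X2v_updX_self,
    M1v_updX, M2v_updX, Zv_updX, Yv_updX, U1v_updX, U2v_updX, UAv_updX]
  rw [Fintype.sum_prod_type]
  simp only [Fintype.sum_prod_type]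
  simp only [← Finset.mul_sum, M.trans2_sum, mul_one, M.trans1_sum, M.trans0_sum]

/-! ### eliminating future stages -/

noncomputable def stC (M : Model) (s : ℕ) : ℝ :=
  (Fintype.card (B7 M) : ℝ)⁻¹ * (if s + 1 < M.T then (Fintype.card (BX M) : ℝ)⁻¹ else 1)

noncomputable def NT (M : Model) (n : ℕ) : ℝ := ∏ s ∈ Finset.Ico n M.T, stC M s

lemma Fst_updX (σ : TeamStrategy M) (γ : AdvStrategy M (HistC M)) {n : ℕ}
    (hn : n + 1 < M.T) (ω : Traj M) (b : BX M) :
    Fst σ γ n (updX (n+1) ω b) = Fst σ γ n ω := by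
  have hx0 : ∀ s, s ≤ n → X0v (updX (n+1) ω b) s = X0v ω s :=
    fun s hs => X0v_updX_ne (by omega) hn (by omega) ω b
  have hx1 : ∀ s, s ≤ n → X1v (updX (n+1) ω b) s = X1v ω s :=
    fun s hs => X1v_updX_ne (by omega) hn (by omega) ω b
  have hx2 : ∀ s, s ≤ n → X2v (updX (n+1) ω b) s = X2v ω s :=
    fun s hs => X2v_updX_ne (by omega) hn (by omega) ω b
  unfold Fst
  rw [info1_congr hx0 hx1 (fun _ _ => rfl) (fun _ _ => rfl) (fun _ _ => rfl)
      (fun _ _ => rfl) (fun _ _ => rfl) (fun _ _ => rfl),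
    info2_congr hx0 hx2 (fun _ _ => rfl) (fun _ _ => rfl) (fun _ _ => rfl)
      (fun _ _ => rfl) (fun _ _ => rfl) (fun _ _ => rfl),
    info1p_congr hx0 hx1 (fun _ _ => rfl) (fun _ _ => rfl) (fun _ _ => rfl)
      (fun _ _ => rfl) (fun _ _ => rfl) (fun _ _ => rfl),
    info2p_congr hx0 hx2 (fun _ _ => rfl) (fun _ _ => rfl) (fun _ _ => rfl)
      (fun _ _ => rfl) (fun _ _ => rfl) (fun _ _ => rfl),
    teamComP_congr hx0 (fun _ _ => rfl) (fun _ _ => rfl) (fun _ _ => rfl)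
      (fun _ _ => rfl) (fun _ _ => rfl),
    hx0 n le_rfl, hx1 n le_rfl, hx2 n le_rfl]
  rfl

lemma tail_elim (σ : TeamStrategy M) (γ : AdvStrategy M (HistC M)) :
    ∀ k n, n + k = M.T → ∀ H : Traj M → ℝ, Meas n H →
      ∑ ω : Traj M, headP σ γ M.T ω * H ω =
        NT M n * ∑ ω : Traj M, headP σ γ n ω * H ω := by
  intro k
  induction k with
  | zero =>
    intro n hn H _
    have : n = M.T := by omega
    subst this
    simp [NT]
  | succ k ih =>
    intro n hn H hH
    have hnT : n < M.T := by omega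
    have step1 := ih (n+1) (by omega) H (Meas_mono (Nat.le_succ n) hH)
    rw [step1]
    have hhead : ∀ ω : Traj M, headP σ γ (n+1) ω * H ω =
        (headP σ γ n ω * H ω * Fst σ γ n ω) * Gif n ω := by
      intro ω
      unfold headP
      rw [Finset.prod_range_succ]
      unfold SS
      ring
    rw [Finset.sum_congr rfl fun ω _ => hhead ω]
    have hPmeas : ∀ (ω : Traj M) (b : B7 M),
        headP σ γ n (upd7 n ω b) * H (upd7 n ω b) = headP σ γ n ω * H ω := by
      intro ω b
      rw [Meas_upd7 (Meas_headP σ γ n) hnT, Meas_upd7 hH hnT]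
    have key : ∑ ω : Traj M, (headP σ γ n ω * H ω * Fst σ γ n ω) * Gif n ω =
        stC M n * ∑ ω : Traj M, headP σ γ n ω * H ω := by
      by_cases hg : n + 1 < M.T
      · have e1 : ∀ ω : Traj M, (headP σ γ n ω * H ω * Fst σ γ n ω) * Gif n ω =
            (headP σ γ n ω * H ω * Fst σ γ n ω) * Gst n ω := by
          intro ω; unfold Gif; rw [if_pos hg]
        rw [Finset.sum_congr rfl fun ω _ => e1 ω]
        rw [stageX hg _ (by
          intro ω b
          rw [Meas_updX (Meas_headP σ γ n) hg, Meas_updX hH hg, Fst_updX σ γ hg])]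
        rw [stage7 σ γ hnT _ hPmeas]
        unfold stC
        rw [if_pos hg]
        ring
      · have e1 : ∀ ω : Traj M, (headP σ γ n ω * H ω * Fst σ γ n ω) * Gif n ω =
            (headP σ γ n ω * H ω) * Fst σ γ n ω := by
          intro ω; unfold Gif; rw [if_neg hg, mul_one]
        rw [Finset.sum_congr rfl fun ω _ => e1 ω]
        rw [stage7 σ γ hnT _ hPmeas]
        unfold stC
        rw [if_neg hg]
        ring
    rw [key, ← mul_assoc]
    congr 1
    unfold NT
    rw [Finset.prod_eq_prod_Ico_succ_bot hnT]
    ring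

end TA
namespace TA

variable {M : Model}

/-! ### factorization of the prefix density -/

noncomputable def trans0if (s : ℕ) (ω : Traj M) : ℝ :=
  if s + 1 < M.T then M.trans0 (X0v ω s) (UAv ω s) (X0v ω (s+1)) else 1
noncomputable def trans1if (s : ℕ) (ω : Traj M) : ℝ :=
  if s + 1 < M.T then M.trans1 (X0v ω s) (X1v ω s) (U1v ω s) (X1v ω (s+1)) else 1
noncomputable def trans2if (s : ℕ) (ω : Traj M) : ℝ :=
  if s + 1 < M.T then M.trans2 (X0v ω s) (X2v ω s) (U2v ω s) (X2v ω (s+1)) else 1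

noncomputable def A1stage (σ : TeamStrategy M) (s : ℕ) (ω : Traj M) : ℝ :=
  σ.f1 s (info1 s ω) (M1v ω s) * zeta1 ω s *
    σ.g1 s (info1p s ω) (U1v ω s) * trans1if s ω

noncomputable def A2stage (σ : TeamStrategy M) (s : ℕ) (ω : Traj M) : ℝ :=
  σ.f2 s (info2 s ω) (M2v ω s) * zeta2 ω s *
    σ.g2 s (info2p s ω) (U2v ω s) * trans2if s ω

noncomputable def Bstage (γ : AdvStrategy M (HistC M)) (s : ℕ) (ω : Traj M) : ℝ :=
  zeta0 ω s * M.obs (Zv ω s) (Mv ω s) (X0v ω s) (Yv ω s) *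
    γ.ga s (teamComP s ω) (UAv ω s) * trans0if s ω

noncomputable def A1pre (σ : TeamStrategy M) (n : ℕ) (ω : Traj M) : ℝ :=
  M.init1 (X1v ω 0) * ∏ s ∈ Finset.range n, A1stage σ s ω
noncomputable def A2pre (σ : TeamStrategy M) (n : ℕ) (ω : Traj M) : ℝ :=
  M.init2 (X2v ω 0) * ∏ s ∈ Finset.range n, A2stage σ s ω
noncomputable def Bpre (γ : AdvStrategy M (HistC M)) (n : ℕ) (ω : Traj M) : ℝ :=
  M.init0 (X0v ω 0) * ∏ s ∈ Finset.range n, Bstage γ s ω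

lemma SS_fact (σ : TeamStrategy M) (γ : AdvStrategy M (HistC M)) (s : ℕ) (ω : Traj M) :
    SS σ γ s ω = Bstage γ s ω * A1stage σ s ω * A2stage σ s ω := by
  unfold SS Fst Bstage A1stage A2stage
  rw [zKer_split]
  have hG : Gif s ω = trans0if s ω * trans1if s ω * trans2if s ω := by
    unfold Gif trans0if trans1if trans2if Gst
    split_ifs with h
    · ring
    · norm_num
  rw [hG]
  ring

lemma head_fact (σ : TeamStrategy M) (γ : AdvStrategy M (HistC M)) (n : ℕ) (ω : Traj M) :
    headP σ γ n ω = Bpre γ n ω * A1pre σ n ω * A2pre σ n ω := by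
  unfold headP Bpre A1pre A2pre Ini
  rw [Finset.prod_congr rfl (fun s _ => SS_fact σ γ s ω),
    Finset.prod_mul_distrib, Finset.prod_mul_distrib]
  ring

/-! ### nonnegativity -/

lemma zeta0_nonneg (ω : Traj M) (s : ℕ) : 0 ≤ zeta0 ω s := by
  unfold zeta0
  split_ifs
  · norm_num
  · norm_num
  · cases hz : Zv ω s
    · simp [M.pe_nonneg]
    · have := M.pe_le_one (X0v ω s)
      simp
      linarith

lemma zeta1_nonneg (ω : Traj M) (s : ℕ) : 0 ≤ zeta1 ω s := by
  unfold zeta1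
  cases hz : Zv ω s
  · norm_num
  · dsimp only
    split_ifs <;> norm_num

lemma zeta2_nonneg (ω : Traj M) (s : ℕ) : 0 ≤ zeta2 ω s := by
  unfold zeta2
  cases hz : Zv ω s
  · norm_num
  · dsimp only
    split_ifs <;> norm_num

lemma trans1if_nonneg (s : ℕ) (ω : Traj M) : 0 ≤ trans1if s ω := by
  unfold trans1if
  split_ifs
  · exact M.trans1_nonneg _ _ _ _
  · norm_num

lemma trans2if_nonneg (s : ℕ) (ω : Traj M) : 0 ≤ trans2if s ω := by
  unfold trans2if
  split_ifs
  · exact M.trans2_nonneg _ _ _ _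
  · norm_num

lemma A1stage_nonneg (σ : TeamStrategy M) (s : ℕ) (ω : Traj M) :
    0 ≤ A1stage σ s ω := by
  unfold A1stage
  have := σ.f1_nonneg s (info1 s ω) (M1v ω s)
  have := σ.g1_nonneg s (info1p s ω) (U1v ω s)
  have := zeta1_nonneg ω s
  have := trans1if_nonneg s ω
  positivity

lemma A2stage_nonneg (σ : TeamStrategy M) (s : ℕ) (ω : Traj M) :
    0 ≤ A2stage σ s ω := by
  unfold A2stage
  have := σ.f2_nonneg s (info2 s ω) (M2v ω s)
  have := σ.g2_nonneg s (info2p s ω) (U2v ω s)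
  have := zeta2_nonneg ω s
  have := trans2if_nonneg s ω
  positivity

lemma A1pre_nonneg (σ : TeamStrategy M) (n : ℕ) (ω : Traj M) : 0 ≤ A1pre σ n ω := by
  unfold A1pre
  apply mul_nonneg (M.init1_nonneg _)
  exact Finset.prod_nonneg fun s _ => A1stage_nonneg σ s ω

lemma A2pre_nonneg (σ : TeamStrategy M) (n : ℕ) (ω : Traj M) : 0 ≤ A2pre σ n ω := by
  unfold A2pre
  apply mul_nonneg (M.init2_nonneg _)
  exact Finset.prod_nonneg fun s _ => A2stage_nonneg σ s ω

/-! ### congruence for the private densities -/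

lemma zeta1_congr {s : ℕ} {ω ω' : Traj M} (hz : Zv ω s = Zv ω' s)
    (hx : X1v ω s = X1v ω' s) : zeta1 ω s = zeta1 ω' s := by
  unfold zeta1
  rw [hz, hx]

lemma zeta2_congr {s : ℕ} {ω ω' : Traj M} (hz : Zv ω s = Zv ω' s)
    (hx : X2v ω s = X2v ω' s) : zeta2 ω s = zeta2 ω' s := by
  unfold zeta2
  rw [hz, hx]

lemma A1pre_congr (σ : TeamStrategy M) {n : ℕ} {ω ω' : Traj M}
    (hx0 : ∀ s, s < n → X0v ω s = X0v ω' s)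
    (hx1 : ∀ s, s ≤ n → X1v ω s = X1v ω' s)
    (hu1 : ∀ s, s < n → U1v ω s = U1v ω' s)
    (hm1 : ∀ s, s < n → M1v ω s = M1v ω' s)
    (hm2 : ∀ s, s < n → M2v ω s = M2v ω' s)
    (hz : ∀ s, s < n → Zv ω s = Zv ω' s)
    (hy : ∀ s, s < n → Yv ω s = Yv ω' s)
    (hua : ∀ s, s < n → UAv ω s = UAv ω' s) :
    A1pre σ n ω = A1pre σ n ω' := by
  unfold A1pre
  rw [hx1 0 (Nat.zero_le n)]
  congr 1
  apply Finset.prod_congr rfl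
  intro s hs
  have hsn := Finset.mem_range.mp hs
  have b0 : ∀ r, r ≤ s → X0v ω r = X0v ω' r := fun r hr => hx0 r (hr.trans_lt hsn)
  have b1 : ∀ r, r ≤ s → X1v ω r = X1v ω' r := fun r hr => hx1 r (hr.trans hsn.le)
  have bu : ∀ r, r ≤ s → U1v ω r = U1v ω' r := fun r hr => hu1 r (hr.trans_lt hsn)
  have bm1 : ∀ r, r ≤ s → M1v ω r = M1v ω' r := fun r hr => hm1 r (hr.trans_lt hsn)
  have bm2 : ∀ r, r ≤ s → M2v ω r = M2v ω' r := fun r hr => hm2 r (hr.trans_lt hsn)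
  have bz : ∀ r, r ≤ s → Zv ω r = Zv ω' r := fun r hr => hz r (hr.trans_lt hsn)
  have by0 : ∀ r, r ≤ s → Yv ω r = Yv ω' r := fun r hr => hy r (hr.trans_lt hsn)
  have bua : ∀ r, r ≤ s → UAv ω r = UAv ω' r := fun r hr => hua r (hr.trans_lt hsn)
  unfold A1stage
  rw [info1_congr b0 b1 (fun r hr => bu r hr.le) (fun r hr => bm1 r hr.le)
      (fun r hr => bm2 r hr.le) (fun r hr => bz r hr.le)
      (fun r hr => bua r hr.le) (fun r hr => by0 r hr.le),
    info1p_congr b0 b1 (fun r hr => bu r hr.le) bm1 bm2 bz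
      (fun r hr => bua r hr.le) by0,
    zeta1_congr (bz s le_rfl) (b1 s le_rfl),
    bm1 s le_rfl, bu s le_rfl]
  have ht : trans1if s ω = trans1if s ω' := by
    unfold trans1if
    split_ifs with h
    · rw [b0 s le_rfl, b1 s le_rfl, bu s le_rfl, hx1 (s+1) (by omega)]
    · rfl
  rw [ht]

lemma A2pre_congr (σ : TeamStrategy M) {n : ℕ} {ω ω' : Traj M}
    (hx0 : ∀ s, s < n → X0v ω s = X0v ω' s)
    (hx2 : ∀ s, s ≤ n → X2v ω s = X2v ω' s)
    (hu2 : ∀ s, s < n → U2v ω s = U2v ω' s)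
    (hm1 : ∀ s, s < n → M1v ω s = M1v ω' s)
    (hm2 : ∀ s, s < n → M2v ω s = M2v ω' s)
    (hz : ∀ s, s < n → Zv ω s = Zv ω' s)
    (hy : ∀ s, s < n → Yv ω s = Yv ω' s)
    (hua : ∀ s, s < n → UAv ω s = UAv ω' s) :
    A2pre σ n ω = A2pre σ n ω' := by
  unfold A2pre
  rw [hx2 0 (Nat.zero_le n)]
  congr 1
  apply Finset.prod_congr rfl
  intro s hs
  have hsn := Finset.mem_range.mp hs
  have b0 : ∀ r, r ≤ s → X0v ω r = X0v ω' r := fun r hr => hx0 r (hr.trans_lt hsn)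
  have b2 : ∀ r, r ≤ s → X2v ω r = X2v ω' r := fun r hr => hx2 r (hr.trans hsn.le)
  have bu : ∀ r, r ≤ s → U2v ω r = U2v ω' r := fun r hr => hu2 r (hr.trans_lt hsn)
  have bm1 : ∀ r, r ≤ s → M1v ω r = M1v ω' r := fun r hr => hm1 r (hr.trans_lt hsn)
  have bm2 : ∀ r, r ≤ s → M2v ω r = M2v ω' r := fun r hr => hm2 r (hr.trans_lt hsn)
  have bz : ∀ r, r ≤ s → Zv ω r = Zv ω' r := fun r hr => hz r (hr.trans_lt hsn)
  have by0 : ∀ r, r ≤ s → Yv ω r = Yv ω' r := fun r hr => hy r (hr.trans_lt hsn)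
  have bua : ∀ r, r ≤ s → UAv ω r = UAv ω' r := fun r hr => hua r (hr.trans_lt hsn)
  unfold A2stage
  rw [info2_congr b0 b2 (fun r hr => bu r hr.le) (fun r hr => bm1 r hr.le)
      (fun r hr => bm2 r hr.le) (fun r hr => bz r hr.le)
      (fun r hr => bua r hr.le) (fun r hr => by0 r hr.le),
    info2p_congr b0 b2 (fun r hr => bu r hr.le) bm1 bm2 bz
      (fun r hr => bua r hr.le) by0,
    zeta2_congr (bz s le_rfl) (b2 s le_rfl),
    bm2 s le_rfl, bu s le_rfl]
  have ht : trans2if s ω = trans2if s ω' := by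
    unfold trans2if
    split_ifs with h
    · rw [b0 s le_rfl, b2 s le_rfl, bu s le_rfl, hx2 (s+1) (by omega)]
    · rfl
  rw [ht]

end TA
namespace TA

variable {M : Model}

lemma ind_absorb {α : Type _} (x a : α) (f : α → ℝ) :
    (if x = a then (1:ℝ) else 0) * f x = (if x = a then (1:ℝ) else 0) * f a := by
  split_ifs with h
  · rw [h]
  · ring

/-! ### one-agent reach quantities -/

noncomputable def W1 (σ : TeamStrategy M) (n : ℕ) (ω : Traj M) : ℝ :=
  A1pre σ n ω * σ.f1 n (info1 n ω) (M1v ω n) * zeta1 ω n *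
    σ.g1 n (info1p n ω) (U1v ω n)

noncomputable def R1 (σ : TeamStrategy M) (n : ℕ) (ω : Traj M) (a : M.X1) : ℝ :=
  ∑ p : P1S M, A1pre σ n (packP1 ω p) *
    (if X1v (packP1 ω p) n = a then (1:ℝ) else 0)

noncomputable def R1n (σ : TeamStrategy M) (n : ℕ) (ω : Traj M) (a : M.X1)
    (m : Bool) : ℝ :=
  ∑ p : P1S M, A1pre σ n (packP1 ω p) * σ.f1 n (info1 n (packP1 ω p)) m *
    (if X1v (packP1 ω p) n = a then (1:ℝ) else 0)

noncomputable def R1f (σ : TeamStrategy M) (n : ℕ) (ω : Traj M) (a : M.X1) : ℝ :=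
  ∑ p : P1S M, A1pre σ n (packP1 ω p) *
    σ.f1 n (info1 n (packP1 ω p)) (M1v ω n) * zeta1 (packP1 ω p) n *
    (if X1v (packP1 ω p) n = a then (1:ℝ) else 0)

noncomputable def R1P (σ : TeamStrategy M) (n : ℕ) (ω : Traj M) (a : M.X1)
    (b : M.U1) : ℝ :=
  ∑ p : P1S M, W1 σ n (packP1 ω p) *
    (if X1v (packP1 ω p) n = a then (1:ℝ) else 0) *
    (if U1v (packP1 ω p) n = b then (1:ℝ) else 0)

noncomputable def W2 (σ : TeamStrategy M) (n : ℕ) (ω : Traj M) : ℝ :=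
  A2pre σ n ω * σ.f2 n (info2 n ω) (M2v ω n) * zeta2 ω n *
    σ.g2 n (info2p n ω) (U2v ω n)

noncomputable def R2 (σ : TeamStrategy M) (n : ℕ) (ω : Traj M) (a : M.X2) : ℝ :=
  ∑ p : P2S M, A2pre σ n (packP2 ω p) *
    (if X2v (packP2 ω p) n = a then (1:ℝ) else 0)

noncomputable def R2n (σ : TeamStrategy M) (n : ℕ) (ω : Traj M) (a : M.X2)
    (m : Bool) : ℝ :=
  ∑ p : P2S M, A2pre σ n (packP2 ω p) * σ.f2 n (info2 n (packP2 ω p)) m *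
    (if X2v (packP2 ω p) n = a then (1:ℝ) else 0)

noncomputable def R2f (σ : TeamStrategy M) (n : ℕ) (ω : Traj M) (a : M.X2) : ℝ :=
  ∑ p : P2S M, A2pre σ n (packP2 ω p) *
    σ.f2 n (info2 n (packP2 ω p)) (M2v ω n) * zeta2 (packP2 ω p) n *
    (if X2v (packP2 ω p) n = a then (1:ℝ) else 0)

noncomputable def R2P (σ : TeamStrategy M) (n : ℕ) (ω : Traj M) (a : M.X2)
    (b : M.U2) : ℝ :=
  ∑ p : P2S M, W2 σ n (packP2 ω p) *
    (if X2v (packP2 ω p) n = a then (1:ℝ) else 0) *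
    (if U2v (packP2 ω p) n = b then (1:ℝ) else 0)

/-! ### nonnegativity of the reach quantities -/

lemma ind_nonneg {α : Type _} (x a : α) : (0:ℝ) ≤ (if x = a then (1:ℝ) else 0) := by
  split_ifs <;> norm_num

lemma R1_nonneg (σ : TeamStrategy M) (n : ℕ) (ω : Traj M) (a : M.X1) :
    0 ≤ R1 σ n ω a :=
  Finset.sum_nonneg fun p _ => mul_nonneg (A1pre_nonneg σ n _) (ind_nonneg _ _)

lemma R1n_nonneg (σ : TeamStrategy M) (n : ℕ) (ω : Traj M) (a : M.X1) (m : Bool) :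
    0 ≤ R1n σ n ω a m :=
  Finset.sum_nonneg fun p _ => mul_nonneg (mul_nonneg (A1pre_nonneg σ n _)
    (σ.f1_nonneg _ _ _)) (ind_nonneg _ _)

lemma R1f_nonneg (σ : TeamStrategy M) (n : ℕ) (ω : Traj M) (a : M.X1) :
    0 ≤ R1f σ n ω a :=
  Finset.sum_nonneg fun p _ => mul_nonneg (mul_nonneg (mul_nonneg
    (A1pre_nonneg σ n _) (σ.f1_nonneg _ _ _)) (zeta1_nonneg _ _)) (ind_nonneg _ _)

lemma W1_nonneg (σ : TeamStrategy M) (n : ℕ) (ω : Traj M) : 0 ≤ W1 σ n ω :=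
  mul_nonneg (mul_nonneg (mul_nonneg (A1pre_nonneg σ n _) (σ.f1_nonneg _ _ _))
    (zeta1_nonneg _ _)) (σ.g1_nonneg _ _ _)

lemma R1P_nonneg (σ : TeamStrategy M) (n : ℕ) (ω : Traj M) (a : M.X1) (b : M.U1) :
    0 ≤ R1P σ n ω a b :=
  Finset.sum_nonneg fun p _ => mul_nonneg (mul_nonneg (W1_nonneg σ n _)
    (ind_nonneg _ _)) (ind_nonneg _ _)

lemma R2_nonneg (σ : TeamStrategy M) (n : ℕ) (ω : Traj M) (a : M.X2) :
    0 ≤ R2 σ n ω a :=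
  Finset.sum_nonneg fun p _ => mul_nonneg (A2pre_nonneg σ n _) (ind_nonneg _ _)

lemma R2n_nonneg (σ : TeamStrategy M) (n : ℕ) (ω : Traj M) (a : M.X2) (m : Bool) :
    0 ≤ R2n σ n ω a m :=
  Finset.sum_nonneg fun p _ => mul_nonneg (mul_nonneg (A2pre_nonneg σ n _)
    (σ.f2_nonneg _ _ _)) (ind_nonneg _ _)

lemma R2f_nonneg (σ : TeamStrategy M) (n : ℕ) (ω : Traj M) (a : M.X2) :
    0 ≤ R2f σ n ω a :=
  Finset.sum_nonneg fun p _ => mul_nonneg (mul_nonneg (mul_nonneg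
    (A2pre_nonneg σ n _) (σ.f2_nonneg _ _ _)) (zeta2_nonneg _ _)) (ind_nonneg _ _)

lemma W2_nonneg (σ : TeamStrategy M) (n : ℕ) (ω : Traj M) : 0 ≤ W2 σ n ω :=
  mul_nonneg (mul_nonneg (mul_nonneg (A2pre_nonneg σ n _) (σ.f2_nonneg _ _ _))
    (zeta2_nonneg _ _)) (σ.g2_nonneg _ _ _)

lemma R2P_nonneg (σ : TeamStrategy M) (n : ℕ) (ω : Traj M) (a : M.X2) (b : M.U2) :
    0 ≤ R2P σ n ω a b :=
  Finset.sum_nonneg fun p _ => mul_nonneg (mul_nonneg (W2_nonneg σ n _)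
    (ind_nonneg _ _)) (ind_nonneg _ _)

/-! ### sum identities -/

lemma sum_R1n (σ : TeamStrategy M) (n : ℕ) (ω : Traj M) (a : M.X1) :
    ∑ m : Bool, R1n σ n ω a m = R1 σ n ω a := by
  unfold R1n R1
  rw [Finset.sum_comm]
  apply Finset.sum_congr rfl
  intro p _
  have : ∀ m, A1pre σ n (packP1 ω p) * σ.f1 n (info1 n (packP1 ω p)) m *
      (if X1v (packP1 ω p) n = a then (1:ℝ) else 0) =
      (A1pre σ n (packP1 ω p) * (if X1v (packP1 ω p) n = a then (1:ℝ) else 0)) *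
        σ.f1 n (info1 n (packP1 ω p)) m := fun m => by ring
  rw [Finset.sum_congr rfl fun m _ => this m, ← Finset.mul_sum, σ.f1_sum, mul_one]

lemma sum_R2n (σ : TeamStrategy M) (n : ℕ) (ω : Traj M) (a : M.X2) :
    ∑ m : Bool, R2n σ n ω a m = R2 σ n ω a := by
  unfold R2n R2
  rw [Finset.sum_comm]
  apply Finset.sum_congr rfl
  intro p _
  have : ∀ m, A2pre σ n (packP2 ω p) * σ.f2 n (info2 n (packP2 ω p)) m *
      (if X2v (packP2 ω p) n = a then (1:ℝ) else 0) =
      (A2pre σ n (packP2 ω p) * (if X2v (packP2 ω p) n = a then (1:ℝ) else 0)) *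
        σ.f2 n (info2 n (packP2 ω p)) m := fun m => by ring
  rw [Finset.sum_congr rfl fun m _ => this m, ← Finset.mul_sum, σ.f2_sum, mul_one]

end TA
namespace TA

variable {M : Model}

/-! ### stability under private-coordinate updates -/

lemma U1v_pack_updP1u_ne {n s : ℕ} (hs : s < n) (hn : n < M.T)
    (ω : Traj M) (p : P1S M) (b : M.U1) :
    U1v (packP1 ω (updP1u n p b)) s = U1v (packP1 ω p) s := by
  simp [U1v_packP1, updP1u, Function.update_of_ne (idx_inj (hs.trans hn) hn hs.ne)]

lemma U1v_pack_updP1u_self (n : ℕ) (ω : Traj M) (p : P1S M) (b : M.U1) :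
    U1v (packP1 ω (updP1u n p b)) n = b := by
  simp [U1v_packP1, updP1u]

lemma A1pre_pack_updP1u (σ : TeamStrategy M) {n : ℕ} (hn : n < M.T)
    (ω : Traj M) (p : P1S M) (b : M.U1) :
    A1pre σ n (packP1 ω (updP1u n p b)) = A1pre σ n (packP1 ω p) :=
  A1pre_congr σ (fun _ _ => rfl) (fun _ _ => rfl)
    (fun s hs => U1v_pack_updP1u_ne hs hn ω p b)
    (fun _ _ => rfl) (fun _ _ => rfl) (fun _ _ => rfl) (fun _ _ => rfl)
    (fun _ _ => rfl)

lemma info1_pack_updP1u {n : ℕ} (hn : n < M.T) (ω : Traj M) (p : P1S M) (b : M.U1) :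
    info1 n (packP1 ω (updP1u n p b)) = info1 n (packP1 ω p) :=
  info1_congr (fun _ _ => rfl) (fun _ _ => rfl)
    (fun s hs => U1v_pack_updP1u_ne hs hn ω p b)
    (fun _ _ => rfl) (fun _ _ => rfl) (fun _ _ => rfl) (fun _ _ => rfl)
    (fun _ _ => rfl)

lemma info1p_pack_updP1u {n : ℕ} (hn : n < M.T) (ω : Traj M) (p : P1S M) (b : M.U1) :
    info1p n (packP1 ω (updP1u n p b)) = info1p n (packP1 ω p) :=
  info1p_congr (fun _ _ => rfl) (fun _ _ => rfl)
    (fun s hs => U1v_pack_updP1u_ne hs hn ω p b)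
    (fun _ _ => rfl) (fun _ _ => rfl) (fun _ _ => rfl) (fun _ _ => rfl)
    (fun _ _ => rfl)

lemma U2v_pack_updP2u_ne {n s : ℕ} (hs : s < n) (hn : n < M.T)
    (ω : Traj M) (p : P2S M) (b : M.U2) :
    U2v (packP2 ω (updP2u n p b)) s = U2v (packP2 ω p) s := by
  simp [U2v_packP2, updP2u, Function.update_of_ne (idx_inj (hs.trans hn) hn hs.ne)]

lemma U2v_pack_updP2u_self (n : ℕ) (ω : Traj M) (p : P2S M) (b : M.U2) :
    U2v (packP2 ω (updP2u n p b)) n = b := by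
  simp [U2v_packP2, updP2u]

lemma A2pre_pack_updP2u (σ : TeamStrategy M) {n : ℕ} (hn : n < M.T)
    (ω : Traj M) (p : P2S M) (b : M.U2) :
    A2pre σ n (packP2 ω (updP2u n p b)) = A2pre σ n (packP2 ω p) :=
  A2pre_congr σ (fun _ _ => rfl) (fun _ _ => rfl)
    (fun s hs => U2v_pack_updP2u_ne hs hn ω p b)
    (fun _ _ => rfl) (fun _ _ => rfl) (fun _ _ => rfl) (fun _ _ => rfl)
    (fun _ _ => rfl)

lemma info2_pack_updP2u {n : ℕ} (hn : n < M.T) (ω : Traj M) (p : P2S M) (b : M.U2) :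
    info2 n (packP2 ω (updP2u n p b)) = info2 n (packP2 ω p) :=
  info2_congr (fun _ _ => rfl) (fun _ _ => rfl)
    (fun s hs => U2v_pack_updP2u_ne hs hn ω p b)
    (fun _ _ => rfl) (fun _ _ => rfl) (fun _ _ => rfl) (fun _ _ => rfl)
    (fun _ _ => rfl)

lemma info2p_pack_updP2u {n : ℕ} (hn : n < M.T) (ω : Traj M) (p : P2S M) (b : M.U2) :
    info2p n (packP2 ω (updP2u n p b)) = info2p n (packP2 ω p) :=
  info2p_congr (fun _ _ => rfl) (fun _ _ => rfl)
    (fun s hs => U2v_pack_updP2u_ne hs hn ω p b)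
    (fun _ _ => rfl) (fun _ _ => rfl) (fun _ _ => rfl) (fun _ _ => rfl)
    (fun _ _ => rfl)

/-! ### marginalizing the control action -/

lemma sum_R1P (σ : TeamStrategy M) {n : ℕ} (hn : n < M.T) (ω : Traj M) (a : M.X1) :
    ∑ b : M.U1, R1P σ n ω a b = (Fintype.card M.U1 : ℝ)⁻¹ * R1f σ n ω a := by
  unfold R1P
  rw [Finset.sum_comm]
  have per_p : ∀ p : P1S M, (∑ b : M.U1, W1 σ n (packP1 ω p) *
      (if X1v (packP1 ω p) n = a then (1:ℝ) else 0) *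
      (if U1v (packP1 ω p) n = b then (1:ℝ) else 0)) =
      (A1pre σ n (packP1 ω p) * σ.f1 n (info1 n (packP1 ω p)) (M1v ω n) *
        zeta1 (packP1 ω p) n *
        (if X1v (packP1 ω p) n = a then (1:ℝ) else 0)) *
      σ.g1 n (info1p n (packP1 ω p)) (U1v (packP1 ω p) n) := by
    intro p
    rw [← Finset.mul_sum]
    have : (∑ b : M.U1, (if U1v (packP1 ω p) n = b then (1:ℝ) else 0)) = 1 := by
      simp
    rw [this, mul_one]
    unfold W1
    have hM : M1v (packP1 ω p) n = M1v ω n := rfl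
    rw [hM]
    ring
  rw [Finset.sum_congr rfl fun p _ => per_p p]
  rw [sum_kernel_elim (updP1u n) (valP1u n) (updP1u_idem n) (updP1u_self n)
    (valP1u_updP1u n)
    (fun p => A1pre σ n (packP1 ω p) * σ.f1 n (info1 n (packP1 ω p)) (M1v ω n) *
      zeta1 (packP1 ω p) n * (if X1v (packP1 ω p) n = a then (1:ℝ) else 0))
    (fun p => σ.g1 n (info1p n (packP1 ω p)) (U1v (packP1 ω p) n))
    (by
      intro p b
      rw [A1pre_pack_updP1u σ hn, info1_pack_updP1u hn,
        zeta1_congr (rfl : Zv (packP1 ω (updP1u n p b)) n = Zv (packP1 ω p) n)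
          (rfl : X1v (packP1 ω (updP1u n p b)) n = X1v (packP1 ω p) n)]
      rfl)
    (by
      intro p
      have harg : ∀ b, σ.g1 n (info1p n (packP1 ω (updP1u n p b)))
          (U1v (packP1 ω (updP1u n p b)) n) =
          σ.g1 n (info1p n (packP1 ω p)) b := by
        intro b
        rw [info1p_pack_updP1u hn, U1v_pack_updP1u_self]
      rw [Finset.sum_congr rfl fun b _ => harg b]
      exact σ.g1_sum n _)]
  rfl

lemma sum_R2P (σ : TeamStrategy M) {n : ℕ} (hn : n < M.T) (ω : Traj M) (a : M.X2) :
    ∑ b : M.U2, R2P σ n ω a b = (Fintype.card M.U2 : ℝ)⁻¹ * R2f σ n ω a := by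
  unfold R2P
  rw [Finset.sum_comm]
  have per_p : ∀ p : P2S M, (∑ b : M.U2, W2 σ n (packP2 ω p) *
      (if X2v (packP2 ω p) n = a then (1:ℝ) else 0) *
      (if U2v (packP2 ω p) n = b then (1:ℝ) else 0)) =
      (A2pre σ n (packP2 ω p) * σ.f2 n (info2 n (packP2 ω p)) (M2v ω n) *
        zeta2 (packP2 ω p) n *
        (if X2v (packP2 ω p) n = a then (1:ℝ) else 0)) *
      σ.g2 n (info2p n (packP2 ω p)) (U2v (packP2 ω p) n) := by
    intro p
    rw [← Finset.mul_sum]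
    have : (∑ b : M.U2, (if U2v (packP2 ω p) n = b then (1:ℝ) else 0)) = 1 := by
      simp
    rw [this, mul_one]
    unfold W2
    have hM : M2v (packP2 ω p) n = M2v ω n := rfl
    rw [hM]
    ring
  rw [Finset.sum_congr rfl fun p _ => per_p p]
  rw [sum_kernel_elim (updP2u n) (valP2u n) (updP2u_idem n) (updP2u_self n)
    (valP2u_updP2u n)
    (fun p => A2pre σ n (packP2 ω p) * σ.f2 n (info2 n (packP2 ω p)) (M2v ω n) *
      zeta2 (packP2 ω p) n * (if X2v (packP2 ω p) n = a then (1:ℝ) else 0))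
    (fun p => σ.g2 n (info2p n (packP2 ω p)) (U2v (packP2 ω p) n))
    (by
      intro p b
      rw [A2pre_pack_updP2u σ hn, info2_pack_updP2u hn,
        zeta2_congr (rfl : Zv (packP2 ω (updP2u n p b)) n = Zv (packP2 ω p) n)
          (rfl : X2v (packP2 ω (updP2u n p b)) n = X2v (packP2 ω p) n)]
      rfl)
    (by
      intro p
      have harg : ∀ b, σ.g2 n (info2p n (packP2 ω (updP2u n p b)))
          (U2v (packP2 ω (updP2u n p b)) n) =
          σ.g2 n (info2p n (packP2 ω p)) b := by
        intro b
        rw [info2p_pack_updP2u hn, U2v_pack_updP2u_self]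
      rw [Finset.sum_congr rfl fun b _ => harg b]
      exact σ.g2_sum n _)]
  rfl

/-! ### zero propagation -/

lemma R1_summand_zero {σ : TeamStrategy M} {n : ℕ} {ω : Traj M} {a : M.X1}
    (h : R1 σ n ω a = 0) (p : P1S M) :
    A1pre σ n (packP1 ω p) * (if X1v (packP1 ω p) n = a then (1:ℝ) else 0) = 0 := by
  have := (Finset.sum_eq_zero_iff_of_nonneg
    (fun p (_ : p ∈ Finset.univ) => mul_nonneg (A1pre_nonneg σ n _) (ind_nonneg _ _))).mp h
  exact this p (Finset.mem_univ p)

lemma R1n_of_R1_zero {σ : TeamStrategy M} {n : ℕ} {ω : Traj M} {a : M.X1}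
    (h : R1 σ n ω a = 0) (m : Bool) : R1n σ n ω a m = 0 := by
  apply Finset.sum_eq_zero
  intro p _
  rcases mul_eq_zero.mp (R1_summand_zero h p) with hA | hI
  · rw [hA]; ring
  · rw [hI]; ring

lemma R1f_of_R1_zero {σ : TeamStrategy M} {n : ℕ} {ω : Traj M} {a : M.X1}
    (h : R1 σ n ω a = 0) : R1f σ n ω a = 0 := by
  apply Finset.sum_eq_zero
  intro p _
  rcases mul_eq_zero.mp (R1_summand_zero h p) with hA | hI
  · rw [hA]; ring
  · rw [hI]; ring

lemma R1f_summand_zero {σ : TeamStrategy M} {n : ℕ} {ω : Traj M} {a : M.X1}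
    (h : R1f σ n ω a = 0) (p : P1S M) :
    A1pre σ n (packP1 ω p) * σ.f1 n (info1 n (packP1 ω p)) (M1v ω n) *
      zeta1 (packP1 ω p) n * (if X1v (packP1 ω p) n = a then (1:ℝ) else 0) = 0 := by
  have := (Finset.sum_eq_zero_iff_of_nonneg
    (fun p (_ : p ∈ Finset.univ) => mul_nonneg (mul_nonneg (mul_nonneg
      (A1pre_nonneg σ n _) (σ.f1_nonneg _ _ _)) (zeta1_nonneg _ _))
      (ind_nonneg _ _))).mp h
  exact this p (Finset.mem_univ p)

lemma R1P_of_R1f_zero {σ : TeamStrategy M} {n : ℕ} {ω : Traj M} {a : M.X1}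
    (h : R1f σ n ω a = 0) (b : M.U1) : R1P σ n ω a b = 0 := by
  apply Finset.sum_eq_zero
  intro p _
  have hz := R1f_summand_zero h p
  unfold W1
  have : A1pre σ n (packP1 ω p) * σ.f1 n (info1 n (packP1 ω p)) (M1v (packP1 ω p) n) *
      zeta1 (packP1 ω p) n * σ.g1 n (info1p n (packP1 ω p)) (U1v (packP1 ω p) n) *
      (if X1v (packP1 ω p) n = a then (1:ℝ) else 0) *
      (if U1v (packP1 ω p) n = b then (1:ℝ) else 0) =
      (A1pre σ n (packP1 ω p) * σ.f1 n (info1 n (packP1 ω p)) (M1v ω n) *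
        zeta1 (packP1 ω p) n * (if X1v (packP1 ω p) n = a then (1:ℝ) else 0)) *
      (σ.g1 n (info1p n (packP1 ω p)) (U1v (packP1 ω p) n) *
        (if U1v (packP1 ω p) n = b then (1:ℝ) else 0)) := by
    have hM : M1v (packP1 ω p) n = M1v ω n := rfl
    rw [hM]; ring
  rw [this, hz]
  ring

lemma R2_summand_zero {σ : TeamStrategy M} {n : ℕ} {ω : Traj M} {a : M.X2}
    (h : R2 σ n ω a = 0) (p : P2S M) :
    A2pre σ n (packP2 ω p) * (if X2v (packP2 ω p) n = a then (1:ℝ) else 0) = 0 := by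
  have := (Finset.sum_eq_zero_iff_of_nonneg
    (fun p (_ : p ∈ Finset.univ) => mul_nonneg (A2pre_nonneg σ n _) (ind_nonneg _ _))).mp h
  exact this p (Finset.mem_univ p)

lemma R2n_of_R2_zero {σ : TeamStrategy M} {n : ℕ} {ω : Traj M} {a : M.X2}
    (h : R2 σ n ω a = 0) (m : Bool) : R2n σ n ω a m = 0 := by
  apply Finset.sum_eq_zero
  intro p _
  rcases mul_eq_zero.mp (R2_summand_zero h p) with hA | hI
  · rw [hA]; ring
  · rw [hI]; ring

lemma R2f_of_R2_zero {σ : TeamStrategy M} {n : ℕ} {ω : Traj M} {a : M.X2}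
    (h : R2 σ n ω a = 0) : R2f σ n ω a = 0 := by
  apply Finset.sum_eq_zero
  intro p _
  rcases mul_eq_zero.mp (R2_summand_zero h p) with hA | hI
  · rw [hA]; ring
  · rw [hI]; ring

lemma R2f_summand_zero {σ : TeamStrategy M} {n : ℕ} {ω : Traj M} {a : M.X2}
    (h : R2f σ n ω a = 0) (p : P2S M) :
    A2pre σ n (packP2 ω p) * σ.f2 n (info2 n (packP2 ω p)) (M2v ω n) *
      zeta2 (packP2 ω p) n * (if X2v (packP2 ω p) n = a then (1:ℝ) else 0) = 0 := by
  have := (Finset.sum_eq_zero_iff_of_nonneg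
    (fun p (_ : p ∈ Finset.univ) => mul_nonneg (mul_nonneg (mul_nonneg
      (A2pre_nonneg σ n _) (σ.f2_nonneg _ _ _)) (zeta2_nonneg _ _))
      (ind_nonneg _ _))).mp h
  exact this p (Finset.mem_univ p)

lemma R2P_of_R2f_zero {σ : TeamStrategy M} {n : ℕ} {ω : Traj M} {a : M.X2}
    (h : R2f σ n ω a = 0) (b : M.U2) : R2P σ n ω a b = 0 := by
  apply Finset.sum_eq_zero
  intro p _
  have hz := R2f_summand_zero h p
  unfold W2
  have : A2pre σ n (packP2 ω p) * σ.f2 n (info2 n (packP2 ω p)) (M2v (packP2 ω p) n) *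
      zeta2 (packP2 ω p) n * σ.g2 n (info2p n (packP2 ω p)) (U2v (packP2 ω p) n) *
      (if X2v (packP2 ω p) n = a then (1:ℝ) else 0) *
      (if U2v (packP2 ω p) n = b then (1:ℝ) else 0) =
      (A2pre σ n (packP2 ω p) * σ.f2 n (info2 n (packP2 ω p)) (M2v ω n) *
        zeta2 (packP2 ω p) n * (if X2v (packP2 ω p) n = a then (1:ℝ) else 0)) *
      (σ.g2 n (info2p n (packP2 ω p)) (U2v (packP2 ω p) n) *
        (if U2v (packP2 ω p) n = b then (1:ℝ) else 0)) := by
    have hM : M2v (packP2 ω p) n = M2v ω n := rfl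
    rw [hM]; ring
  rw [this, hz]
  ring

end TA
namespace TA

variable {M : Model}

/-! ### the reach quantities depend only on the common information -/

lemma R1_congr (σ : TeamStrategy M) {n : ℕ} {ω ω' : Traj M}
    (hx0 : ∀ s, s < n → X0v ω s = X0v ω' s)
    (hm1 : ∀ s, s < n → M1v ω s = M1v ω' s)
    (hm2 : ∀ s, s < n → M2v ω s = M2v ω' s)
    (hz : ∀ s, s < n → Zv ω s = Zv ω' s)
    (hy : ∀ s, s < n → Yv ω s = Yv ω' s)
    (hua : ∀ s, s < n → UAv ω s = UAv ω' s)
    (a : M.X1) : R1 σ n ω a = R1 σ n ω' a := by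
  apply Finset.sum_congr rfl
  intro p _
  rw [A1pre_congr σ (ω := packP1 ω p) (ω' := packP1 ω' p)
    (fun s hs => hx0 s hs) (fun _ _ => rfl) (fun _ _ => rfl)
    (fun s hs => hm1 s hs) (fun s hs => hm2 s hs) (fun s hs => hz s hs)
    (fun s hs => hy s hs) (fun s hs => hua s hs)]
  simp only [X1v_packP1]
  rfl

lemma R1n_congr (σ : TeamStrategy M) {n : ℕ} {ω ω' : Traj M}
    (hx0 : ∀ s, s ≤ n → X0v ω s = X0v ω' s)
    (hm1 : ∀ s, s < n → M1v ω s = M1v ω' s)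
    (hm2 : ∀ s, s < n → M2v ω s = M2v ω' s)
    (hz : ∀ s, s < n → Zv ω s = Zv ω' s)
    (hy : ∀ s, s < n → Yv ω s = Yv ω' s)
    (hua : ∀ s, s < n → UAv ω s = UAv ω' s)
    (a : M.X1) (m : Bool) : R1n σ n ω a m = R1n σ n ω' a m := by
  apply Finset.sum_congr rfl
  intro p _
  rw [A1pre_congr σ (ω := packP1 ω p) (ω' := packP1 ω' p)
    (fun s hs => hx0 s hs.le) (fun _ _ => rfl) (fun _ _ => rfl)
    (fun s hs => hm1 s hs) (fun s hs => hm2 s hs) (fun s hs => hz s hs)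
    (fun s hs => hy s hs) (fun s hs => hua s hs),
    info1_congr (ω := packP1 ω p) (ω' := packP1 ω' p)
    (fun s hs => hx0 s hs) (fun _ _ => rfl) (fun _ _ => rfl)
    (fun s hs => hm1 s hs) (fun s hs => hm2 s hs) (fun s hs => hz s hs)
    (fun s hs => hua s hs) (fun s hs => hy s hs)]
  simp only [X1v_packP1]
  rfl

lemma R1f_congr (σ : TeamStrategy M) {n : ℕ} {ω ω' : Traj M}
    (hx0 : ∀ s, s ≤ n → X0v ω s = X0v ω' s)
    (hm1 : ∀ s, s ≤ n → M1v ω s = M1v ω' s)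
    (hm2 : ∀ s, s < n → M2v ω s = M2v ω' s)
    (hz : ∀ s, s ≤ n → Zv ω s = Zv ω' s)
    (hy : ∀ s, s < n → Yv ω s = Yv ω' s)
    (hua : ∀ s, s < n → UAv ω s = UAv ω' s)
    (a : M.X1) : R1f σ n ω a = R1f σ n ω' a := by
  apply Finset.sum_congr rfl
  intro p _
  rw [A1pre_congr σ (ω := packP1 ω p) (ω' := packP1 ω' p)
    (fun s hs => hx0 s hs.le) (fun _ _ => rfl) (fun _ _ => rfl)
    (fun s hs => hm1 s hs.le) (fun s hs => hm2 s hs) (fun s hs => hz s hs.le)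
    (fun s hs => hy s hs) (fun s hs => hua s hs),
    info1_congr (ω := packP1 ω p) (ω' := packP1 ω' p)
    (fun s hs => hx0 s hs) (fun _ _ => rfl) (fun _ _ => rfl)
    (fun s hs => hm1 s hs.le) (fun s hs => hm2 s hs) (fun s hs => hz s hs.le)
    (fun s hs => hua s hs) (fun s hs => hy s hs),
    hm1 n le_rfl,
    zeta1_congr (ω := packP1 ω p) (ω' := packP1 ω' p) (hz n le_rfl) rfl]
  simp only [X1v_packP1]
  rfl

lemma R1P_congr (σ : TeamStrategy M) {n : ℕ} {ω ω' : Traj M}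
    (hx0 : ∀ s, s ≤ n → X0v ω s = X0v ω' s)
    (hm1 : ∀ s, s ≤ n → M1v ω s = M1v ω' s)
    (hm2 : ∀ s, s ≤ n → M2v ω s = M2v ω' s)
    (hz : ∀ s, s ≤ n → Zv ω s = Zv ω' s)
    (hy : ∀ s, s ≤ n → Yv ω s = Yv ω' s)
    (hua : ∀ s, s < n → UAv ω s = UAv ω' s)
    (a : M.X1) (b : M.U1) : R1P σ n ω a b = R1P σ n ω' a b := by
  apply Finset.sum_congr rfl
  intro p _
  unfold W1
  rw [A1pre_congr σ (ω := packP1 ω p) (ω' := packP1 ω' p)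
    (fun s hs => hx0 s hs.le) (fun _ _ => rfl) (fun _ _ => rfl)
    (fun s hs => hm1 s hs.le) (fun s hs => hm2 s hs.le) (fun s hs => hz s hs.le)
    (fun s hs => hy s hs.le) (fun s hs => hua s hs),
    info1_congr (ω := packP1 ω p) (ω' := packP1 ω' p)
    (fun s hs => hx0 s hs) (fun _ _ => rfl) (fun _ _ => rfl)
    (fun s hs => hm1 s hs.le) (fun s hs => hm2 s hs.le) (fun s hs => hz s hs.le)
    (fun s hs => hua s hs) (fun s hs => hy s hs.le),
    info1p_congr (ω := packP1 ω p) (ω' := packP1 ω' p)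
    (fun s hs => hx0 s hs) (fun _ _ => rfl) (fun _ _ => rfl)
    (fun s hs => hm1 s hs) (fun s hs => hm2 s hs) (fun s hs => hz s hs)
    (fun s hs => hua s hs) (fun s hs => hy s hs),
    zeta1_congr (ω := packP1 ω p) (ω' := packP1 ω' p) (hz n le_rfl) rfl]
  simp only [X1v_packP1, U1v_packP1, M1v_packP1]
  rw [hm1 n le_rfl]
  rfl

lemma R2_congr (σ : TeamStrategy M) {n : ℕ} {ω ω' : Traj M}
    (hx0 : ∀ s, s < n → X0v ω s = X0v ω' s)
    (hm1 : ∀ s, s < n → M1v ω s = M1v ω' s)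
    (hm2 : ∀ s, s < n → M2v ω s = M2v ω' s)
    (hz : ∀ s, s < n → Zv ω s = Zv ω' s)
    (hy : ∀ s, s < n → Yv ω s = Yv ω' s)
    (hua : ∀ s, s < n → UAv ω s = UAv ω' s)
    (a : M.X2) : R2 σ n ω a = R2 σ n ω' a := by
  apply Finset.sum_congr rfl
  intro p _
  rw [A2pre_congr σ (ω := packP2 ω p) (ω' := packP2 ω' p)
    (fun s hs => hx0 s hs) (fun _ _ => rfl) (fun _ _ => rfl)
    (fun s hs => hm1 s hs) (fun s hs => hm2 s hs) (fun s hs => hz s hs)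
    (fun s hs => hy s hs) (fun s hs => hua s hs)]
  simp only [X2v_packP2]
  rfl

lemma R2n_congr (σ : TeamStrategy M) {n : ℕ} {ω ω' : Traj M}
    (hx0 : ∀ s, s ≤ n → X0v ω s = X0v ω' s)
    (hm1 : ∀ s, s < n → M1v ω s = M1v ω' s)
    (hm2 : ∀ s, s < n → M2v ω s = M2v ω' s)
    (hz : ∀ s, s < n → Zv ω s = Zv ω' s)
    (hy : ∀ s, s < n → Yv ω s = Yv ω' s)
    (hua : ∀ s, s < n → UAv ω s = UAv ω' s)
    (a : M.X2) (m : Bool) : R2n σ n ω a m = R2n σ n ω' a m := by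
  apply Finset.sum_congr rfl
  intro p _
  rw [A2pre_congr σ (ω := packP2 ω p) (ω' := packP2 ω' p)
    (fun s hs => hx0 s hs.le) (fun _ _ => rfl) (fun _ _ => rfl)
    (fun s hs => hm1 s hs) (fun s hs => hm2 s hs) (fun s hs => hz s hs)
    (fun s hs => hy s hs) (fun s hs => hua s hs),
    info2_congr (ω := packP2 ω p) (ω' := packP2 ω' p)
    (fun s hs => hx0 s hs) (fun _ _ => rfl) (fun _ _ => rfl)
    (fun s hs => hm1 s hs) (fun s hs => hm2 s hs) (fun s hs => hz s hs)
    (fun s hs => hua s hs) (fun s hs => hy s hs)]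
  simp only [X2v_packP2]
  rfl

lemma R2f_congr (σ : TeamStrategy M) {n : ℕ} {ω ω' : Traj M}
    (hx0 : ∀ s, s ≤ n → X0v ω s = X0v ω' s)
    (hm1 : ∀ s, s < n → M1v ω s = M1v ω' s)
    (hm2 : ∀ s, s ≤ n → M2v ω s = M2v ω' s)
    (hz : ∀ s, s ≤ n → Zv ω s = Zv ω' s)
    (hy : ∀ s, s < n → Yv ω s = Yv ω' s)
    (hua : ∀ s, s < n → UAv ω s = UAv ω' s)
    (a : M.X2) : R2f σ n ω a = R2f σ n ω' a := by
  apply Finset.sum_congr rfl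
  intro p _
  rw [A2pre_congr σ (ω := packP2 ω p) (ω' := packP2 ω' p)
    (fun s hs => hx0 s hs.le) (fun _ _ => rfl) (fun _ _ => rfl)
    (fun s hs => hm1 s hs) (fun s hs => hm2 s hs.le) (fun s hs => hz s hs.le)
    (fun s hs => hy s hs) (fun s hs => hua s hs),
    info2_congr (ω := packP2 ω p) (ω' := packP2 ω' p)
    (fun s hs => hx0 s hs) (fun _ _ => rfl) (fun _ _ => rfl)
    (fun s hs => hm1 s hs) (fun s hs => hm2 s hs.le) (fun s hs => hz s hs.le)
    (fun s hs => hua s hs) (fun s hs => hy s hs),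
    hm2 n le_rfl,
    zeta2_congr (ω := packP2 ω p) (ω' := packP2 ω' p) (hz n le_rfl) rfl]
  simp only [X2v_packP2]
  rfl

lemma R2P_congr (σ : TeamStrategy M) {n : ℕ} {ω ω' : Traj M}
    (hx0 : ∀ s, s ≤ n → X0v ω s = X0v ω' s)
    (hm1 : ∀ s, s ≤ n → M1v ω s = M1v ω' s)
    (hm2 : ∀ s, s ≤ n → M2v ω s = M2v ω' s)
    (hz : ∀ s, s ≤ n → Zv ω s = Zv ω' s)
    (hy : ∀ s, s ≤ n → Yv ω s = Yv ω' s)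
    (hua : ∀ s, s < n → UAv ω s = UAv ω' s)
    (a : M.X2) (b : M.U2) : R2P σ n ω a b = R2P σ n ω' a b := by
  apply Finset.sum_congr rfl
  intro p _
  unfold W2
  rw [A2pre_congr σ (ω := packP2 ω p) (ω' := packP2 ω' p)
    (fun s hs => hx0 s hs.le) (fun _ _ => rfl) (fun _ _ => rfl)
    (fun s hs => hm1 s hs.le) (fun s hs => hm2 s hs.le) (fun s hs => hz s hs.le)
    (fun s hs => hy s hs.le) (fun s hs => hua s hs),
    info2_congr (ω := packP2 ω p) (ω' := packP2 ω' p)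
    (fun s hs => hx0 s hs) (fun _ _ => rfl) (fun _ _ => rfl)
    (fun s hs => hm1 s hs.le) (fun s hs => hm2 s hs.le) (fun s hs => hz s hs.le)
    (fun s hs => hua s hs) (fun s hs => hy s hs.le),
    info2p_congr (ω := packP2 ω p) (ω' := packP2 ω' p)
    (fun s hs => hx0 s hs) (fun _ _ => rfl) (fun _ _ => rfl)
    (fun s hs => hm1 s hs) (fun s hs => hm2 s hs) (fun s hs => hz s hs)
    (fun s hs => hua s hs) (fun s hs => hy s hs),
    zeta2_congr (ω := packP2 ω p) (ω' := packP2 ω' p) (hz n le_rfl) rfl]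
  simp only [X2v_packP2, U2v_packP2, M2v_packP2]
  rw [hm2 n le_rfl]
  rfl

end TA
namespace TA

variable {M : Model}

/-! ### canonical trajectory attached to a common-information realization -/

noncomputable def mkC (ι : HistC M) : Traj M :=
  (fun i => ι.1.getD i (Classical.arbitrary M.X0),
   fun _ => Classical.arbitrary M.X1,
   fun _ => Classical.arbitrary M.X2,
   fun i => (ι.2.1.getD i (false, false)).1,
   fun i => (ι.2.1.getD i (false, false)).2,
   fun i => ι.2.2.1.getD i none,
   fun i => ι.2.2.2.2.getD i (Classical.arbitrary M.Y),
   fun _ => Classical.arbitrary M.U1,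
   fun _ => Classical.arbitrary M.U2,
   fun i => ι.2.2.2.1.getD i (Classical.arbitrary M.Ua))

lemma idx_val {s : ℕ} (hs : s < M.T) : ((idx M s : Fin M.T) : ℕ) = s := by
  rw [idx_of_lt hs]

lemma X0v_mkC_tc {t s : ℕ} (ht : t < M.T) (hs : s ≤ t) (ω : Traj M) :
    X0v (mkC (teamCom t ω)) s = X0v ω s := by
  have hsT : s < M.T := lt_of_le_of_lt hs ht
  have h : X0v (mkC (teamCom t ω)) s =
      (pre (t+1) (X0v ω)).getD ((idx M s : Fin M.T) : ℕ) (Classical.arbitrary M.X0) := rfl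
  rw [h, idx_val hsT, pre_getD (show s < t + 1 by omega)]

lemma M1v_mkC_tc {t s : ℕ} (ht : t < M.T) (hs : s < t) (ω : Traj M) :
    M1v (mkC (teamCom t ω)) s = M1v ω s := by
  have hsT : s < M.T := hs.trans ht
  have h : M1v (mkC (teamCom t ω)) s =
      ((pre t (Mv ω)).getD ((idx M s : Fin M.T) : ℕ) (false, false)).1 := rfl
  rw [h, idx_val hsT, pre_getD hs]
  simp [Mv]

lemma M2v_mkC_tc {t s : ℕ} (ht : t < M.T) (hs : s < t) (ω : Traj M) :
    M2v (mkC (teamCom t ω)) s = M2v ω s := by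
  have hsT : s < M.T := hs.trans ht
  have h : M2v (mkC (teamCom t ω)) s =
      ((pre t (Mv ω)).getD ((idx M s : Fin M.T) : ℕ) (false, false)).2 := rfl
  rw [h, idx_val hsT, pre_getD hs]
  simp [Mv]

lemma Zv_mkC_tc {t s : ℕ} (ht : t < M.T) (hs : s < t) (ω : Traj M) :
    Zv (mkC (teamCom t ω)) s = Zv ω s := by
  have hsT : s < M.T := hs.trans ht
  have h : Zv (mkC (teamCom t ω)) s =
      (pre t (Zv ω)).getD ((idx M s : Fin M.T) : ℕ) none := rfl
  rw [h, idx_val hsT, pre_getD hs]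

lemma Yv_mkC_tc {t s : ℕ} (ht : t < M.T) (hs : s < t) (ω : Traj M) :
    Yv (mkC (teamCom t ω)) s = Yv ω s := by
  have hsT : s < M.T := hs.trans ht
  have h : Yv (mkC (teamCom t ω)) s =
      (pre t (Yv ω)).getD ((idx M s : Fin M.T) : ℕ) (Classical.arbitrary M.Y) := rfl
  rw [h, idx_val hsT, pre_getD hs]

lemma UAv_mkC_tc {t s : ℕ} (ht : t < M.T) (hs : s < t) (ω : Traj M) :
    UAv (mkC (teamCom t ω)) s = UAv ω s := by
  have hsT : s < M.T := hs.trans ht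
  have h : UAv (mkC (teamCom t ω)) s =
      (pre t (UAv ω)).getD ((idx M s : Fin M.T) : ℕ) (Classical.arbitrary M.Ua) := rfl
  rw [h, idx_val hsT, pre_getD hs]

lemma X0v_mkC_tcp {t s : ℕ} (ht : t < M.T) (hs : s ≤ t) (ω : Traj M) :
    X0v (mkC (teamComP t ω)) s = X0v ω s := by
  have hsT : s < M.T := lt_of_le_of_lt hs ht
  have h : X0v (mkC (teamComP t ω)) s =
      (pre (t+1) (X0v ω)).getD ((idx M s : Fin M.T) : ℕ) (Classical.arbitrary M.X0) := rfl
  rw [h, idx_val hsT, pre_getD (show s < t + 1 by omega)]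

lemma M1v_mkC_tcp {t s : ℕ} (ht : t < M.T) (hs : s ≤ t) (ω : Traj M) :
    M1v (mkC (teamComP t ω)) s = M1v ω s := by
  have hsT : s < M.T := lt_of_le_of_lt hs ht
  have h : M1v (mkC (teamComP t ω)) s =
      ((pre (t+1) (Mv ω)).getD ((idx M s : Fin M.T) : ℕ) (false, false)).1 := rfl
  rw [h, idx_val hsT, pre_getD (show s < t + 1 by omega)]
  simp [Mv]

lemma M2v_mkC_tcp {t s : ℕ} (ht : t < M.T) (hs : s ≤ t) (ω : Traj M) :
    M2v (mkC (teamComP t ω)) s = M2v ω s := by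
  have hsT : s < M.T := lt_of_le_of_lt hs ht
  have h : M2v (mkC (teamComP t ω)) s =
      ((pre (t+1) (Mv ω)).getD ((idx M s : Fin M.T) : ℕ) (false, false)).2 := rfl
  rw [h, idx_val hsT, pre_getD (show s < t + 1 by omega)]
  simp [Mv]

lemma Zv_mkC_tcp {t s : ℕ} (ht : t < M.T) (hs : s ≤ t) (ω : Traj M) :
    Zv (mkC (teamComP t ω)) s = Zv ω s := by
  have hsT : s < M.T := lt_of_le_of_lt hs ht
  have h : Zv (mkC (teamComP t ω)) s =
      (pre (t+1) (Zv ω)).getD ((idx M s : Fin M.T) : ℕ) none := rfl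
  rw [h, idx_val hsT, pre_getD (show s < t + 1 by omega)]

lemma Yv_mkC_tcp {t s : ℕ} (ht : t < M.T) (hs : s ≤ t) (ω : Traj M) :
    Yv (mkC (teamComP t ω)) s = Yv ω s := by
  have hsT : s < M.T := lt_of_le_of_lt hs ht
  have h : Yv (mkC (teamComP t ω)) s =
      (pre (t+1) (Yv ω)).getD ((idx M s : Fin M.T) : ℕ) (Classical.arbitrary M.Y) := rfl
  rw [h, idx_val hsT, pre_getD (show s < t + 1 by omega)]

lemma UAv_mkC_tcp {t s : ℕ} (ht : t < M.T) (hs : s < t) (ω : Traj M) :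
    UAv (mkC (teamComP t ω)) s = UAv ω s := by
  have hsT : s < M.T := hs.trans ht
  have h : UAv (mkC (teamComP t ω)) s =
      (pre t (UAv ω)).getD ((idx M s : Fin M.T) : ℕ) (Classical.arbitrary M.Ua) := rfl
  rw [h, idx_val hsT, pre_getD hs]

/-! ### reach quantities through `mkC` -/

lemma R1_mkC (σ : TeamStrategy M) {t : ℕ} (ht : t < M.T) (ω : Traj M) (a : M.X1) :
    R1 σ t (mkC (teamCom t ω)) a = R1 σ t ω a :=
  R1_congr σ (fun s hs => X0v_mkC_tc ht hs.le ω) (fun s hs => M1v_mkC_tc ht hs ω)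
    (fun s hs => M2v_mkC_tc ht hs ω) (fun s hs => Zv_mkC_tc ht hs ω)
    (fun s hs => Yv_mkC_tc ht hs ω) (fun s hs => UAv_mkC_tc ht hs ω) a

lemma R1n_mkC (σ : TeamStrategy M) {t : ℕ} (ht : t < M.T) (ω : Traj M) (a : M.X1)
    (m : Bool) : R1n σ t (mkC (teamCom t ω)) a m = R1n σ t ω a m :=
  R1n_congr σ (fun s hs => X0v_mkC_tc ht hs ω) (fun s hs => M1v_mkC_tc ht hs ω)
    (fun s hs => M2v_mkC_tc ht hs ω) (fun s hs => Zv_mkC_tc ht hs ω)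
    (fun s hs => Yv_mkC_tc ht hs ω) (fun s hs => UAv_mkC_tc ht hs ω) a m

lemma R1f_mkC (σ : TeamStrategy M) {t : ℕ} (ht : t < M.T) (ω : Traj M) (a : M.X1) :
    R1f σ t (mkC (teamComP t ω)) a = R1f σ t ω a :=
  R1f_congr σ (fun s hs => X0v_mkC_tcp ht hs ω) (fun s hs => M1v_mkC_tcp ht hs ω)
    (fun s hs => M2v_mkC_tcp ht hs.le ω) (fun s hs => Zv_mkC_tcp ht hs ω)
    (fun s hs => Yv_mkC_tcp ht hs.le ω) (fun s hs => UAv_mkC_tcp ht hs ω) a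

lemma R1P_mkC (σ : TeamStrategy M) {t : ℕ} (ht : t < M.T) (ω : Traj M) (a : M.X1)
    (b : M.U1) : R1P σ t (mkC (teamComP t ω)) a b = R1P σ t ω a b :=
  R1P_congr σ (fun s hs => X0v_mkC_tcp ht hs ω) (fun s hs => M1v_mkC_tcp ht hs ω)
    (fun s hs => M2v_mkC_tcp ht hs ω) (fun s hs => Zv_mkC_tcp ht hs ω)
    (fun s hs => Yv_mkC_tcp ht hs ω) (fun s hs => UAv_mkC_tcp ht hs ω) a b

lemma R2_mkC (σ : TeamStrategy M) {t : ℕ} (ht : t < M.T) (ω : Traj M) (a : M.X2) :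
    R2 σ t (mkC (teamCom t ω)) a = R2 σ t ω a :=
  R2_congr σ (fun s hs => X0v_mkC_tc ht hs.le ω) (fun s hs => M1v_mkC_tc ht hs ω)
    (fun s hs => M2v_mkC_tc ht hs ω) (fun s hs => Zv_mkC_tc ht hs ω)
    (fun s hs => Yv_mkC_tc ht hs ω) (fun s hs => UAv_mkC_tc ht hs ω) a

lemma R2n_mkC (σ : TeamStrategy M) {t : ℕ} (ht : t < M.T) (ω : Traj M) (a : M.X2)
    (m : Bool) : R2n σ t (mkC (teamCom t ω)) a m = R2n σ t ω a m :=
  R2n_congr σ (fun s hs => X0v_mkC_tc ht hs ω) (fun s hs => M1v_mkC_tc ht hs ω)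
    (fun s hs => M2v_mkC_tc ht hs ω) (fun s hs => Zv_mkC_tc ht hs ω)
    (fun s hs => Yv_mkC_tc ht hs ω) (fun s hs => UAv_mkC_tc ht hs ω) a m

lemma R2f_mkC (σ : TeamStrategy M) {t : ℕ} (ht : t < M.T) (ω : Traj M) (a : M.X2) :
    R2f σ t (mkC (teamComP t ω)) a = R2f σ t ω a :=
  R2f_congr σ (fun s hs => X0v_mkC_tcp ht hs ω) (fun s hs => M1v_mkC_tcp ht hs.le ω)
    (fun s hs => M2v_mkC_tcp ht hs ω) (fun s hs => Zv_mkC_tcp ht hs ω)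
    (fun s hs => Yv_mkC_tcp ht hs.le ω) (fun s hs => UAv_mkC_tcp ht hs ω) a

lemma R2P_mkC (σ : TeamStrategy M) {t : ℕ} (ht : t < M.T) (ω : Traj M) (a : M.X2)
    (b : M.U2) : R2P σ t (mkC (teamComP t ω)) a b = R2P σ t ω a b :=
  R2P_congr σ (fun s hs => X0v_mkC_tcp ht hs ω) (fun s hs => M1v_mkC_tcp ht hs ω)
    (fun s hs => M2v_mkC_tcp ht hs ω) (fun s hs => Zv_mkC_tcp ht hs ω)
    (fun s hs => Yv_mkC_tcp ht hs ω) (fun s hs => UAv_mkC_tcp ht hs ω) a b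

end TA
namespace TA

variable {M : Model}

/-! ### the lumped strategy -/

noncomputable def fbar1 (σ : TeamStrategy M) (t : ℕ) (ι : HistC M) (a : M.X1)
    (m : Bool) : ℝ :=
  if 0 < R1 σ t (mkC ι) a then R1n σ t (mkC ι) a m / R1 σ t (mkC ι) a else 2⁻¹

noncomputable def gbar1 (σ : TeamStrategy M) (t : ℕ) (ι : HistC M) (a : M.X1)
    (b : M.U1) : ℝ :=
  if 0 < R1f σ t (mkC ι) a then
    (Fintype.card M.U1 : ℝ) * R1P σ t (mkC ι) a b / R1f σ t (mkC ι) a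
  else (Fintype.card M.U1 : ℝ)⁻¹

noncomputable def fbar2 (σ : TeamStrategy M) (t : ℕ) (ι : HistC M) (a : M.X2)
    (m : Bool) : ℝ :=
  if 0 < R2 σ t (mkC ι) a then R2n σ t (mkC ι) a m / R2 σ t (mkC ι) a else 2⁻¹

noncomputable def gbar2 (σ : TeamStrategy M) (t : ℕ) (ι : HistC M) (a : M.X2)
    (b : M.U2) : ℝ :=
  if 0 < R2f σ t (mkC ι) a then
    (Fintype.card M.U2 : ℝ) * R2P σ t (mkC ι) a b / R2f σ t (mkC ι) a
  else (Fintype.card M.U2 : ℝ)⁻¹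

def extrC1 (h : Hist1 M) : HistC M :=
  (h.1, h.2.2.2.1, h.2.2.2.2.1, h.2.2.2.2.2.1, h.2.2.2.2.2.2)
noncomputable def extrX1 (t : ℕ) (h : Hist1 M) : M.X1 :=
  h.2.1.getD t (Classical.arbitrary M.X1)
def extrC2 (h : Hist2 M) : HistC M :=
  (h.1, h.2.2.2.1, h.2.2.2.2.1, h.2.2.2.2.2.1, h.2.2.2.2.2.2)
noncomputable def extrX2 (t : ℕ) (h : Hist2 M) : M.X2 :=
  h.2.1.getD t (Classical.arbitrary M.X2)

lemma extrC1_info1 (t : ℕ) (ω : Traj M) : extrC1 (info1 t ω) = teamCom t ω := rfl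
lemma extrC1_info1p (t : ℕ) (ω : Traj M) : extrC1 (info1p t ω) = teamComP t ω := rfl
lemma extrC2_info2 (t : ℕ) (ω : Traj M) : extrC2 (info2 t ω) = teamCom t ω := rfl
lemma extrC2_info2p (t : ℕ) (ω : Traj M) : extrC2 (info2p t ω) = teamComP t ω := rfl

lemma extrX1_info1 (t : ℕ) (ω : Traj M) : extrX1 t (info1 t ω) = X1v ω t := by
  unfold extrX1 info1
  exact pre_getD (by omega) _ _

lemma extrX1_info1p (t : ℕ) (ω : Traj M) : extrX1 t (info1p t ω) = X1v ω t := by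
  unfold extrX1 info1p
  exact pre_getD (by omega) _ _

lemma extrX2_info2 (t : ℕ) (ω : Traj M) : extrX2 t (info2 t ω) = X2v ω t := by
  unfold extrX2 info2
  exact pre_getD (by omega) _ _

lemma extrX2_info2p (t : ℕ) (ω : Traj M) : extrX2 t (info2p t ω) = X2v ω t := by
  unfold extrX2 info2p
  exact pre_getD (by omega) _ _

noncomputable def sigmaBar (σ : TeamStrategy M) : TeamStrategy M where
  f1 := fun t h m => fbar1 σ t (extrC1 h) (extrX1 t h) m
  f2 := fun t h m => fbar2 σ t (extrC2 h) (extrX2 t h) m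
  g1 := fun t h b =>
    if t < M.T then gbar1 σ t (extrC1 h) (extrX1 t h) b
    else (Fintype.card M.U1 : ℝ)⁻¹
  g2 := fun t h b =>
    if t < M.T then gbar2 σ t (extrC2 h) (extrX2 t h) b
    else (Fintype.card M.U2 : ℝ)⁻¹
  f1_nonneg := by
    intro t h m
    unfold fbar1
    split_ifs with hpos
    · exact div_nonneg (R1n_nonneg σ t _ _ m) hpos.le
    · norm_num
  f2_nonneg := by
    intro t h m
    unfold fbar2
    split_ifs with hpos
    · exact div_nonneg (R2n_nonneg σ t _ _ m) hpos.le
    · norm_num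
  g1_nonneg := by
    intro t h b
    split_ifs with ht
    · unfold gbar1
      split_ifs with hpos
      · apply div_nonneg _ hpos.le
        exact mul_nonneg (by positivity) (R1P_nonneg σ t _ _ b)
      · positivity
    · positivity
  g2_nonneg := by
    intro t h b
    split_ifs with ht
    · unfold gbar2
      split_ifs with hpos
      · apply div_nonneg _ hpos.le
        exact mul_nonneg (by positivity) (R2P_nonneg σ t _ _ b)
      · positivity
    · positivity
  f1_sum := by
    intro t h
    by_cases hpos : 0 < R1 σ t (mkC (extrC1 h)) (extrX1 t h)
    · simp only [fbar1, if_pos hpos]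
      rw [← Finset.sum_div, sum_R1n, div_self hpos.ne']
    · simp only [fbar1, if_neg hpos]
      rw [Finset.sum_const]
      simp
  f2_sum := by
    intro t h
    by_cases hpos : 0 < R2 σ t (mkC (extrC2 h)) (extrX2 t h)
    · simp only [fbar2, if_pos hpos]
      rw [← Finset.sum_div, sum_R2n, div_self hpos.ne']
    · simp only [fbar2, if_neg hpos]
      rw [Finset.sum_const]
      simp
  g1_sum := by
    intro t h
    have hc : (Fintype.card M.U1 : ℝ) ≠ 0 := by
      simp [Fintype.card_ne_zero]
    by_cases ht : t < M.T
    · simp only [if_pos ht]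
      by_cases hpos : 0 < R1f σ t (mkC (extrC1 h)) (extrX1 t h)
      · simp only [gbar1, if_pos hpos]
        rw [← Finset.sum_div, ← Finset.mul_sum, sum_R1P σ ht]
        field_simp
      · simp only [gbar1, if_neg hpos]
        rw [Finset.sum_const]
        simp [Finset.card_univ]
    · simp only [if_neg ht]
      rw [Finset.sum_const]
      simp [Finset.card_univ]
  g2_sum := by
    intro t h
    have hc : (Fintype.card M.U2 : ℝ) ≠ 0 := by
      simp [Fintype.card_ne_zero]
    by_cases ht : t < M.T
    · simp only [if_pos ht]
      by_cases hpos : 0 < R2f σ t (mkC (extrC2 h)) (extrX2 t h)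
      · simp only [gbar2, if_pos hpos]
        rw [← Finset.sum_div, ← Finset.mul_sum, sum_R2P σ ht]
        field_simp
      · simp only [gbar2, if_neg hpos]
        rw [Finset.sum_const]
        simp [Finset.card_univ]
    · simp only [if_neg ht]
      rw [Finset.sum_const]
      simp [Finset.card_univ]

end TA
namespace TA

variable {M : Model}

lemma teamCom_packP1 (t : ℕ) (ω : Traj M) (p : P1S M) :
    teamCom t (packP1 ω p) = teamCom t ω := rfl
lemma teamComP_packP1 (t : ℕ) (ω : Traj M) (p : P1S M) :
    teamComP t (packP1 ω p) = teamComP t ω := rfl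
lemma teamCom_packP2 (t : ℕ) (ω : Traj M) (p : P2S M) :
    teamCom t (packP2 ω p) = teamCom t ω := rfl
lemma teamComP_packP2 (t : ℕ) (ω : Traj M) (p : P2S M) :
    teamComP t (packP2 ω p) = teamComP t ω := rfl

lemma sigmaBar_f1_eval (σ : TeamStrategy M) (n : ℕ) (ω' : Traj M) (m : Bool) :
    (sigmaBar σ).f1 n (info1 n ω') m = fbar1 σ n (teamCom n ω') (X1v ω' n) m := by
  show fbar1 σ n (extrC1 (info1 n ω')) (extrX1 n (info1 n ω')) m = _
  rw [extrC1_info1, extrX1_info1]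

lemma sigmaBar_f2_eval (σ : TeamStrategy M) (n : ℕ) (ω' : Traj M) (m : Bool) :
    (sigmaBar σ).f2 n (info2 n ω') m = fbar2 σ n (teamCom n ω') (X2v ω' n) m := by
  show fbar2 σ n (extrC2 (info2 n ω')) (extrX2 n (info2 n ω')) m = _
  rw [extrC2_info2, extrX2_info2]

lemma sigmaBar_g1_eval (σ : TeamStrategy M) {n : ℕ} (hn : n < M.T) (ω' : Traj M)
    (b : M.U1) :
    (sigmaBar σ).g1 n (info1p n ω') b = gbar1 σ n (teamComP n ω') (X1v ω' n) b := by
  show (if n < M.T then gbar1 σ n (extrC1 (info1p n ω')) (extrX1 n (info1p n ω')) b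
    else _) = _
  rw [if_pos hn, extrC1_info1p, extrX1_info1p]

lemma sigmaBar_g2_eval (σ : TeamStrategy M) {n : ℕ} (hn : n < M.T) (ω' : Traj M)
    (b : M.U2) :
    (sigmaBar σ).g2 n (info2p n ω') b = gbar2 σ n (teamComP n ω') (X2v ω' n) b := by
  show (if n < M.T then gbar2 σ n (extrC2 (info2p n ω')) (extrX2 n (info2p n ω')) b
    else _) = _
  rw [if_pos hn, extrC2_info2p, extrX2_info2p]

/-! ### the filtered communication weight -/

noncomputable def zetaA (ω : Traj M) (n : ℕ) (a : M.X1) : ℝ :=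
  match Zv ω n with
  | none => 1
  | some q => if q.1 = a then 1 else 0

noncomputable def zetaB (ω : Traj M) (n : ℕ) (a : M.X2) : ℝ :=
  match Zv ω n with
  | none => 1
  | some q => if q.2 = a then 1 else 0

lemma zeta1_ind (ω : Traj M) (p : P1S M) (n : ℕ) (a : M.X1) :
    zeta1 (packP1 ω p) n * (if X1v (packP1 ω p) n = a then (1:ℝ) else 0) =
    zetaA ω n a * (if X1v (packP1 ω p) n = a then (1:ℝ) else 0) := by
  by_cases h : X1v (packP1 ω p) n = a
  · rw [if_pos h]
    unfold zeta1 zetaA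
    rw [show Zv (packP1 ω p) n = Zv ω n from rfl, ← h]
  · rw [if_neg h, mul_zero, mul_zero]

lemma zeta2_ind (ω : Traj M) (p : P2S M) (n : ℕ) (a : M.X2) :
    zeta2 (packP2 ω p) n * (if X2v (packP2 ω p) n = a then (1:ℝ) else 0) =
    zetaB ω n a * (if X2v (packP2 ω p) n = a then (1:ℝ) else 0) := by
  by_cases h : X2v (packP2 ω p) n = a
  · rw [if_pos h]
    unfold zeta2 zetaB
    rw [show Zv (packP2 ω p) n = Zv ω n from rfl, ← h]
  · rw [if_neg h, mul_zero, mul_zero]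

/-! ### structural identities for the reach quantities -/

lemma R1f_eq_zetaA (σ' : TeamStrategy M) (n : ℕ) (ω : Traj M) (a : M.X1) :
    R1f σ' n ω a = zetaA ω n a * R1n σ' n ω a (M1v ω n) := by
  unfold R1f R1n
  rw [Finset.mul_sum]
  apply Finset.sum_congr rfl
  intro p _
  have := zeta1_ind ω p n a
  calc A1pre σ' n (packP1 ω p) * σ'.f1 n (info1 n (packP1 ω p)) (M1v ω n) *
      zeta1 (packP1 ω p) n * (if X1v (packP1 ω p) n = a then (1:ℝ) else 0)
      = (A1pre σ' n (packP1 ω p) * σ'.f1 n (info1 n (packP1 ω p)) (M1v ω n)) *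
        (zeta1 (packP1 ω p) n * (if X1v (packP1 ω p) n = a then (1:ℝ) else 0)) := by
        ring
    _ = (A1pre σ' n (packP1 ω p) * σ'.f1 n (info1 n (packP1 ω p)) (M1v ω n)) *
        (zetaA ω n a * (if X1v (packP1 ω p) n = a then (1:ℝ) else 0)) := by rw [this]
    _ = zetaA ω n a * (A1pre σ' n (packP1 ω p) *
          σ'.f1 n (info1 n (packP1 ω p)) (M1v ω n) *
          (if X1v (packP1 ω p) n = a then (1:ℝ) else 0)) := by ring

lemma R2f_eq_zetaB (σ' : TeamStrategy M) (n : ℕ) (ω : Traj M) (a : M.X2) :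
    R2f σ' n ω a = zetaB ω n a * R2n σ' n ω a (M2v ω n) := by
  unfold R2f R2n
  rw [Finset.mul_sum]
  apply Finset.sum_congr rfl
  intro p _
  have := zeta2_ind ω p n a
  calc A2pre σ' n (packP2 ω p) * σ'.f2 n (info2 n (packP2 ω p)) (M2v ω n) *
      zeta2 (packP2 ω p) n * (if X2v (packP2 ω p) n = a then (1:ℝ) else 0)
      = (A2pre σ' n (packP2 ω p) * σ'.f2 n (info2 n (packP2 ω p)) (M2v ω n)) *
        (zeta2 (packP2 ω p) n * (if X2v (packP2 ω p) n = a then (1:ℝ) else 0)) := by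
        ring
    _ = (A2pre σ' n (packP2 ω p) * σ'.f2 n (info2 n (packP2 ω p)) (M2v ω n)) *
        (zetaB ω n a * (if X2v (packP2 ω p) n = a then (1:ℝ) else 0)) := by rw [this]
    _ = zetaB ω n a * (A2pre σ' n (packP2 ω p) *
          σ'.f2 n (info2 n (packP2 ω p)) (M2v ω n) *
          (if X2v (packP2 ω p) n = a then (1:ℝ) else 0)) := by ring

lemma R1n_sigmaBar (σ : TeamStrategy M) (n : ℕ) (ω : Traj M) (a : M.X1) (m : Bool) :
    R1n (sigmaBar σ) n ω a m =
      fbar1 σ n (teamCom n ω) a m * R1 (sigmaBar σ) n ω a := by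
  unfold R1n R1
  rw [Finset.mul_sum]
  apply Finset.sum_congr rfl
  intro p _
  rw [sigmaBar_f1_eval σ n (packP1 ω p) m, teamCom_packP1]
  by_cases h : X1v (packP1 ω p) n = a
  · rw [h]
    ring
  · rw [if_neg h]
    ring

lemma R2n_sigmaBar (σ : TeamStrategy M) (n : ℕ) (ω : Traj M) (a : M.X2) (m : Bool) :
    R2n (sigmaBar σ) n ω a m =
      fbar2 σ n (teamCom n ω) a m * R2 (sigmaBar σ) n ω a := by
  unfold R2n R2
  rw [Finset.mul_sum]
  apply Finset.sum_congr rfl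
  intro p _
  rw [sigmaBar_f2_eval σ n (packP2 ω p) m, teamCom_packP2]
  by_cases h : X2v (packP2 ω p) n = a
  · rw [h]
    ring
  · rw [if_neg h]
    ring

end TA
namespace TA

variable {M : Model}

/-! ### matching of the communication reach quantities -/

lemma MRn1 (σ : TeamStrategy M) {n : ℕ} (hn : n < M.T)
    (hMR : ∀ ω a, R1 (sigmaBar σ) n ω a = R1 σ n ω a)
    (ω : Traj M) (a : M.X1) (m : Bool) :
    R1n (sigmaBar σ) n ω a m = R1n σ n ω a m := by
  rw [R1n_sigmaBar, hMR ω a]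
  unfold fbar1
  by_cases hpos : 0 < R1 σ n (mkC (teamCom n ω)) a
  · rw [if_pos hpos, R1n_mkC σ hn, R1_mkC σ hn]
    rw [R1_mkC σ hn] at hpos
    rw [div_mul_cancel₀ _ hpos.ne']
  · rw [if_neg hpos]
    rw [R1_mkC σ hn] at hpos
    have h0 : R1 σ n ω a = 0 :=
      le_antisymm (not_lt.mp hpos) (R1_nonneg σ n ω a)
    rw [h0, mul_zero, R1n_of_R1_zero h0]

lemma MRn2 (σ : TeamStrategy M) {n : ℕ} (hn : n < M.T)
    (hMR : ∀ ω a, R2 (sigmaBar σ) n ω a = R2 σ n ω a)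
    (ω : Traj M) (a : M.X2) (m : Bool) :
    R2n (sigmaBar σ) n ω a m = R2n σ n ω a m := by
  rw [R2n_sigmaBar, hMR ω a]
  unfold fbar2
  by_cases hpos : 0 < R2 σ n (mkC (teamCom n ω)) a
  · rw [if_pos hpos, R2n_mkC σ hn, R2_mkC σ hn]
    rw [R2_mkC σ hn] at hpos
    rw [div_mul_cancel₀ _ hpos.ne']
  · rw [if_neg hpos]
    rw [R2_mkC σ hn] at hpos
    have h0 : R2 σ n ω a = 0 :=
      le_antisymm (not_lt.mp hpos) (R2_nonneg σ n ω a)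
    rw [h0, mul_zero, R2n_of_R2_zero h0]

lemma MRf1 (σ : TeamStrategy M) {n : ℕ} (hn : n < M.T)
    (hMR : ∀ ω a, R1 (sigmaBar σ) n ω a = R1 σ n ω a)
    (ω : Traj M) (a : M.X1) :
    R1f (sigmaBar σ) n ω a = R1f σ n ω a := by
  rw [R1f_eq_zetaA, R1f_eq_zetaA, MRn1 σ hn hMR ω a]

lemma MRf2 (σ : TeamStrategy M) {n : ℕ} (hn : n < M.T)
    (hMR : ∀ ω a, R2 (sigmaBar σ) n ω a = R2 σ n ω a)
    (ω : Traj M) (a : M.X2) :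
    R2f (sigmaBar σ) n ω a = R2f σ n ω a := by
  rw [R2f_eq_zetaB, R2f_eq_zetaB, MRn2 σ hn hMR ω a]

/-! ### structure of `R1P` under the lumped strategy -/

lemma R1P_sigmaBar (σ : TeamStrategy M) {n : ℕ} (hn : n < M.T)
    (ω : Traj M) (a : M.X1) (b : M.U1) :
    R1P (sigmaBar σ) n ω a b =
      gbar1 σ n (teamComP n ω) a b *
        ((Fintype.card M.U1 : ℝ)⁻¹ * R1f (sigmaBar σ) n ω a) := by
  have per_p : ∀ p : P1S M,
      W1 (sigmaBar σ) n (packP1 ω p) *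
        (if X1v (packP1 ω p) n = a then (1:ℝ) else 0) *
        (if U1v (packP1 ω p) n = b then (1:ℝ) else 0) =
      gbar1 σ n (teamComP n ω) a b *
        ((A1pre (sigmaBar σ) n (packP1 ω p) *
          (sigmaBar σ).f1 n (info1 n (packP1 ω p)) (M1v ω n) *
          zeta1 (packP1 ω p) n *
          (if X1v (packP1 ω p) n = a then (1:ℝ) else 0)) *
          (if U1v (packP1 ω p) n = b then (1:ℝ) else 0)) := by
    intro p
    unfold W1
    rw [sigmaBar_g1_eval σ hn (packP1 ω p), teamComP_packP1]
    have hM : M1v (packP1 ω p) n = M1v ω n := rfl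
    rw [hM]
    by_cases h1 : X1v (packP1 ω p) n = a
    · by_cases h2 : U1v (packP1 ω p) n = b
      · rw [h1, h2]
        ring
      · rw [if_neg h2]
        ring
    · rw [if_neg h1]
      ring
  unfold R1P
  rw [Finset.sum_congr rfl fun p _ => per_p p, ← Finset.mul_sum]
  congr 1
  rw [sum_pin (updP1u n) (fun p => U1v (packP1 ω p) n) (updP1u_idem n)
    (updP1u_self n) (fun p c => U1v_pack_updP1u_self n ω p c)
    (fun p => A1pre (sigmaBar σ) n (packP1 ω p) *
      (sigmaBar σ).f1 n (info1 n (packP1 ω p)) (M1v ω n) *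
      zeta1 (packP1 ω p) n * (if X1v (packP1 ω p) n = a then (1:ℝ) else 0))
    (by
      intro p c
      rw [A1pre_pack_updP1u (sigmaBar σ) hn, info1_pack_updP1u hn,
        zeta1_congr (rfl : Zv (packP1 ω (updP1u n p c)) n = Zv (packP1 ω p) n)
          (rfl : X1v (packP1 ω (updP1u n p c)) n = X1v (packP1 ω p) n)]
      rfl) b]
  rfl

lemma R2P_sigmaBar (σ : TeamStrategy M) {n : ℕ} (hn : n < M.T)
    (ω : Traj M) (a : M.X2) (b : M.U2) :
    R2P (sigmaBar σ) n ω a b =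
      gbar2 σ n (teamComP n ω) a b *
        ((Fintype.card M.U2 : ℝ)⁻¹ * R2f (sigmaBar σ) n ω a) := by
  have per_p : ∀ p : P2S M,
      W2 (sigmaBar σ) n (packP2 ω p) *
        (if X2v (packP2 ω p) n = a then (1:ℝ) else 0) *
        (if U2v (packP2 ω p) n = b then (1:ℝ) else 0) =
      gbar2 σ n (teamComP n ω) a b *
        ((A2pre (sigmaBar σ) n (packP2 ω p) *
          (sigmaBar σ).f2 n (info2 n (packP2 ω p)) (M2v ω n) *
          zeta2 (packP2 ω p) n *
          (if X2v (packP2 ω p) n = a then (1:ℝ) else 0)) *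
          (if U2v (packP2 ω p) n = b then (1:ℝ) else 0)) := by
    intro p
    unfold W2
    rw [sigmaBar_g2_eval σ hn (packP2 ω p), teamComP_packP2]
    have hM : M2v (packP2 ω p) n = M2v ω n := rfl
    rw [hM]
    by_cases h1 : X2v (packP2 ω p) n = a
    · by_cases h2 : U2v (packP2 ω p) n = b
      · rw [h1, h2]
        ring
      · rw [if_neg h2]
        ring
    · rw [if_neg h1]
      ring
  unfold R2P
  rw [Finset.sum_congr rfl fun p _ => per_p p, ← Finset.mul_sum]
  congr 1
  rw [sum_pin (updP2u n) (fun p => U2v (packP2 ω p) n) (updP2u_idem n)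
    (updP2u_self n) (fun p c => U2v_pack_updP2u_self n ω p c)
    (fun p => A2pre (sigmaBar σ) n (packP2 ω p) *
      (sigmaBar σ).f2 n (info2 n (packP2 ω p)) (M2v ω n) *
      zeta2 (packP2 ω p) n * (if X2v (packP2 ω p) n = a then (1:ℝ) else 0))
    (by
      intro p c
      rw [A2pre_pack_updP2u (sigmaBar σ) hn, info2_pack_updP2u hn,
        zeta2_congr (rfl : Zv (packP2 ω (updP2u n p c)) n = Zv (packP2 ω p) n)
          (rfl : X2v (packP2 ω (updP2u n p c)) n = X2v (packP2 ω p) n)]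
      rfl) b]
  rfl

lemma MRP1 (σ : TeamStrategy M) {n : ℕ} (hn : n < M.T)
    (hMR : ∀ ω a, R1 (sigmaBar σ) n ω a = R1 σ n ω a)
    (ω : Traj M) (a : M.X1) (b : M.U1) :
    R1P (sigmaBar σ) n ω a b = R1P σ n ω a b := by
  have hc : (Fintype.card M.U1 : ℝ) ≠ 0 := by
    simp [Fintype.card_ne_zero]
  rw [R1P_sigmaBar σ hn ω a b, MRf1 σ hn hMR ω a]
  unfold gbar1
  by_cases hpos : 0 < R1f σ n (mkC (teamComP n ω)) a
  · rw [if_pos hpos, R1P_mkC σ hn, R1f_mkC σ hn]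
    rw [R1f_mkC σ hn] at hpos
    field_simp
  · rw [if_neg hpos]
    rw [R1f_mkC σ hn] at hpos
    have h0 : R1f σ n ω a = 0 :=
      le_antisymm (not_lt.mp hpos) (R1f_nonneg σ n ω a)
    rw [h0, R1P_of_R1f_zero h0 b]
    ring

lemma MRP2 (σ : TeamStrategy M) {n : ℕ} (hn : n < M.T)
    (hMR : ∀ ω a, R2 (sigmaBar σ) n ω a = R2 σ n ω a)
    (ω : Traj M) (a : M.X2) (b : M.U2) :
    R2P (sigmaBar σ) n ω a b = R2P σ n ω a b := by
  have hc : (Fintype.card M.U2 : ℝ) ≠ 0 := by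
    simp [Fintype.card_ne_zero]
  rw [R2P_sigmaBar σ hn ω a b, MRf2 σ hn hMR ω a]
  unfold gbar2
  by_cases hpos : 0 < R2f σ n (mkC (teamComP n ω)) a
  · rw [if_pos hpos, R2P_mkC σ hn, R2f_mkC σ hn]
    rw [R2f_mkC σ hn] at hpos
    field_simp
  · rw [if_neg hpos]
    rw [R2f_mkC σ hn] at hpos
    have h0 : R2f σ n ω a = 0 :=
      le_antisymm (not_lt.mp hpos) (R2f_nonneg σ n ω a)
    rw [h0, R2P_of_R2f_zero h0 b]
    ring

end TA
namespace TA

variable {M : Model}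

/-! ### one-step recursion for the reach probability -/

lemma A1pre_succ (σ' : TeamStrategy M) (n : ℕ) (ω : Traj M) :
    A1pre σ' (n+1) ω = A1pre σ' n ω * A1stage σ' n ω := by
  unfold A1pre
  rw [Finset.prod_range_succ]
  ring

lemma A2pre_succ (σ' : TeamStrategy M) (n : ℕ) (ω : Traj M) :
    A2pre σ' (n+1) ω = A2pre σ' n ω * A2stage σ' n ω := by
  unfold A2pre
  rw [Finset.prod_range_succ]
  ring

lemma X1v_pack_updP1x_ne {k s : ℕ} (hs : s < M.T) (hk : k < M.T) (hne : s ≠ k)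
    (ω : Traj M) (p : P1S M) (v : M.X1) :
    X1v (packP1 ω (updP1x k p v)) s = X1v (packP1 ω p) s := by
  simp [X1v_packP1, updP1x, Function.update_of_ne (idx_inj hs hk hne)]

lemma X2v_pack_updP2x_ne {k s : ℕ} (hs : s < M.T) (hk : k < M.T) (hne : s ≠ k)
    (ω : Traj M) (p : P2S M) (v : M.X2) :
    X2v (packP2 ω (updP2x k p v)) s = X2v (packP2 ω p) s := by
  simp [X2v_packP2, updP2x, Function.update_of_ne (idx_inj hs hk hne)]

lemma A1pre_pack_updP1x (σ' : TeamStrategy M) {n : ℕ} (hn1 : n + 1 < M.T)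
    (ω : Traj M) (p : P1S M) (v : M.X1) :
    A1pre σ' n (packP1 ω (updP1x (n+1) p v)) = A1pre σ' n (packP1 ω p) :=
  A1pre_congr σ' (fun _ _ => rfl)
    (fun s hs => X1v_pack_updP1x_ne (by omega) hn1 (by omega) ω p v)
    (fun _ _ => rfl) (fun _ _ => rfl) (fun _ _ => rfl) (fun _ _ => rfl)
    (fun _ _ => rfl) (fun _ _ => rfl)

lemma A2pre_pack_updP2x (σ' : TeamStrategy M) {n : ℕ} (hn1 : n + 1 < M.T)
    (ω : Traj M) (p : P2S M) (v : M.X2) :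
    A2pre σ' n (packP2 ω (updP2x (n+1) p v)) = A2pre σ' n (packP2 ω p) :=
  A2pre_congr σ' (fun _ _ => rfl)
    (fun s hs => X2v_pack_updP2x_ne (by omega) hn1 (by omega) ω p v)
    (fun _ _ => rfl) (fun _ _ => rfl) (fun _ _ => rfl) (fun _ _ => rfl)
    (fun _ _ => rfl) (fun _ _ => rfl)

lemma info1_pack_updP1x {n : ℕ} (hn1 : n + 1 < M.T)
    (ω : Traj M) (p : P1S M) (v : M.X1) :
    info1 n (packP1 ω (updP1x (n+1) p v)) = info1 n (packP1 ω p) :=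
  info1_congr (fun _ _ => rfl)
    (fun s hs => X1v_pack_updP1x_ne (by omega) hn1 (by omega) ω p v)
    (fun _ _ => rfl) (fun _ _ => rfl) (fun _ _ => rfl) (fun _ _ => rfl)
    (fun _ _ => rfl) (fun _ _ => rfl)

lemma info1p_pack_updP1x {n : ℕ} (hn1 : n + 1 < M.T)
    (ω : Traj M) (p : P1S M) (v : M.X1) :
    info1p n (packP1 ω (updP1x (n+1) p v)) = info1p n (packP1 ω p) :=
  info1p_congr (fun _ _ => rfl)
    (fun s hs => X1v_pack_updP1x_ne (by omega) hn1 (by omega) ω p v)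
    (fun _ _ => rfl) (fun _ _ => rfl) (fun _ _ => rfl) (fun _ _ => rfl)
    (fun _ _ => rfl) (fun _ _ => rfl)

lemma info2_pack_updP2x {n : ℕ} (hn1 : n + 1 < M.T)
    (ω : Traj M) (p : P2S M) (v : M.X2) :
    info2 n (packP2 ω (updP2x (n+1) p v)) = info2 n (packP2 ω p) :=
  info2_congr (fun _ _ => rfl)
    (fun s hs => X2v_pack_updP2x_ne (by omega) hn1 (by omega) ω p v)
    (fun _ _ => rfl) (fun _ _ => rfl) (fun _ _ => rfl) (fun _ _ => rfl)
    (fun _ _ => rfl) (fun _ _ => rfl)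

lemma info2p_pack_updP2x {n : ℕ} (hn1 : n + 1 < M.T)
    (ω : Traj M) (p : P2S M) (v : M.X2) :
    info2p n (packP2 ω (updP2x (n+1) p v)) = info2p n (packP2 ω p) :=
  info2p_congr (fun _ _ => rfl)
    (fun s hs => X2v_pack_updP2x_ne (by omega) hn1 (by omega) ω p v)
    (fun _ _ => rfl) (fun _ _ => rfl) (fun _ _ => rfl) (fun _ _ => rfl)
    (fun _ _ => rfl) (fun _ _ => rfl)

lemma W1_pack_updP1x (σ' : TeamStrategy M) {n : ℕ} (hn1 : n + 1 < M.T)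
    (ω : Traj M) (p : P1S M) (v : M.X1) :
    W1 σ' n (packP1 ω (updP1x (n+1) p v)) = W1 σ' n (packP1 ω p) := by
  have hn : n < M.T := by omega
  unfold W1
  rw [A1pre_pack_updP1x σ' hn1, info1_pack_updP1x hn1, info1p_pack_updP1x hn1,
    zeta1_congr (ω := packP1 ω (updP1x (n+1) p v)) (ω' := packP1 ω p) rfl
      (X1v_pack_updP1x_ne hn hn1 (by omega) ω p v)]
  simp only [M1v_packP1, U1v_packP1, updP1x]

lemma W2_pack_updP2x (σ' : TeamStrategy M) {n : ℕ} (hn1 : n + 1 < M.T)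
    (ω : Traj M) (p : P2S M) (v : M.X2) :
    W2 σ' n (packP2 ω (updP2x (n+1) p v)) = W2 σ' n (packP2 ω p) := by
  have hn : n < M.T := by omega
  unfold W2
  rw [A2pre_pack_updP2x σ' hn1, info2_pack_updP2x hn1, info2p_pack_updP2x hn1,
    zeta2_congr (ω := packP2 ω (updP2x (n+1) p v)) (ω' := packP2 ω p) rfl
      (X2v_pack_updP2x_ne hn hn1 (by omega) ω p v)]
  simp only [M2v_packP2, U2v_packP2, updP2x]

lemma R1_succ (σ' : TeamStrategy M) {n : ℕ} (hn1 : n + 1 < M.T) (ω : Traj M)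
    (a' : M.X1) :
    R1 σ' (n+1) ω a' = ∑ a : M.X1, ∑ b : M.U1,
      M.trans1 (X0v ω n) a b a' *
        ((Fintype.card M.X1 : ℝ)⁻¹ * R1P σ' n ω a b) := by
  have hn : n < M.T := by omega
  unfold R1
  have stepA : ∀ p : P1S M, A1pre σ' (n+1) (packP1 ω p) *
      (if X1v (packP1 ω p) (n+1) = a' then (1:ℝ) else 0) =
      W1 σ' n (packP1 ω p) *
        M.trans1 (X0v ω n) (X1v (packP1 ω p) n) (U1v (packP1 ω p) n)
          (X1v (packP1 ω p) (n+1)) *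
        (if X1v (packP1 ω p) (n+1) = a' then (1:ℝ) else 0) := by
    intro p
    rw [A1pre_succ]
    unfold A1stage trans1if W1
    rw [if_pos hn1]
    simp only [X0v_packP1]
    ring
  rw [Finset.sum_congr rfl fun p _ => stepA p]
  rw [sum_insert_pin (fun p : P1S M => X1v (packP1 ω p) n)]
  apply Finset.sum_congr rfl
  intro a _
  rw [sum_insert_pin (fun p : P1S M => U1v (packP1 ω p) n)]
  apply Finset.sum_congr rfl
  intro b _
  have stepC : ∀ p : P1S M,
      W1 σ' n (packP1 ω p) *
        M.trans1 (X0v ω n) (X1v (packP1 ω p) n) (U1v (packP1 ω p) n)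
          (X1v (packP1 ω p) (n+1)) *
        (if X1v (packP1 ω p) (n+1) = a' then (1:ℝ) else 0) *
        (if X1v (packP1 ω p) n = a then (1:ℝ) else 0) *
        (if U1v (packP1 ω p) n = b then (1:ℝ) else 0) =
      (W1 σ' n (packP1 ω p) * (if X1v (packP1 ω p) n = a then (1:ℝ) else 0) *
        (if U1v (packP1 ω p) n = b then (1:ℝ) else 0)) *
        (if X1v (packP1 ω p) (n+1) = a' then (1:ℝ) else 0) *
        M.trans1 (X0v ω n) a b a' := by
    intro p
    by_cases h1 : X1v (packP1 ω p) n = a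
    · by_cases h2 : U1v (packP1 ω p) n = b
      · by_cases h3 : X1v (packP1 ω p) (n+1) = a'
        · rw [h1, h2, h3]
          ring
        · rw [if_neg h3]
          ring
      · rw [if_neg h2]
        ring
    · rw [if_neg h1]
      ring
  rw [Finset.sum_congr rfl fun p _ => stepC p]
  rw [← Finset.sum_mul]
  rw [sum_pin (updP1x (n+1)) (fun p : P1S M => X1v (packP1 ω p) (n+1))
    (updP1x_idem (n+1)) (updP1x_self (n+1))
    (fun p v => by
      simp [X1v_packP1, updP1x])
    (fun p => W1 σ' n (packP1 ω p) *
      (if X1v (packP1 ω p) n = a then (1:ℝ) else 0) *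
      (if U1v (packP1 ω p) n = b then (1:ℝ) else 0))
    (by
      intro p v
      rw [W1_pack_updP1x σ' hn1]
      simp only [X1v_packP1, U1v_packP1, updP1x,
        Function.update_of_ne (idx_inj hn hn1 (show n ≠ n + 1 by omega))]
      rfl) a']
  unfold R1P
  ring

lemma R2_succ (σ' : TeamStrategy M) {n : ℕ} (hn1 : n + 1 < M.T) (ω : Traj M)
    (a' : M.X2) :
    R2 σ' (n+1) ω a' = ∑ a : M.X2, ∑ b : M.U2,
      M.trans2 (X0v ω n) a b a' *
        ((Fintype.card M.X2 : ℝ)⁻¹ * R2P σ' n ω a b) := by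
  have hn : n < M.T := by omega
  unfold R2
  have stepA : ∀ p : P2S M, A2pre σ' (n+1) (packP2 ω p) *
      (if X2v (packP2 ω p) (n+1) = a' then (1:ℝ) else 0) =
      W2 σ' n (packP2 ω p) *
        M.trans2 (X0v ω n) (X2v (packP2 ω p) n) (U2v (packP2 ω p) n)
          (X2v (packP2 ω p) (n+1)) *
        (if X2v (packP2 ω p) (n+1) = a' then (1:ℝ) else 0) := by
    intro p
    rw [A2pre_succ]
    unfold A2stage trans2if W2
    rw [if_pos hn1]
    simp only [X0v_packP2]
    ring
  rw [Finset.sum_congr rfl fun p _ => stepA p]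
  rw [sum_insert_pin (fun p : P2S M => X2v (packP2 ω p) n)]
  apply Finset.sum_congr rfl
  intro a _
  rw [sum_insert_pin (fun p : P2S M => U2v (packP2 ω p) n)]
  apply Finset.sum_congr rfl
  intro b _
  have stepC : ∀ p : P2S M,
      W2 σ' n (packP2 ω p) *
        M.trans2 (X0v ω n) (X2v (packP2 ω p) n) (U2v (packP2 ω p) n)
          (X2v (packP2 ω p) (n+1)) *
        (if X2v (packP2 ω p) (n+1) = a' then (1:ℝ) else 0) *
        (if X2v (packP2 ω p) n = a then (1:ℝ) else 0) *
        (if U2v (packP2 ω p) n = b then (1:ℝ) else 0) =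
      (W2 σ' n (packP2 ω p) * (if X2v (packP2 ω p) n = a then (1:ℝ) else 0) *
        (if U2v (packP2 ω p) n = b then (1:ℝ) else 0)) *
        (if X2v (packP2 ω p) (n+1) = a' then (1:ℝ) else 0) *
        M.trans2 (X0v ω n) a b a' := by
    intro p
    by_cases h1 : X2v (packP2 ω p) n = a
    · by_cases h2 : U2v (packP2 ω p) n = b
      · by_cases h3 : X2v (packP2 ω p) (n+1) = a'
        · rw [h1, h2, h3]
          ring
        · rw [if_neg h3]
          ring
      · rw [if_neg h2]
        ring
    · rw [if_neg h1]
      ring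
  rw [Finset.sum_congr rfl fun p _ => stepC p]
  rw [← Finset.sum_mul]
  rw [sum_pin (updP2x (n+1)) (fun p : P2S M => X2v (packP2 ω p) (n+1))
    (updP2x_idem (n+1)) (updP2x_self (n+1))
    (fun p v => by
      simp [X2v_packP2, updP2x])
    (fun p => W2 σ' n (packP2 ω p) *
      (if X2v (packP2 ω p) n = a then (1:ℝ) else 0) *
      (if U2v (packP2 ω p) n = b then (1:ℝ) else 0))
    (by
      intro p v
      rw [W2_pack_updP2x σ' hn1]
      simp only [X2v_packP2, U2v_packP2, updP2x,
        Function.update_of_ne (idx_inj hn hn1 (show n ≠ n + 1 by omega))]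
      rfl) a']
  unfold R2P
  ring

/-! ### the main forward matching -/

lemma R1_level0 (σ1 σ2 : TeamStrategy M) (ω : Traj M) (a : M.X1) :
    R1 σ1 0 ω a = R1 σ2 0 ω a := by
  unfold R1 A1pre
  simp

lemma R2_level0 (σ1 σ2 : TeamStrategy M) (ω : Traj M) (a : M.X2) :
    R2 σ1 0 ω a = R2 σ2 0 ω a := by
  unfold R2 A2pre
  simp

lemma MR_main (σ : TeamStrategy M) :
    ∀ n, n < M.T → (∀ (ω : Traj M) (a : M.X1), R1 (sigmaBar σ) n ω a = R1 σ n ω a) ∧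
      (∀ (ω : Traj M) (a : M.X2), R2 (sigmaBar σ) n ω a = R2 σ n ω a) := by
  intro n
  induction n with
  | zero =>
    intro _
    exact ⟨fun ω a => R1_level0 _ _ ω a, fun ω a => R2_level0 _ _ ω a⟩
  | succ n ih =>
    intro hn1
    have hn : n < M.T := by omega
    obtain ⟨h1, h2⟩ := ih hn
    constructor
    · intro ω a'
      rw [R1_succ (sigmaBar σ) hn1 ω a', R1_succ σ hn1 ω a']
      apply Finset.sum_congr rfl
      intro a _
      apply Finset.sum_congr rfl
      intro b _
      rw [MRP1 σ hn h1 ω a b]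
    · intro ω a'
      rw [R2_succ (sigmaBar σ) hn1 ω a', R2_succ σ hn1 ω a']
      apply Finset.sum_congr rfl
      intro a _
      apply Finset.sum_congr rfl
      intro b _
      rw [MRP2 σ hn h2 ω a b]

lemma MRP1_main (σ : TeamStrategy M) {t : ℕ} (ht : t < M.T) (ω : Traj M)
    (a : M.X1) (b : M.U1) : R1P (sigmaBar σ) t ω a b = R1P σ t ω a b :=
  MRP1 σ ht (MR_main σ t ht).1 ω a b

lemma MRP2_main (σ : TeamStrategy M) {t : ℕ} (ht : t < M.T) (ω : Traj M)
    (a : M.X2) (b : M.U2) : R2P (sigmaBar σ) t ω a b = R2P σ t ω a b :=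
  MRP2 σ ht (MR_main σ t ht).2 ω a b

end TA
namespace TA

variable {M : Model}

/-! ### collapsing private sums to reach quantities -/

lemma collapse1 (σ' : TeamStrategy M) (t : ℕ) (ω : Traj M) (Ψ : M.X1 → M.U1 → ℝ) :
    ∑ p : P1S M, W1 σ' t (packP1 ω p) *
      Ψ (X1v (packP1 ω p) t) (U1v (packP1 ω p) t) =
    ∑ a : M.X1, ∑ b : M.U1, R1P σ' t ω a b * Ψ a b := by
  have hp : ∀ p : P1S M, W1 σ' t (packP1 ω p) *
      Ψ (X1v (packP1 ω p) t) (U1v (packP1 ω p) t) =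
      ∑ a : M.X1, ∑ b : M.U1, (W1 σ' t (packP1 ω p) *
        (if X1v (packP1 ω p) t = a then (1:ℝ) else 0) *
        (if U1v (packP1 ω p) t = b then (1:ℝ) else 0)) * Ψ a b := by
    intro p
    rw [Finset.sum_eq_single (X1v (packP1 ω p) t)]
    · rw [Finset.sum_eq_single (U1v (packP1 ω p) t)]
      · simp
      · intro b _ hb
        simp [Ne.symm hb]
      · intro h
        exact absurd (Finset.mem_univ _) h
    · intro a _ ha
      apply Finset.sum_eq_zero
      intro b _
      simp [Ne.symm ha]
    · intro h
      exact absurd (Finset.mem_univ _) h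
  rw [Finset.sum_congr rfl fun p _ => hp p, Finset.sum_comm]
  apply Finset.sum_congr rfl
  intro a _
  rw [Finset.sum_comm]
  apply Finset.sum_congr rfl
  intro b _
  rw [← Finset.sum_mul]
  rfl

lemma collapse2 (σ' : TeamStrategy M) (t : ℕ) (ω : Traj M) (Ψ : M.X2 → M.U2 → ℝ) :
    ∑ p : P2S M, W2 σ' t (packP2 ω p) *
      Ψ (X2v (packP2 ω p) t) (U2v (packP2 ω p) t) =
    ∑ a : M.X2, ∑ b : M.U2, R2P σ' t ω a b * Ψ a b := by
  have hp : ∀ p : P2S M, W2 σ' t (packP2 ω p) *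
      Ψ (X2v (packP2 ω p) t) (U2v (packP2 ω p) t) =
      ∑ a : M.X2, ∑ b : M.U2, (W2 σ' t (packP2 ω p) *
        (if X2v (packP2 ω p) t = a then (1:ℝ) else 0) *
        (if U2v (packP2 ω p) t = b then (1:ℝ) else 0)) * Ψ a b := by
    intro p
    rw [Finset.sum_eq_single (X2v (packP2 ω p) t)]
    · rw [Finset.sum_eq_single (U2v (packP2 ω p) t)]
      · simp
      · intro b _ hb
        simp [Ne.symm hb]
      · intro h
        exact absurd (Finset.mem_univ _) h
    · intro a _ ha
      apply Finset.sum_eq_zero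
      intro b _
      simp [Ne.symm ha]
    · intro h
      exact absurd (Finset.mem_univ _) h
  rw [Finset.sum_congr rfl fun p _ => hp p, Finset.sum_comm]
  apply Finset.sum_congr rfl
  intro a _
  rw [Finset.sum_comm]
  apply Finset.sum_congr rfl
  intro b _
  rw [← Finset.sum_mul]
  rfl

end TA
namespace TA

variable {M : Model}

noncomputable def F7 (σ' : TeamStrategy M) (t : ℕ) (ω : Traj M) : ℝ :=
  σ'.f1 t (info1 t ω) (M1v ω t) * σ'.f2 t (info2 t ω) (M2v ω t) *
  zKer M (X0v ω t) (Mv ω t) (X1v ω t, X2v ω t) (Zv ω t) *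
  M.obs (Zv ω t) (Mv ω t) (X0v ω t) (Yv ω t) *
  σ'.g1 t (info1p t ω) (U1v ω t) * σ'.g2 t (info2p t ω) (U2v ω t)

lemma Fst_eq_F7 (σ' : TeamStrategy M) (γ : AdvStrategy M (HistC M)) (t : ℕ)
    (ω : Traj M) : Fst σ' γ t ω = F7 σ' t ω * γ.ga t (teamComP t ω) (UAv ω t) := rfl

noncomputable def Kst (γ : AdvStrategy M (HistC M)) (t : ℕ) (ω : Traj M) : ℝ :=
  Bpre γ t ω * zeta0 ω t * M.obs (Zv ω t) (Mv ω t) (X0v ω t) (Yv ω t)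

lemma headF7 (σ' : TeamStrategy M) (γ : AdvStrategy M (HistC M)) (t : ℕ)
    (ω : Traj M) :
    headP σ' γ t ω * F7 σ' t ω = W1 σ' t ω * (W2 σ' t ω * Kst γ t ω) := by
  rw [head_fact]
  unfold F7 Kst W1 W2
  rw [zKer_split]
  ring

lemma W2_packP1 (σ' : TeamStrategy M) (t : ℕ) (ω : Traj M) (p : P1S M) :
    W2 σ' t (packP1 ω p) = W2 σ' t ω := rfl

lemma Kst_packP1 (γ : AdvStrategy M (HistC M)) (t : ℕ) (ω : Traj M) (p : P1S M) :
    Kst γ t (packP1 ω p) = Kst γ t ω := rfl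

lemma Kst_packP2 (γ : AdvStrategy M (HistC M)) (t : ℕ) (ω : Traj M) (p : P2S M) :
    Kst γ t (packP2 ω p) = Kst γ t ω := rfl

lemma R1P_packP2 (σ' : TeamStrategy M) (t : ℕ) (ω : Traj M) (q : P2S M)
    (a : M.X1) (b : M.U1) : R1P σ' t (packP2 ω q) a b = R1P σ' t ω a b := rfl

lemma lumpp (σ' : TeamStrategy M) (γ : AdvStrategy M (HistC M)) (t : ℕ)
    (Φ : HistC M → M.X1 → M.X2 → M.U1 → M.U2 → ℝ) :
    ∑ ω : Traj M, headP σ' γ t ω * F7 σ' t ω *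
      Φ (teamComP t ω) (X1v ω t) (X2v ω t) (U1v ω t) (U2v ω t) =
    (Fintype.card (P1S M) : ℝ)⁻¹ * ((Fintype.card (P2S M) : ℝ)⁻¹ *
      ∑ ω : Traj M, ∑ a2 : M.X2, ∑ b2 : M.U2, R2P σ' t ω a2 b2 *
        (Kst γ t ω * ∑ a1 : M.X1, ∑ b1 : M.U1, R1P σ' t ω a1 b1 *
          Φ (teamComP t ω) a1 a2 b1 b2)) := by
  have point : ∀ ω : Traj M, headP σ' γ t ω * F7 σ' t ω *
      Φ (teamComP t ω) (X1v ω t) (X2v ω t) (U1v ω t) (U2v ω t) =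
      W1 σ' t ω * (W2 σ' t ω * (Kst γ t ω *
        Φ (teamComP t ω) (X1v ω t) (X2v ω t) (U1v ω t) (U2v ω t))) := by
    intro ω
    rw [headF7]
    ring
  rw [Finset.sum_congr rfl fun ω _ => point ω]
  rw [sum_split (fun (ω : Traj M) (p : P1S M) => packP1 ω p) valP1
    (fun ω b c => packP1_idem ω b c) (fun ω => packP1_self ω)
    (fun ω b => valP1_packP1 ω b)]
  congr 1
  have inner1 : ∀ ω : Traj M, (∑ p : P1S M,
      W1 σ' t (packP1 ω p) * (W2 σ' t (packP1 ω p) * (Kst γ t (packP1 ω p) *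
        Φ (teamComP t (packP1 ω p)) (X1v (packP1 ω p) t) (X2v (packP1 ω p) t)
          (U1v (packP1 ω p) t) (U2v (packP1 ω p) t)))) =
      W2 σ' t ω * (Kst γ t ω * ∑ a1 : M.X1, ∑ b1 : M.U1,
        R1P σ' t ω a1 b1 * Φ (teamComP t ω) a1 (X2v ω t) b1 (U2v ω t)) := by
    intro ω
    rw [show (∑ p : P1S M,
        W1 σ' t (packP1 ω p) * (W2 σ' t (packP1 ω p) * (Kst γ t (packP1 ω p) *
          Φ (teamComP t (packP1 ω p)) (X1v (packP1 ω p) t) (X2v (packP1 ω p) t)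
            (U1v (packP1 ω p) t) (U2v (packP1 ω p) t)))) =
        ∑ p : P1S M, W1 σ' t (packP1 ω p) *
          (fun a b => W2 σ' t ω * (Kst γ t ω *
            Φ (teamComP t ω) a (X2v ω t) b (U2v ω t)))
            (X1v (packP1 ω p) t) (U1v (packP1 ω p) t) from rfl]
    rw [collapse1 σ' t ω (fun a b => W2 σ' t ω * (Kst γ t ω *
      Φ (teamComP t ω) a (X2v ω t) b (U2v ω t)))]
    simp only [Finset.mul_sum]
    apply Finset.sum_congr rfl
    intro a1 _
    apply Finset.sum_congr rfl
    intro b1 _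
    ring
  rw [Finset.sum_congr rfl fun ω _ => inner1 ω]
  rw [sum_split (fun (ω : Traj M) (p : P2S M) => packP2 ω p) valP2
    (fun ω b c => packP2_idem ω b c) (fun ω => packP2_self ω)
    (fun ω b => valP2_packP2 ω b)]
  congr 1
  apply Finset.sum_congr rfl
  intro ω _
  rw [show (∑ p : P2S M,
      W2 σ' t (packP2 ω p) * (Kst γ t (packP2 ω p) * ∑ a1 : M.X1, ∑ b1 : M.U1,
        R1P σ' t (packP2 ω p) a1 b1 * Φ (teamComP t (packP2 ω p)) a1
          (X2v (packP2 ω p) t) b1 (U2v (packP2 ω p) t))) =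
      ∑ p : P2S M, W2 σ' t (packP2 ω p) *
        (fun a2 b2 => Kst γ t ω * ∑ a1 : M.X1, ∑ b1 : M.U1,
          R1P σ' t ω a1 b1 * Φ (teamComP t ω) a1 a2 b1 b2)
          (X2v (packP2 ω p) t) (U2v (packP2 ω p) t) from rfl]
  rw [collapse2 σ' t ω (fun a2 b2 => Kst γ t ω * ∑ a1 : M.X1, ∑ b1 : M.U1,
    R1P σ' t ω a1 b1 * Φ (teamComP t ω) a1 a2 b1 b2)]

end TA
namespace TA

variable {M : Model}

/-! ### reduction of the stage cost -/

lemma Meas_hcost (t : ℕ) : Meas (M := M) (t+1) (hcost t) := by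
  intro ω ω' h0 h1 h2 hm1 hm2 hz hy hu1 hu2 hua
  unfold hcost
  rw [h0 t (by omega), h1 t (by omega), h2 t (by omega), hm1 t (by omega),
    hm2 t (by omega), hu1 t (by omega), hu2 t (by omega), hua t (by omega)]

lemma headP_succ (σ' : TeamStrategy M) (γ : AdvStrategy M (HistC M)) (n : ℕ)
    (ω : Traj M) : headP σ' γ (n+1) ω = headP σ' γ n ω * SS σ' γ n ω := by
  unfold headP
  rw [Finset.prod_range_succ]
  ring

lemma hcost_updX {t : ℕ} (ht1 : t + 1 < M.T) (ω : Traj M) (b : BX M) :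
    hcost t (updX (t+1) ω b) = hcost t ω := by
  unfold hcost
  rw [X0v_updX_ne (by omega) ht1 (by omega), X1v_updX_ne (by omega) ht1 (by omega),
    X2v_updX_ne (by omega) ht1 (by omega)]
  rfl

lemma F7_updX (σ' : TeamStrategy M) {t : ℕ} (ht1 : t + 1 < M.T) (ω : Traj M)
    (b : BX M) : F7 σ' t (updX (t+1) ω b) = F7 σ' t ω := by
  have hx0 : ∀ s, s ≤ t → X0v (updX (t+1) ω b) s = X0v ω s :=
    fun s hs => X0v_updX_ne (by omega) ht1 (by omega) ω b
  have hx1 : ∀ s, s ≤ t → X1v (updX (t+1) ω b) s = X1v ω s :=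
    fun s hs => X1v_updX_ne (by omega) ht1 (by omega) ω b
  have hx2 : ∀ s, s ≤ t → X2v (updX (t+1) ω b) s = X2v ω s :=
    fun s hs => X2v_updX_ne (by omega) ht1 (by omega) ω b
  unfold F7
  rw [info1_congr hx0 hx1 (fun _ _ => rfl) (fun _ _ => rfl) (fun _ _ => rfl)
      (fun _ _ => rfl) (fun _ _ => rfl) (fun _ _ => rfl),
    info2_congr hx0 hx2 (fun _ _ => rfl) (fun _ _ => rfl) (fun _ _ => rfl)
      (fun _ _ => rfl) (fun _ _ => rfl) (fun _ _ => rfl),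
    info1p_congr hx0 hx1 (fun _ _ => rfl) (fun _ _ => rfl) (fun _ _ => rfl)
      (fun _ _ => rfl) (fun _ _ => rfl) (fun _ _ => rfl),
    info2p_congr hx0 hx2 (fun _ _ => rfl) (fun _ _ => rfl) (fun _ _ => rfl)
      (fun _ _ => rfl) (fun _ _ => rfl) (fun _ _ => rfl),
    hx0 t le_rfl, hx1 t le_rfl, hx2 t le_rfl]
  rfl

lemma teamComP_updX {t : ℕ} (ht1 : t + 1 < M.T) (ω : Traj M) (b : BX M) :
    teamComP t (updX (t+1) ω b) = teamComP t ω :=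
  teamComP_congr (fun s hs => X0v_updX_ne (by omega) ht1 (by omega) ω b)
    (fun _ _ => rfl) (fun _ _ => rfl) (fun _ _ => rfl) (fun _ _ => rfl)
    (fun _ _ => rfl)

lemma Meas_updUA {n : ℕ} {H : Traj M → ℝ} (hH : Meas n H) (hn : n < M.T)
    (ω : Traj M) (b : M.Ua) : H (updUA n ω b) = H ω := by
  apply hH <;> intro s hs
  all_goals first
    | rfl
    | exact UAv_updUA_ne (hs.trans hn) hn hs.ne ω b

lemma F7_updUA (σ' : TeamStrategy M) {t : ℕ} (ht : t < M.T) (ω : Traj M)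
    (u : M.Ua) : F7 σ' t (updUA t ω u) = F7 σ' t ω := by
  have hua : ∀ s, s < t → UAv (updUA t ω u) s = UAv ω s :=
    fun s hs => UAv_updUA_ne (hs.trans ht) ht hs.ne ω u
  unfold F7
  rw [info1_congr (ω := updUA t ω u) (ω' := ω) (fun _ _ => rfl) (fun _ _ => rfl)
      (fun _ _ => rfl) (fun _ _ => rfl) (fun _ _ => rfl) (fun _ _ => rfl) hua
      (fun _ _ => rfl),
    info2_congr (ω := updUA t ω u) (ω' := ω) (fun _ _ => rfl) (fun _ _ => rfl)
      (fun _ _ => rfl) (fun _ _ => rfl) (fun _ _ => rfl) (fun _ _ => rfl) hua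
      (fun _ _ => rfl),
    info1p_congr (ω := updUA t ω u) (ω' := ω) (fun _ _ => rfl) (fun _ _ => rfl)
      (fun _ _ => rfl) (fun _ _ => rfl) (fun _ _ => rfl) (fun _ _ => rfl) hua
      (fun _ _ => rfl),
    info2p_congr (ω := updUA t ω u) (ω' := ω) (fun _ _ => rfl) (fun _ _ => rfl)
      (fun _ _ => rfl) (fun _ _ => rfl) (fun _ _ => rfl) (fun _ _ => rfl) hua
      (fun _ _ => rfl)]
  rfl

lemma teamComP_updUA {t : ℕ} (ht : t < M.T) (ω : Traj M) (u : M.Ua) :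
    teamComP t (updUA t ω u) = teamComP t ω :=
  teamComP_congr (fun _ _ => rfl) (fun _ _ => rfl) (fun _ _ => rfl)
    (fun _ _ => rfl) (fun s hs => UAv_updUA_ne (hs.trans ht) ht hs.ne ω u)
    (fun _ _ => rfl)

lemma hcost_updUA (t : ℕ) (ω : Traj M) (u : M.Ua) :
    hcost t (updUA t ω u) =
      M.cost t (X0v ω t) (X1v ω t, X2v ω t) (U1v ω t, U2v ω t) u +
      (if (M1v ω t || M2v ω t) then M.commCost (X0v ω t) (X1v ω t, X2v ω t)
        else 0) := by
  unfold hcost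
  rw [UAv_updUA]
  rfl

/-! ### the per-stage cost functional -/

noncomputable def Phi (γ : AdvStrategy M (HistC M)) (t : ℕ) (ι : HistC M)
    (a1 : M.X1) (a2 : M.X2) (b1 : M.U1) (b2 : M.U2) : ℝ :=
  ∑ u : M.Ua, γ.ga t ι u *
    (M.cost t (ι.1.getD t (Classical.arbitrary M.X0)) (a1, a2) (b1, b2) u +
      (if ((ι.2.1.getD t (false, false)).1 || (ι.2.1.getD t (false, false)).2)
        then M.commCost (ι.1.getD t (Classical.arbitrary M.X0)) (a1, a2) else 0))

lemma tcp_getD_x0 (t : ℕ) (ω : Traj M) :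
    (teamComP t ω).1.getD t (Classical.arbitrary M.X0) = X0v ω t :=
  pre_getD (by omega) _ _

lemma tcp_getD_m (t : ℕ) (ω : Traj M) :
    (teamComP t ω).2.1.getD t (false, false) = Mv ω t :=
  pre_getD (by omega) _ _

lemma Phi_eval (γ : AdvStrategy M (HistC M)) (t : ℕ) (ω : Traj M) :
    Phi γ t (teamComP t ω) (X1v ω t) (X2v ω t) (U1v ω t) (U2v ω t) =
      ∑ u : M.Ua, γ.ga t (teamComP t ω) u *
        (M.cost t (X0v ω t) (X1v ω t, X2v ω t) (U1v ω t, U2v ω t) u +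
          (if (M1v ω t || M2v ω t) then
            M.commCost (X0v ω t) (X1v ω t, X2v ω t) else 0)) := by
  unfold Phi
  apply Finset.sum_congr rfl
  intro u _
  rw [tcp_getD_x0, tcp_getD_m]
  rfl

end TA
namespace TA

variable {M : Model}

lemma Jterm (σ' : TeamStrategy M) (γ : AdvStrategy M (HistC M)) {t : ℕ}
    (ht : t < M.T) :
    ∑ ω : Traj M, headP σ' γ M.T ω * hcost t ω =
      NT M (t+1) * ((if t + 1 < M.T then (Fintype.card (BX M) : ℝ)⁻¹ else 1) *
        ((Fintype.card M.Ua : ℝ)⁻¹ *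
          ∑ ω : Traj M, headP σ' γ t ω * F7 σ' t ω *
            Phi γ t (teamComP t ω) (X1v ω t) (X2v ω t) (U1v ω t) (U2v ω t))) := by
  rw [tail_elim σ' γ (M.T - (t+1)) (t+1) (by omega) (hcost t) (Meas_hcost t)]
  congr 1
  have hsplit : ∀ ω : Traj M, headP σ' γ (t+1) ω * hcost t ω =
      (headP σ' γ t ω * hcost t ω * F7 σ' t ω *
        γ.ga t (teamComP t ω) (UAv ω t)) * Gif t ω := by
    intro ω
    rw [headP_succ]
    unfold SS
    rw [Fst_eq_F7]
    ring
  rw [Finset.sum_congr rfl fun ω _ => hsplit ω]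
  have key : ∑ ω : Traj M, (headP σ' γ t ω * hcost t ω * F7 σ' t ω *
      γ.ga t (teamComP t ω) (UAv ω t)) * Gif t ω =
      (if t + 1 < M.T then (Fintype.card (BX M) : ℝ)⁻¹ else 1) *
      ∑ ω : Traj M, headP σ' γ t ω * hcost t ω * F7 σ' t ω *
        γ.ga t (teamComP t ω) (UAv ω t) := by
    by_cases hg : t + 1 < M.T
    · rw [if_pos hg]
      have e1 : ∀ ω : Traj M, (headP σ' γ t ω * hcost t ω * F7 σ' t ω *
          γ.ga t (teamComP t ω) (UAv ω t)) * Gif t ω =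
          (headP σ' γ t ω * hcost t ω * F7 σ' t ω *
          γ.ga t (teamComP t ω) (UAv ω t)) * Gst t ω := by
        intro ω
        unfold Gif
        rw [if_pos hg]
      rw [Finset.sum_congr rfl fun ω _ => e1 ω]
      exact stageX hg _ (by
        intro ω b
        rw [Meas_updX (Meas_headP σ' γ t) hg, hcost_updX hg, F7_updX σ' hg,
          teamComP_updX hg]
        simp only [UAv_updX])
    · rw [if_neg hg, one_mul]
      apply Finset.sum_congr rfl
      intro ω _
      unfold Gif
      rw [if_neg hg, mul_one]
  rw [key]
  congr 1
  rw [sum_split (fun (ω : Traj M) (u : M.Ua) => updUA t ω u) (fun ω => UAv ω t)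
    (updUA_idem t) (updUA_self t) (fun ω u => UAv_updUA t ω u)]
  congr 1
  apply Finset.sum_congr rfl
  intro ω _
  have e2 : ∀ u : M.Ua, (headP σ' γ t (updUA t ω u) * hcost t (updUA t ω u) *
      F7 σ' t (updUA t ω u) *
      γ.ga t (teamComP t (updUA t ω u)) (UAv (updUA t ω u) t)) =
      headP σ' γ t ω * F7 σ' t ω * (γ.ga t (teamComP t ω) u *
        (M.cost t (X0v ω t) (X1v ω t, X2v ω t) (U1v ω t, U2v ω t) u +
          (if (M1v ω t || M2v ω t) then
            M.commCost (X0v ω t) (X1v ω t, X2v ω t) else 0))) := by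
    intro u
    rw [Meas_updUA (Meas_headP σ' γ t) ht, hcost_updUA, F7_updUA σ' ht,
      teamComP_updUA ht, UAv_updUA]
    ring
  rw [Finset.sum_congr rfl fun u _ => e2 u, ← Finset.mul_sum, Phi_eval]

end TA
namespace TA

/-- Claim 1 of the appendix: in the maximal-information structure
(`Iᵃ_t = I¹_t ∩ I²_t = C^team_t`, `Iᵃ_{t⁺} = C^team_{t⁺}`), for any team strategy `(f,g)`
there exists a team strategy `(f̄,ḡ)` in which `f̄ⁱ_t` depends only on `(Xⁱ_t, Iᵃ_t)` and
`ḡⁱ_t` depends only on `(Xⁱ_t, Iᵃ_{t⁺})`, and which yields the same expected cost against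
*every* adversary strategy. -/
theorem claim1 (M : Model) (σ : TeamStrategy M) :
    ∃ σb : TeamStrategy M,
      (∀ t, t < M.T → ∀ ω ω' : Traj M, X1v ω t = X1v ω' t →
        teamCom t ω = teamCom t ω' → σb.f1 t (info1 t ω) = σb.f1 t (info1 t ω')) ∧
      (∀ t, t < M.T → ∀ ω ω' : Traj M, X2v ω t = X2v ω' t →
        teamCom t ω = teamCom t ω' → σb.f2 t (info2 t ω) = σb.f2 t (info2 t ω')) ∧
      (∀ t, t < M.T → ∀ ω ω' : Traj M, X1v ω t = X1v ω' t →
        teamComP t ω = teamComP t ω' → σb.g1 t (info1p t ω) = σb.g1 t (info1p t ω')) ∧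
      (∀ t, t < M.T → ∀ ω ω' : Traj M, X2v ω t = X2v ω' t →
        teamComP t ω = teamComP t ω' → σb.g2 t (info2p t ω) = σb.g2 t (info2p t ω')) ∧
      (∀ γ : AdvStrategy M (HistC M), J σb γ teamComP = J σ γ teamComP) := by
  refine ⟨sigmaBar σ, ?_, ?_, ?_, ?_, ?_⟩
  · intro t _ ω ω' hx hc
    funext m
    show fbar1 σ t (extrC1 (info1 t ω)) (extrX1 t (info1 t ω)) m =
      fbar1 σ t (extrC1 (info1 t ω')) (extrX1 t (info1 t ω')) m
    rw [extrC1_info1, extrX1_info1, extrC1_info1, extrX1_info1, hx, hc]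
  · intro t _ ω ω' hx hc
    funext m
    show fbar2 σ t (extrC2 (info2 t ω)) (extrX2 t (info2 t ω)) m =
      fbar2 σ t (extrC2 (info2 t ω')) (extrX2 t (info2 t ω')) m
    rw [extrC2_info2, extrX2_info2, extrC2_info2, extrX2_info2, hx, hc]
  · intro t _ ω ω' hx hc
    funext b
    show (if t < M.T then gbar1 σ t (extrC1 (info1p t ω)) (extrX1 t (info1p t ω)) b
        else (Fintype.card M.U1 : ℝ)⁻¹) =
      (if t < M.T then gbar1 σ t (extrC1 (info1p t ω')) (extrX1 t (info1p t ω')) b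
        else (Fintype.card M.U1 : ℝ)⁻¹)
    rw [extrC1_info1p, extrX1_info1p, extrC1_info1p, extrX1_info1p, hx, hc]
  · intro t _ ω ω' hx hc
    funext b
    show (if t < M.T then gbar2 σ t (extrC2 (info2p t ω)) (extrX2 t (info2p t ω)) b
        else (Fintype.card M.U2 : ℝ)⁻¹) =
      (if t < M.T then gbar2 σ t (extrC2 (info2p t ω')) (extrX2 t (info2p t ω')) b
        else (Fintype.card M.U2 : ℝ)⁻¹)
    rw [extrC2_info2p, extrX2_info2p, extrC2_info2p, extrX2_info2p, hx, hc]
  · intro γ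
    rw [J_decomp (sigmaBar σ) γ, J_decomp σ γ]
    apply Finset.sum_congr rfl
    intro t htmem
    have ht : t < M.T := Finset.mem_range.mp htmem
    have hS : (∑ ω : Traj M, headP (sigmaBar σ) γ t ω * F7 (sigmaBar σ) t ω *
        Phi γ t (teamComP t ω) (X1v ω t) (X2v ω t) (U1v ω t) (U2v ω t)) =
        ∑ ω : Traj M, headP σ γ t ω * F7 σ t ω *
        Phi γ t (teamComP t ω) (X1v ω t) (X2v ω t) (U1v ω t) (U2v ω t) := by
      rw [lumpp (sigmaBar σ) γ t (Phi γ t), lumpp σ γ t (Phi γ t)]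
      have h2 : (∑ ω : Traj M, ∑ a2 : M.X2, ∑ b2 : M.U2,
          R2P (sigmaBar σ) t ω a2 b2 *
            (Kst γ t ω * ∑ a1 : M.X1, ∑ b1 : M.U1, R1P (sigmaBar σ) t ω a1 b1 *
              Phi γ t (teamComP t ω) a1 a2 b1 b2)) =
          ∑ ω : Traj M, ∑ a2 : M.X2, ∑ b2 : M.U2, R2P σ t ω a2 b2 *
            (Kst γ t ω * ∑ a1 : M.X1, ∑ b1 : M.U1, R1P σ t ω a1 b1 *
              Phi γ t (teamComP t ω) a1 a2 b1 b2) := by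
        apply Finset.sum_congr rfl
        intro ω _
        apply Finset.sum_congr rfl
        intro a2 _
        apply Finset.sum_congr rfl
        intro b2 _
        rw [MRP2_main σ ht ω a2 b2,
          show (∑ a1 : M.X1, ∑ b1 : M.U1, R1P (sigmaBar σ) t ω a1 b1 *
              Phi γ t (teamComP t ω) a1 a2 b1 b2) =
            ∑ a1 : M.X1, ∑ b1 : M.U1, R1P σ t ω a1 b1 *
              Phi γ t (teamComP t ω) a1 a2 b1 b2 from
            Finset.sum_congr rfl fun a1 _ => Finset.sum_congr rfl fun b1 _ => by
              rw [MRP1_main σ ht ω a1 b1]]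
      exact congrArg (fun z => (Fintype.card (P1S M) : ℝ)⁻¹ *
        ((Fintype.card (P2S M) : ℝ)⁻¹ * z)) h2
    rw [Jterm (sigmaBar σ) γ ht, Jterm σ γ ht, hS]

end TA
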